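/- arXiv:math/0008137 — 2 statements merged into one kernel-verified Lean document; each statement's English description precedes it below -/
import Mathlib

section
/- Let I = [a,b] or [a,b) with a ≠ b be an arc of S¹ = ℝ/ℤ, and let {f_{p,q}}_{(p,q)∈I²_*} be an intrinsic conic system on I such that f_{a,a} = f_{a,b} and F_{a,b} ∩ (a,b) = ∅. Then there exist two distinct points a₁, b₁ ∈ (a,b) with a ≺ a₁ ≺ b₁ ≺ b such that f_{a₁,b₁} = f_{a₁,a₁}, the support F_{a₁,b₁} = F_{a₁,a₁} is contained in (a,b), b₁ is isolated in F_{a₁,b₁}, and F_{a₁,b₁} has exactly two connected components. -/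
open Filter Topology

noncomputable section

/-- The circle S¹ = ℝ/ℤ. -/
abbrev S1 := AddCircle (1 : ℝ)

/-- The projection ℝ → S¹. -/
def pr (x : ℝ) : S1 := (x : S1)

/-- The closed arc from `a` to `b` (for real representatives `a ≤ b`). -/
def arcCC (a b : ℝ) : Set S1 := pr '' Set.Icc a b

/-- The half-open arc `[a,b)`. -/
def arcCO (a b : ℝ) : Set S1 := pr '' Set.Ico a b

/-- The half-open arc `(a,b]`. -/
def arcOC (a b : ℝ) : Set S1 := pr '' Set.Ioc a b

/-- The open arc `(a,b)`. -/
def arcOO (a b : ℝ) : Set S1 := pr '' Set.Ioo a b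

/-- `I` is an arc of the circle: the image of an interval of positive length
less than 1 (closed, half-open, or open). -/
def IsArc (I : Set S1) : Prop :=
  ∃ a b : ℝ, a < b ∧ b < a + 1 ∧
    (I = arcCC a b ∨ I = arcCO a b ∨ I = arcOC a b ∨ I = arcOO a b)

/-- `p ≺ q ≺ r` cyclically: the three points admit representatives
`p̃ < q̃ < r̃ < p̃ + 1`. -/
def cyc3 (p q r : S1) : Prop :=
  ∃ a b c : ℝ, pr a = p ∧ pr b = q ∧ pr c = r ∧ a < b ∧ b < c ∧ c < a + 1

/-- `p ≺ q ≺ r ≺ s` cyclically: the four points admit representatives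
`p̃ < q̃ < r̃ < s̃ < p̃ + 1`. -/
def cyc4 (p q r s : S1) : Prop :=
  ∃ a b c d : ℝ, pr a = p ∧ pr b = q ∧ pr c = r ∧ pr d = s ∧
    a < b ∧ b < c ∧ c < d ∧ d < a + 1

/-- `x` is an isolated point of the set `F`. -/
def IsolatedIn (x : S1) (F : Set S1) : Prop :=
  ∃ U : Set S1, IsOpen U ∧ x ∈ U ∧ U ∩ F = {x}

/-- The set `F` has exactly two connected components. -/
def TwoComponents (F : Set S1) : Prop :=
  ∃ x ∈ F, ∃ y ∈ F, connectedComponentIn F x ≠ connectedComponentIn F y ∧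
    ∀ z ∈ F, connectedComponentIn F z = connectedComponentIn F x ∨
      connectedComponentIn F z = connectedComponentIn F y

/-- An intrinsic circle system on an index set `I ⊆ S¹`: a family of closed
sets `F p` (for `p ∈ I`) satisfying axioms (I0)–(I3). -/
structure IsIntrinsicCircleSystem (I : Set S1) (F : S1 → Set S1) : Prop where
  /-- The sets of the family are closed. -/
  isClosed : ∀ p ∈ I, IsClosed (F p)
  /-- (I0) `p ∈ F p`. -/
  mem_self : ∀ p ∈ I, p ∈ F p
  /-- (I1) if `F p` and `F q` meet then they coincide. -/
  eq_of_inter : ∀ p ∈ I, ∀ q ∈ I, (F p ∩ F q).Nonempty → F p = F q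
  /-- (I2) if `p' ∈ F p`, `q' ∈ F q` and `p ≺ q ≺ p' ≺ q'` cyclically then
  `F p = F q`. -/
  eq_of_cyc : ∀ p ∈ I, ∀ q ∈ I, ∀ p' ∈ F p, ∀ q' ∈ F q,
    cyc4 p q p' q' → F p = F q
  /-- (I3) closedness under limits of sequences from the interior of `I`. -/
  mem_of_tendsto : ∀ (pn qn : ℕ → S1) (p q : S1),
    (∀ n, pn n ∈ interior I) → (∀ n, qn n ∈ interior I) →
    p ∈ I → q ∈ I →
    Tendsto pn atTop (nhds p) → Tendsto qn atTop (nhds q) →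
    (∀ n, qn n ∈ F (pn n)) → q ∈ F p

/-- `p ⪯ q ⪯ p' ⪯ q' ≺ p'' ≺ q'' (≺ p)` cyclically, via representatives
`p̃ ≤ q̃ ≤ p̃' ≤ q̃' < p̃'' < q̃'' < p̃ + 1`. -/
def chain6 (p q p' q' p'' q'' : S1) : Prop :=
  ∃ a b c d e g : ℝ, pr a = p ∧ pr b = q ∧ pr c = p' ∧ pr d = q' ∧
    pr e = p'' ∧ pr g = q'' ∧
    a ≤ b ∧ b ≤ c ∧ c ≤ d ∧ d < e ∧ e < g ∧ g < a + 1

/-- The reverse cyclic order `p ⪰ q ⪰ p' ⪰ q' ≻ p'' ≻ q'' (≻ p)`, via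
representatives `p̃ ≥ q̃ ≥ p̃' ≥ q̃' > p̃'' > q̃'' > p̃ - 1`. -/
def chain6rev (p q p' q' p'' q'' : S1) : Prop :=
  ∃ a b c d e g : ℝ, pr a = p ∧ pr b = q ∧ pr c = p' ∧ pr d = q' ∧
    pr e = p'' ∧ pr g = q'' ∧
    b ≤ a ∧ c ≤ b ∧ d ≤ c ∧ e < d ∧ g < e ∧ a - 1 < g

/-- The index set `I²_* = (Ī × Ī) \ {(p,p) : p ∈ Ī \ I}` of an intrinsic conic
system on `I`. -/
def ConicDom (I : Set S1) : Set (S1 × S1) :=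
  {pq | pq.1 ∈ closure I ∧ pq.2 ∈ closure I ∧ (pq.1 = pq.2 → pq.1 ∈ I)}

/-- The support `F_{p,q} = {r : f_{p,q}(r) > 0}`. -/
def suppF (f : S1 → S1 → S1 → ℕ∞) (p q : S1) : Set S1 := {r | f p q r ≠ 0}

/-- An intrinsic conic system on `I`: a family of functions
`f p q : S¹ → {0,2,4,…} ∪ {∞}`, indexed by `(p,q) ∈ I²_*`, satisfying axioms
(A1)–(A8). -/
structure IsIntrinsicConicSystem (I : Set S1) (f : S1 → S1 → S1 → ℕ∞) : Prop where
  /-- The values of the family are even numbers or `∞`. -/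
  even_values : ∀ p q r : S1, (p, q) ∈ ConicDom I →
    f p q r = ⊤ ∨ ∃ k : ℕ, f p q r = ((2 * k : ℕ) : ℕ∞)
  /-- (A1) the supports are closed. -/
  supp_closed : ∀ p q : S1, (p, q) ∈ ConicDom I → IsClosed (suppF f p q)
  /-- (A1) `p, q ∈ F_{p,q}`. -/
  self_mem : ∀ p q : S1, (p, q) ∈ ConicDom I → f p q p ≠ 0 ∧ f p q q ≠ 0
  /-- (A2) symmetry. -/
  symm : ∀ p q : S1, (p, q) ∈ ConicDom I → f p q = f q p
  /-- (A3) if `F_{p,q}` and `F_{p,r}` share a point `s ≠ p`, then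
  `f_{p,q} = f_{p,r}`. -/
  eq_of_common : ∀ p q r s : S1, (p, q) ∈ ConicDom I → (p, r) ∈ ConicDom I →
    s ≠ p → f p q s ≠ 0 → f p r s ≠ 0 → f p q = f p r
  /-- (A4) interlacing in the (possibly reversed) cyclic order forces
  equality. -/
  eq_of_chain : ∀ p q p' q' p'' q'' : S1,
    (p, p') ∈ ConicDom I → (q, q') ∈ ConicDom I →
    f p p' p'' ≠ 0 → f q q' q'' ≠ 0 →
    (chain6 p q p' q' p'' q'' ∨ chain6rev p q p' q' p'' q'') →
    (p = p' → 4 ≤ f p p' p) → (q = q' → 4 ≤ f q q' q) →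
    f p p' = f q q'
  /-- (A5) if `f_{p,q}(r) ≥ 4` and `r ∈ I` then `f_{r,r} = f_{p,q}`. -/
  eq_diag : ∀ p q r : S1, (p, q) ∈ ConicDom I → 4 ≤ f p q r → r ∈ I →
    f r r = f p q
  /-- (A6) lower semicontinuity of multiplicities under limits, with strict
  increase for pairs of distinct points. -/
  limit_mult : ∀ (pn qn rn₁ rn₂ : ℕ → S1) (p q r : S1) (k₁ k₂ : ℕ),
    (∀ n, (pn n, qn n) ∈ ConicDom I) → (p, q) ∈ ConicDom I →
    Tendsto pn atTop (nhds p) → Tendsto qn atTop (nhds q) →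
    (∀ n, rn₁ n ∈ closure I ∧ rn₁ n ∈ suppF f (pn n) (qn n)) →
    (∀ n, rn₂ n ∈ closure I ∧ rn₂ n ∈ suppF f (pn n) (qn n)) →
    r ∈ closure I →
    Tendsto rn₁ atTop (nhds r) → Tendsto rn₂ atTop (nhds r) →
    (∀ n, (k₁ : ℕ∞) ≤ f (pn n) (qn n) (rn₁ n)) →
    (∀ n, (k₂ : ℕ∞) ≤ f (pn n) (qn n) (rn₂ n)) →
    ((max k₁ k₂ : ℕ) : ℕ∞) ≤ f p q r ∧
      ((∀ n, rn₁ n ≠ rn₂ n) → ((max k₁ k₂ : ℕ) : ℕ∞) < f p q r)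
  /-- (A7) the total multiplicity of `f_{p,q}` is at least six. -/
  total_six : ∀ p q : S1, (p, q) ∈ ConicDom I →
    ∃ s : Finset S1, 6 ≤ ∑ r ∈ s, f p q r
  /-- (A8) if `f_{p,q}(p) = 2` then `p` is isolated in `F_{p,q}`. -/
  isolated_of_two : ∀ p q : S1, (p, q) ∈ ConicDom I → f p q p = 2 →
    IsolatedIn p (suppF f p q)

namespace CPK

lemma pr_cont : Continuous pr := continuous_quotient_mk'

lemma pr_add_one (x : ℝ) : pr (x + 1) = pr x := AddCircle.coe_add_period 1 x

lemma pr_inj {c x y : ℝ} (hx : x ∈ Set.Ico c (c+1)) (hy : y ∈ Set.Ico c (c+1)) :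
    pr x = pr y ↔ x = y := AddCircle.coe_eq_coe_iff_of_mem_Ico hx hy

lemma pr_neg (x : ℝ) : pr (-x) = - pr x :=
  (AddCircle.coe_neg (p := (1:ℝ)) (x := x))

lemma neg_pr (x : ℝ) : - pr (-x) = pr x := by rw [pr_neg, neg_neg]

lemma pr_rep (u : S1) (α : ℝ) : ∃ r : ℝ, r ∈ Set.Ioc α (α+1) ∧ pr r = u := by
  obtain ⟨⟨r, hr⟩, h⟩ : ∃ v : Set.Ioc α (α + 1), ((AddCircle.equivIoc 1 α).symm v) = u :=
    ⟨AddCircle.equivIoc 1 α u, (AddCircle.equivIoc 1 α).symm_apply_apply u⟩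
  exact ⟨r, hr, h⟩

lemma pr_tendsto {x : ℕ → ℝ} {l : ℝ} (h : Tendsto x atTop (nhds l)) :
    Tendsto (fun n => pr (x n)) atTop (nhds (pr l)) :=
  (pr_cont.tendsto l).comp h

/-- The working context for the sweeping argument. -/
structure Setup (I : Set S1) (f : S1 → S1 → S1 → ℕ∞) (α β : ℝ) : Prop where
  hf : IsIntrinsicConicSystem I f
  hab : α < β
  hb1 : β < α + 1
  hIoo : ∀ t ∈ Set.Ioo α β, pr t ∈ I
  haI : pr α ∈ I
  hbcl : pr β ∈ closure I
  hT4 : 4 ≤ f (pr α) (pr α) (pr α)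
  hbT : f (pr α) (pr α) (pr β) ≠ 0

namespace Setup

variable {I : Set S1} {f : S1 → S1 → S1 → ℕ∞} {α β : ℝ}

lemma hIcc (S : Setup I f α β) : ∀ t ∈ Set.Icc α β, pr t ∈ closure I := by
  intro t ht
  rcases eq_or_lt_of_le ht.2 with h | h
  · subst h; exact S.hbcl
  rcases eq_or_lt_of_le ht.1 with h' | h'
  · subst h'; exact subset_closure S.haI
  · exact subset_closure (S.hIoo t ⟨h', h⟩)

lemma wnd (S : Setup I f α β) : ∀ t ∈ Set.Icc α β, t ∈ Set.Ico α (α + 1) := by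
  intro t ht; exact ⟨ht.1, lt_of_le_of_lt ht.2 S.hb1⟩

lemma pr_inj' (S : Setup I f α β) {x y : ℝ} (hx : x ∈ Set.Icc α β) (hy : y ∈ Set.Icc α β) :
    pr x = pr y ↔ x = y := pr_inj (S.wnd x hx) (S.wnd y hy)

lemma dom_pair (S : Setup I f α β) {x y : ℝ} (hx : x ∈ Set.Icc α β) (hy : y ∈ Set.Icc α β) (hxy : x ≠ y) :
    (pr x, pr y) ∈ ConicDom I := by
  refine ⟨S.hIcc x hx, S.hIcc y hy, fun h => absurd ((S.pr_inj' hx hy).1 h) hxy⟩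

lemma dom_diag (S : Setup I f α β) {x : ℝ} (hx : pr x ∈ I) : (pr x, pr x) ∈ ConicDom I :=
  ⟨subset_closure hx, subset_closure hx, fun _ => hx⟩

lemma two_le (S : Setup I f α β) {p q r : S1} (hd : (p, q) ∈ ConicDom I) (h : f p q r ≠ 0) :
    2 ≤ f p q r := by
  rcases S.hf.even_values p q r hd with h' | ⟨k, h'⟩
  · rw [h']; exact le_top
  · rw [h'] at h ⊢
    match k with
    | 0 => simp at h
    | (n+1) =>
      have : (2 : ℕ) ≤ 2 * (n+1) := by omega
      exact_mod_cast Nat.cast_le.mpr this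

lemma four_le (S : Setup I f α β) {p q r : S1} (hd : (p, q) ∈ ConicDom I) (h : 2 < f p q r) :
    4 ≤ f p q r := by
  rcases S.hf.even_values p q r hd with h' | ⟨k, h'⟩
  · rw [h']; exact le_top
  · rw [h'] at h ⊢
    have h2 : ((2:ℕ) : ℕ∞) < ((2*k : ℕ) : ℕ∞) := by exact_mod_cast h
    have : (4:ℕ) ≤ 2*k := by have := Nat.cast_lt.mp h2; omega
    exact_mod_cast Nat.cast_le.mpr this

lemma eq_two (S : Setup I f α β) {p q r : S1} (hd : (p, q) ∈ ConicDom I) (h : f p q r ≠ 0)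
    (h4 : ¬ 4 ≤ f p q r) : f p q r = 2 := by
  rcases S.hf.even_values p q r hd with h' | ⟨k, h'⟩
  · exact absurd (h' ▸ le_top) h4
  · rw [h'] at h h4 ⊢
    match k with
    | 0 => simp at h
    | 1 => norm_num
    | (n+2) => exact absurd (by exact_mod_cast Nat.cast_le.mpr (by omega : (4:ℕ) ≤ 2*(n+2))) h4


end Setup

variable {I : Set S1} {f : S1 → S1 → S1 → ℕ∞} {α β : ℝ}

/-- The class of `x`: the part of the support of `f (pr α) (pr x)` lying in `(α,β)`,
in real coordinates. -/
def KS (f : S1 → S1 → S1 → ℕ∞) (α β x : ℝ) : Set ℝ :=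
  {t | t ∈ Set.Ioo α β ∧ f (pr α) (pr x) (pr t) ≠ 0}

namespace Setup

lemma domx (S : Setup I f α β) {x : ℝ} (hx : x ∈ Set.Ioo α β) :
    (pr α, pr x) ∈ ConicDom I :=
  S.dom_pair ⟨le_refl _, le_of_lt S.hab⟩ (Set.Ioo_subset_Icc_self hx) (ne_of_lt hx.1)

lemma prne (S : Setup I f α β) {x : ℝ} (hx : x ∈ Set.Ioo α β) : pr x ≠ pr α := by
  intro h
  exact (ne_of_lt hx.1).symm
    ((S.pr_inj' (Set.Ioo_subset_Icc_self hx) ⟨le_refl _, le_of_lt S.hab⟩).1 h)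

lemma notT_inter (S : Setup I f α β) {x : ℝ} (hx : x ∈ Set.Ioo α β)
    (hxT : f (pr α) (pr α) (pr x) = 0) {u : S1} (hu : u ≠ pr α)
    (h1 : f (pr α) (pr x) u ≠ 0) (h2 : f (pr α) (pr α) u ≠ 0) : False := by
  have hd1 := S.domx hx
  have hd2 := S.dom_diag S.haI
  have he := S.hf.eq_of_common (pr α) (pr x) (pr α) u hd1 hd2 hu h1 h2
  have hs := (S.hf.self_mem _ _ hd1).2
  rw [he] at hs
  exact hs hxT

lemma rebase (S : Setup I f α β) {x : ℝ} (hx : x ∈ Set.Ioo α β) {γ : ℝ}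
    (hγ : γ ∈ KS f α β x) : f (pr α) (pr γ) = f (pr α) (pr x) := by
  exact S.hf.eq_of_common (pr α) (pr γ) (pr x) (pr γ) (S.domx hγ.1) (S.domx hx)
    (S.prne hγ.1) (S.hf.self_mem _ _ (S.domx hγ.1)).2 hγ.2

lemma class_eq (S : Setup I f α β) {x y : ℝ} (hx : x ∈ Set.Ioo α β)
    (hy : y ∈ Set.Ioo α β) {u : S1} (hu : u ≠ pr α)
    (h1 : f (pr α) (pr x) u ≠ 0) (h2 : f (pr α) (pr y) u ≠ 0) :
    f (pr α) (pr x) = f (pr α) (pr y) :=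
  S.hf.eq_of_common (pr α) (pr x) (pr y) u (S.domx hx) (S.domx hy) hu h1 h2

lemma beta_not (S : Setup I f α β) {x : ℝ} (hx : x ∈ Set.Ioo α β)
    (hxT : f (pr α) (pr α) (pr x) = 0) : f (pr α) (pr x) (pr β) = 0 := by
  by_contra h
  have hβα : pr β ≠ pr α := by
    intro hh
    exact (ne_of_lt S.hab).symm
      ((S.pr_inj' ⟨le_of_lt S.hab, le_refl _⟩ ⟨le_refl _, le_of_lt S.hab⟩).1 hh)
  exact S.notT_inter hx hxT hβα h S.hbT

lemma barrier (S : Setup I f α β) {x : ℝ} (hx : x ∈ Set.Ioo α β)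
    (hxT : f (pr α) (pr α) (pr x) = 0) {u : S1} (hu : f (pr α) (pr x) u ≠ 0) :
    u = pr α ∨ ∃ t ∈ Set.Ioo α β, pr t = u := by
  obtain ⟨r, hr, hpru⟩ := pr_rep u α
  rcases eq_or_lt_of_le hr.2 with h1 | h1
  · left; rw [← hpru, h1, pr_add_one]
  rcases lt_trichotomy r β with h2 | h2 | h2
  · exact Or.inr ⟨r, ⟨hr.1, h2⟩, hpru⟩
  · exfalso; rw [← hpru, h2] at hu; exact hu (S.beta_not hx hxT)
  · exfalso
    have hch : chain6 (pr α) (pr α) (pr α) (pr x) (pr β) u :=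
      ⟨α, α, α, x, β, r, rfl, rfl, rfl, rfl, rfl, hpru, le_refl _, le_refl _,
        le_of_lt hx.1, hx.2, h2, h1⟩
    have he := S.hf.eq_of_chain (pr α) (pr α) (pr α) (pr x) (pr β) u
      (S.dom_diag S.haI) (S.domx hx) S.hbT hu (Or.inl hch)
      (fun _ => S.hT4) (fun h => absurd h.symm (S.prne hx))
    have hs := (S.hf.self_mem _ _ (S.domx hx)).2
    rw [← he] at hs
    exact hs hxT

lemma mass_a (S : Setup I f α β) {x : ℝ} (hx : x ∈ Set.Ioo α β)
    (hxT : f (pr α) (pr α) (pr x) = 0) : f (pr α) (pr x) (pr α) = 2 := by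
  refine S.eq_two (S.domx hx) (S.hf.self_mem _ _ (S.domx hx)).1 ?_
  intro h4
  have he := S.hf.eq_diag (pr α) (pr x) (pr α) (S.domx hx) h4 S.haI
  have hs := (S.hf.self_mem _ _ (S.domx hx)).2
  rw [← he] at hs
  exact hs hxT

lemma isolated_a (S : Setup I f α β) {x : ℝ} (hx : x ∈ Set.Ioo α β)
    (hxT : f (pr α) (pr α) (pr x) = 0) :
    IsolatedIn (pr α) (suppF f (pr α) (pr x)) :=
  S.hf.isolated_of_two _ _ (S.domx hx) (S.mass_a hx hxT)

lemma x_mem_KS (S : Setup I f α β) {x : ℝ} (hx : x ∈ Set.Ioo α β) :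
    x ∈ KS f α β x := ⟨hx, (S.hf.self_mem _ _ (S.domx hx)).2⟩

lemma KS_closed (S : Setup I f α β) {x : ℝ} (hx : x ∈ Set.Ioo α β)
    (hxT : f (pr α) (pr α) (pr x) = 0) : IsClosed (KS f α β x) := by
  obtain ⟨U, hUo, hUm, hUe⟩ := S.isolated_a hx hxT
  have hKeq : KS f α β x = pr ⁻¹' (suppF f (pr α) (pr x) ∩ Uᶜ) ∩ Set.Icc α β := by
    ext t
    constructor
    · rintro ⟨htI, htf⟩
      refine ⟨⟨htf, ?_⟩, Set.Ioo_subset_Icc_self htI⟩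
      intro hU
      have : pr t ∈ U ∩ suppF f (pr α) (pr x) := ⟨hU, htf⟩
      rw [hUe] at this
      exact S.prne htI this
    · rintro ⟨⟨hsupp, hUc⟩, htIcc⟩
      have htα : t ≠ α := by rintro rfl; exact hUc hUm
      have htβ : t ≠ β := by
        rintro rfl
        exact hsupp (S.beta_not hx hxT)
      exact ⟨⟨lt_of_le_of_ne htIcc.1 (Ne.symm htα), lt_of_le_of_ne htIcc.2 htβ⟩, hsupp⟩
  rw [hKeq]
  exact (IsClosed.preimage pr_cont
    ((S.hf.supp_closed _ _ (S.domx hx)).inter hUo.isClosed_compl)).inter isClosed_Icc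

lemma KS_compact (S : Setup I f α β) {x : ℝ} (hx : x ∈ Set.Ioo α β)
    (hxT : f (pr α) (pr α) (pr x) = 0) : IsCompact (KS f α β x) :=
  IsCompact.of_isClosed_subset isCompact_Icc (S.KS_closed hx hxT)
    (fun t ht => Set.Ioo_subset_Icc_self ht.1)

lemma cross1 (S : Setup I f α β) {x t : ℝ} (hx : x ∈ Set.Ioo α β)
    {γ δ s : ℝ} (hγ : γ ∈ KS f α β x) (hδ : δ ∈ KS f α β x) (hs : s ∈ KS f α β t)
    (ht : t ∈ Set.Ioo α β)
    (h1 : γ ≤ t) (h2 : t < δ) (h3 : δ < s) : t ∈ KS f α β x := by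
  have hrb := S.rebase hx hγ
  have hch : chain6 (pr α) (pr α) (pr γ) (pr t) (pr δ) (pr s) :=
    ⟨α, α, γ, t, δ, s, rfl, rfl, rfl, rfl, rfl, rfl, le_refl _, le_of_lt hγ.1.1,
      h1, h2, h3, lt_trans hs.1.2 S.hb1⟩
  have hδ2 : f (pr α) (pr γ) (pr δ) ≠ 0 := by rw [hrb]; exact hδ.2
  have he := S.hf.eq_of_chain (pr α) (pr α) (pr γ) (pr t) (pr δ) (pr s)
    (S.domx hγ.1) (S.domx ht) hδ2 hs.2 (Or.inl hch)
    (fun h => absurd h.symm (S.prne hγ.1)) (fun h => absurd h.symm (S.prne ht))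
  have hs' := (S.hf.self_mem _ _ (S.domx ht)).2
  rw [← he, hrb] at hs'
  exact ⟨ht, hs'⟩

lemma cross2 (S : Setup I f α β) {x t : ℝ} (hx : x ∈ Set.Ioo α β)
    (ht : t ∈ Set.Ioo α β)
    {γ δ s : ℝ} (hγ : γ ∈ KS f α β x) (hδ : δ ∈ KS f α β x) (hs : s ∈ KS f α β t)
    (h1 : s < γ) (h2 : γ < t) (h3 : t < δ) : t ∈ KS f α β x := by
  have hrbs := S.rebase ht hs
  have hrbγ := S.rebase hx hγ
  have hch : chain6 (pr α) (pr α) (pr s) (pr γ) (pr t) (pr δ) :=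
    ⟨α, α, s, γ, t, δ, rfl, rfl, rfl, rfl, rfl, rfl, le_refl _, le_of_lt hs.1.1,
      le_of_lt h1, h2, h3, lt_trans hδ.1.2 S.hb1⟩
  have hf1 : f (pr α) (pr s) (pr t) ≠ 0 := by
    rw [hrbs]; exact (S.hf.self_mem _ _ (S.domx ht)).2
  have hf2 : f (pr α) (pr γ) (pr δ) ≠ 0 := by rw [hrbγ]; exact hδ.2
  have he := S.hf.eq_of_chain (pr α) (pr α) (pr s) (pr γ) (pr t) (pr δ)
    (S.domx hs.1) (S.domx hγ.1) hf1 hf2 (Or.inl hch)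
    (fun h => absurd h.symm (S.prne hs.1)) (fun h => absurd h.symm (S.prne hγ.1))
  -- he : f (pr α) (pr s) = f (pr α) (pr γ)
  have hval : f (pr α) (pr x) (pr t) ≠ 0 := by
    have h0 := (S.hf.self_mem _ _ (S.domx ht)).2
    rw [← hrbs, he, hrbγ] at h0
    exact h0
  exact ⟨ht, hval⟩

lemma crossT (S : Setup I f α β) {x : ℝ} (hx : x ∈ Set.Ioo α β)
    (hxT : f (pr α) (pr α) (pr x) = 0)
    {γ δ w : ℝ} (hγ : γ ∈ KS f α β x) (hδ : δ ∈ KS f α β x) (hw : w ∈ Set.Ioo α β)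
    (hwT : f (pr α) (pr α) (pr w) ≠ 0) (h1 : γ ≤ w) (h2 : w < δ) : False := by
  have hrbw : f (pr α) (pr w) = f (pr α) (pr α) :=
    S.hf.eq_of_common (pr α) (pr w) (pr α) (pr w) (S.domx hw) (S.dom_diag S.haI)
      (S.prne hw) (S.hf.self_mem _ _ (S.domx hw)).2 hwT
  have hrbγ := S.rebase hx hγ
  have hch : chain6 (pr α) (pr α) (pr γ) (pr w) (pr δ) (pr β) :=
    ⟨α, α, γ, w, δ, β, rfl, rfl, rfl, rfl, rfl, rfl, le_refl _, le_of_lt hγ.1.1,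
      h1, h2, hδ.1.2, S.hb1⟩
  have hf1 : f (pr α) (pr γ) (pr δ) ≠ 0 := by rw [hrbγ]; exact hδ.2
  have hf2 : f (pr α) (pr w) (pr β) ≠ 0 := by rw [hrbw]; exact S.hbT
  have he := S.hf.eq_of_chain (pr α) (pr α) (pr γ) (pr w) (pr δ) (pr β)
    (S.domx hγ.1) (S.domx hw) hf1 hf2 (Or.inl hch)
    (fun h => absurd h.symm (S.prne hγ.1)) (fun h => absurd h.symm (S.prne hw))
  -- he : f (pr α) (pr γ) = f (pr α) (pr w)
  have h0 := (S.hf.self_mem _ _ (S.domx hx)).2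
  rw [← hrbγ, he, hrbw] at h0
  exact h0 hxT

lemma trap (S : Setup I f α β) {x : ℝ} (hx : x ∈ Set.Ioo α β)
    (hxT : f (pr α) (pr α) (pr x) = 0)
    {γ δ : ℝ} (hγ : γ ∈ KS f α β x) (hδ : δ ∈ KS f α β x)
    (hgap : Set.Ioo γ δ ∩ KS f α β x = ∅) {t : ℝ} (htm : t ∈ Set.Ioo γ δ) :
    t ∈ Set.Ioo α β ∧ f (pr α) (pr α) (pr t) = 0 ∧ KS f α β t ⊆ Set.Ioo γ δ := by
  have ht : t ∈ Set.Ioo α β := ⟨lt_trans hγ.1.1 htm.1, lt_trans htm.2 hδ.1.2⟩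
  have htT : f (pr α) (pr α) (pr t) = 0 := by
    by_contra h
    exact S.crossT hx hxT hγ hδ ht h (le_of_lt htm.1) htm.2
  have htnK : t ∉ KS f α β x := by
    intro h
    exact absurd (Set.mem_inter htm h) (by rw [hgap]; exact fun h => h)
  refine ⟨ht, htT, ?_⟩
  intro s hs
  rcases lt_trichotomy s γ with h1 | h1 | h1
  · exact absurd (S.cross2 hx ht hγ hδ hs h1 htm.1 htm.2) htnK
  · exfalso
    subst h1
    have := S.class_eq ht hx (S.prne hγ.1) hs.2 hγ.2
    have h0 := (S.hf.self_mem _ _ (S.domx ht)).2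
    rw [this] at h0
    exact htnK ⟨ht, h0⟩
  · rcases lt_trichotomy s δ with h2 | h2 | h2
    · exact ⟨h1, h2⟩
    · exfalso
      subst h2
      have := S.class_eq ht hx (S.prne hδ.1) hs.2 hδ.2
      have h0 := (S.hf.self_mem _ _ (S.domx ht)).2
      rw [this] at h0
      exact htnK ⟨ht, h0⟩
    · exact absurd (S.cross1 hx hγ hδ hs ht (le_of_lt htm.1) htm.2 h2) htnK

lemma gapOf (S : Setup I f α β) {x : ℝ} (hx : x ∈ Set.Ioo α β)
    (hxT : f (pr α) (pr α) (pr x) = 0) (hnc : ¬ (KS f α β x).OrdConnected) :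
    ∃ γ δ, γ ∈ KS f α β x ∧ δ ∈ KS f α β x ∧ γ < δ ∧
      Set.Ioo γ δ ∩ KS f α β x = ∅ := by
  rw [Set.ordConnected_iff] at hnc
  push_neg at hnc
  obtain ⟨p, hp, q, hq, hpq, hnsub⟩ := hnc
  obtain ⟨w, hw, hwn⟩ := Set.not_subset.1 hnsub
  have hKc := S.KS_closed hx hxT
  have hKcp := S.KS_compact hx hxT
  have hpw : p < w := lt_of_le_of_ne hw.1 (by rintro rfl; exact hwn hp)
  have hwq : w < q := lt_of_le_of_ne hw.2 (by rintro rfl; exact hwn hq)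
  set A := KS f α β x ∩ Set.Icc p w with hA
  set B := KS f α β x ∩ Set.Icc w q with hB
  have hAcp : IsCompact A := hKcp.inter_right isClosed_Icc
  have hBcp : IsCompact B := hKcp.inter_right isClosed_Icc
  have hAne : A.Nonempty := ⟨p, hp, le_refl _, le_of_lt hpw⟩
  have hBne : B.Nonempty := ⟨q, hq, le_of_lt hwq, le_refl _⟩
  have hγA : sSup A ∈ A := hAcp.sSup_mem hAne
  have hδB : sInf B ∈ B := hBcp.sInf_mem hBne
  set γ := sSup A
  set δ := sInf B
  have hγw : γ < w := lt_of_le_of_ne hγA.2.2 (by rintro h; rw [h] at hγA; exact hwn hγA.1)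
  have hwδ : w < δ :=
    lt_of_le_of_ne hδB.2.1 (by rintro h; rw [← h] at hδB; exact hwn hδB.1)
  refine ⟨γ, δ, hγA.1, hδB.1, lt_trans hγw hwδ, ?_⟩
  ext s
  simp only [Set.mem_inter_iff, Set.mem_Ioo, Set.mem_empty_iff_false, iff_false, not_and]
  rintro ⟨hs1, hs2⟩ hsK
  rcases le_or_gt s w with h | h
  · have hsA : s ∈ A := ⟨hsK, le_trans hγA.2.1 (le_of_lt hs1), h⟩
    exact absurd (le_csSup hAcp.bddAbove hsA) (not_le.2 hs1)
  · have hsB : s ∈ B := ⟨hsK, le_of_lt h, le_trans (le_of_lt hs2) hδB.2.2⟩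
    exact absurd (csInf_le hBcp.bddBelow hsB) (not_le.2 hs2)

end Setup


/-- Invariant of the shrinking recursion: a point `x` whose class has a gap `(γ,δ)`. -/
def Inv (f : S1 → S1 → S1 → ℕ∞) (α β : ℝ) (d : ℝ × ℝ × ℝ) : Prop :=
  d.1 ∈ Set.Ioo α β ∧ f (pr α) (pr α) (pr d.1) = 0 ∧
    d.2.1 ∈ KS f α β d.1 ∧ d.2.2 ∈ KS f α β d.1 ∧ d.2.1 < d.2.2 ∧
    Set.Ioo d.2.1 d.2.2 ∩ KS f α β d.1 = ∅

namespace Setup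

/-- Main descent lemma: some admissible class is order-connected. -/
lemma descend (S : Setup I f α β)
    (hx0 : ∃ x₀ ∈ Set.Ioo α β, f (pr α) (pr α) (pr x₀) = 0) :
    ∃ x ∈ Set.Ioo α β, f (pr α) (pr α) (pr x) = 0 ∧ (KS f α β x).OrdConnected := by
  by_contra hcon
  push_neg at hcon
  obtain ⟨x₀, hx₀m, hx₀T⟩ := hx0
  obtain ⟨γ₀, δ₀, hγ₀, hδ₀, hγδ₀, hgap₀⟩ := S.gapOf hx₀m hx₀T (hcon x₀ hx₀m hx₀T)
  have step : ∀ d : ℝ × ℝ × ℝ, Inv f α β d → ∃ d' : ℝ × ℝ × ℝ, Inv f α β d' ∧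
      d.2.1 < d'.2.1 ∧ d'.2.2 < d.2.2 ∧
      d'.2.2 - d'.2.1 ≤ (d.2.2 - d.2.1) / 2 ∧
      KS f α β d'.1 ⊆ Set.Ioo d.2.1 d.2.2 ∧ d'.2.1 < d'.2.2 := by
    rintro ⟨x, γ, δ⟩ ⟨hx, hxT, hγ, hδ, hγδ, hgap⟩
    have htm : (γ + δ) / 2 ∈ Set.Ioo γ δ := ⟨by linarith, by linarith⟩
    obtain ⟨ht, htT, hKsub⟩ := S.trap hx hxT hγ hδ hgap htm
    obtain ⟨γ', δ', hγ', hδ', hγδ', hgap'⟩ := S.gapOf ht htT (hcon _ ht htT)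
    have hγ'm := hKsub hγ'
    have hδ'm := hKsub hδ'
    have htK := S.x_mem_KS ht
    have htng : ¬ (γ' < (γ + δ) / 2 ∧ (γ + δ) / 2 < δ') := by
      intro h
      have : (γ + δ) / 2 ∈ Set.Ioo γ' δ' ∩ KS f α β ((γ + δ) / 2) := ⟨h, htK⟩
      rw [hgap'] at this
      exact this
    have hhalf : δ' - γ' ≤ (δ - γ) / 2 := by
      rcases not_and_or.1 htng with h | h
      · push_neg at h
        have h2 : δ' < δ := hδ'm.2
        linarith
      · push_neg at h
        have h2 : γ < γ' := hγ'm.1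
        linarith
    exact ⟨((γ + δ) / 2, γ', δ'), ⟨ht, htT, hγ', hδ', hγδ', hgap'⟩,
      hγ'm.1, hδ'm.2, hhalf, hKsub, hγδ'⟩
  choose Fd hInv hγlt hδlt hhalf hKsub _ using step
  let seq : ℕ → {d : ℝ × ℝ × ℝ // Inv f α β d} := fun n =>
    Nat.rec ⟨(x₀, γ₀, δ₀), hx₀m, hx₀T, hγ₀, hδ₀, hγδ₀, hgap₀⟩
      (fun _ d => ⟨Fd d.1 d.2, hInv d.1 d.2⟩) n
  set xs : ℕ → ℝ := fun n => (seq n).1.1 with hxs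
  set γs : ℕ → ℝ := fun n => (seq n).1.2.1 with hγs
  set δs : ℕ → ℝ := fun n => (seq n).1.2.2 with hδs
  have hInvn : ∀ n, Inv f α β (xs n, γs n, δs n) := fun n => (seq n).2
  have hsucc : ∀ n, (seq (n+1)).1 = Fd (seq n).1 (seq n).2 := fun n => rfl
  have hγmono : ∀ n, γs n < γs (n+1) := fun n => by
    have := hγlt (seq n).1 (seq n).2
    simpa [hγs, hsucc n] using this
  have hδanti : ∀ n, δs (n+1) < δs n := fun n => by
    have := hδlt (seq n).1 (seq n).2
    simpa [hδs, hsucc n] using this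
  have hhalfn : ∀ n, δs (n+1) - γs (n+1) ≤ (δs n - γs n) / 2 := fun n => by
    have := hhalf (seq n).1 (seq n).2
    simpa [hγs, hδs, hsucc n] using this
  have hγδn : ∀ n, γs n < δs n := fun n => (hInvn n).2.2.2.2.1
  have hγsm : StrictMono γs := strictMono_nat_of_lt_succ hγmono
  have hδsa : StrictAnti δs := strictAnti_nat_of_succ_lt hδanti
  have hγδall : ∀ n m, γs n < δs m := by
    intro n m
    rcases le_total n m with h | h
    · exact lt_of_le_of_lt (hγsm.monotone h) (hγδn m)
    · exact lt_of_lt_of_le (hγδn n) (hδsa.antitone h)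
  have hbdd : BddAbove (Set.range γs) := ⟨δs 0, by rintro y ⟨n, rfl⟩; exact le_of_lt (hγδall n 0)⟩
  set w := ⨆ n, γs n with hw
  have hγw : ∀ n, γs n ≤ w := fun n => le_ciSup hbdd n
  have hwδ : ∀ n, w ≤ δs n := fun n => ciSup_le (fun m => le_of_lt (hγδall m n))
  have hγwlt : ∀ n, γs n < w := fun n => lt_of_lt_of_le (hγmono n) (hγw (n+1))
  have hwδlt : ∀ n, w < δs n := fun n => lt_of_le_of_lt (hwδ (n+1)) (hδanti n)
  have hwIoo : ∀ n, w ∈ Set.Ioo (γs n) (δs n) := fun n => ⟨hγwlt n, hwδlt n⟩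
  -- w is trapped in every gap, so its class is trapped too
  have htrapw : ∀ n, w ∈ Set.Ioo α β ∧ f (pr α) (pr α) (pr w) = 0 ∧
      KS f α β w ⊆ Set.Ioo (γs n) (δs n) := by
    intro n
    obtain ⟨hx, hxT, hγ, hδ, hγδ, hgap⟩ := hInvn n
    exact S.trap hx hxT hγ hδ hgap (hwIoo n)
  obtain ⟨hwm, hwT, _⟩ := htrapw 0
  -- the gaps shrink to the point w
  have hgeom : ∀ n, δs n - γs n ≤ (δs 0 - γs 0) * (1/2)^n := by
    intro n
    induction n with
    | zero => simp
    | succ k ih =>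
      calc δs (k+1) - γs (k+1) ≤ (δs k - γs k) / 2 := hhalfn k
        _ ≤ ((δs 0 - γs 0) * (1/2)^k) / 2 := by linarith
        _ = (δs 0 - γs 0) * (1/2)^(k+1) := by ring
  have hlen0 : Filter.Tendsto (fun n => δs n - γs n) atTop (nhds 0) := by
    apply squeeze_zero (fun n => by linarith [hγδn n])
      (fun n => hgeom n)
    have := tendsto_pow_atTop_nhds_zero_of_lt_one (by norm_num : (0:ℝ) ≤ 1/2)
      (by norm_num : (1:ℝ)/2 < 1)
    simpa using this.const_mul (δs 0 - γs 0)
  have hγtend : Filter.Tendsto γs atTop (nhds w) :=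
    tendsto_atTop_ciSup hγsm.monotone hbdd
  have hδtend : Filter.Tendsto δs atTop (nhds w) := by
    have := hγtend.add hlen0
    simpa using this
  -- the class of w is the singleton {w}
  have hKw : KS f α β w = {w} := by
    apply Set.eq_singleton_iff_unique_mem.2
    constructor
    · exact S.x_mem_KS hwm
    · intro s hs
      have h1 : ∀ n, γs n ≤ s := fun n => le_of_lt (((htrapw n).2.2) hs).1
      have h2 : ∀ n, s ≤ δs n := fun n => le_of_lt (((htrapw n).2.2) hs).2
      have hle1 : w ≤ s := le_of_tendsto hγtend (Filter.Eventually.of_forall h1)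
      have hle2 : s ≤ w := ge_of_tendsto hδtend (Filter.Eventually.of_forall h2)
      linarith
  exact hcon w hwm hwT (hKw ▸ Set.ordConnected_singleton)

end Setup


lemma enat_ge4 {v : ℕ∞} (h : (6:ℕ∞) ≤ 2 + v) : 4 ≤ v := by
  induction v using ENat.recTopCoe with
  | top => exact le_top
  | coe n =>
    have h' : ((6:ℕ):ℕ∞) ≤ ((2+n:ℕ):ℕ∞) := by exact_mod_cast h
    have : (4:ℕ) ≤ n := by have := Nat.cast_le.mp h'; omega
    exact_mod_cast Nat.cast_le.mpr this

namespace Setup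

lemma ext4 (S : Setup I f α β) {x : ℝ} (hx : x ∈ Set.Ioo α β)
    (hxT : f (pr α) (pr α) (pr x) = 0) (hoc : (KS f α β x).OrdConnected) :
    ∃ r ∈ KS f α β x, 4 ≤ f (pr α) (pr x) (pr r) := by
  classical
  by_cases hsing : ∀ s ∈ KS f α β x, s = x
  · refine ⟨x, S.x_mem_KS hx, ?_⟩
    obtain ⟨sFin, hsum⟩ := S.hf.total_six (pr α) (pr x) (S.domx hx)
    have hle : ∑ r ∈ sFin, f (pr α) (pr x) r ≤
        ∑ r ∈ ({pr α, pr x} : Finset S1), f (pr α) (pr x) r := by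
      apply Finset.sum_le_sum_of_ne_zero
      intro u _ hu
      rcases S.barrier hx hxT hu with h | ⟨t, ht, rfl⟩
      · simp [h]
      · have : t ∈ KS f α β x := ⟨ht, hu⟩
        rw [hsing t this]; simp
    have hpair : ∑ r ∈ ({pr α, pr x} : Finset S1), f (pr α) (pr x) r =
        f (pr α) (pr x) (pr α) + f (pr α) (pr x) (pr x) :=
      Finset.sum_pair (Ne.symm (S.prne hx))
    have h6 : (6:ℕ∞) ≤ 2 + f (pr α) (pr x) (pr x) := by
      rw [← S.mass_a hx hxT]
      calc (6:ℕ∞) ≤ ∑ r ∈ sFin, f (pr α) (pr x) r := hsum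
        _ ≤ f (pr α) (pr x) (pr α) + f (pr α) (pr x) (pr x) := hpair ▸ hle
    exact enat_ge4 h6
  · push_neg at hsing
    obtain ⟨s, hsK, hsx⟩ := hsing
    set m := min s x with hm
    set M := max s x with hM
    have hmK : m ∈ KS f α β x := by
      rcases le_total s x with h | h
      · rw [hm, min_eq_left h]; exact hsK
      · rw [hm, min_eq_right h]; exact S.x_mem_KS hx
    have hMK : M ∈ KS f α β x := by
      rcases le_total s x with h | h
      · rw [hM, max_eq_right h]; exact S.x_mem_KS hx
      · rw [hM, max_eq_left h]; exact hsK
    have hmM : m < M := min_lt_max.mpr hsx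
    have hIccK := hoc.out hmK hMK
    set r := (m + M) / 2 with hr
    have hrm : m < r := by rw [hr]; linarith
    have hrM : r < M := by rw [hr]; linarith
    have hrK : r ∈ KS f α β x := hIccK ⟨le_of_lt hrm, le_of_lt hrM⟩
    refine ⟨r, hrK, ?_⟩
    set z : ℕ → ℝ := fun n => r + (M - r) / (n + 2) with hz
    have hzK : ∀ n, z n ∈ KS f α β x := by
      intro n
      apply hIccK
      constructor
      · have h1 : 0 < (M - r) / (n + 2) := by
          apply div_pos (by linarith)
          positivity
        rw [hz]; simp only []; nlinarith [hrm]
      · have h2 : (M - r) / (n + 2) ≤ M - r := by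
          apply div_le_self (by linarith)
          have : (0:ℝ) ≤ (n:ℝ) := Nat.cast_nonneg n
          linarith
        rw [hz]; simp only []; linarith
    have hzr : ∀ n, z n ≠ r := by
      intro n
      have h1 : 0 < (M - r) / (n + 2) := by
        apply div_pos (by linarith)
        positivity
      rw [hz]; simp only []; intro h; nlinarith
    have hztend : Filter.Tendsto z atTop (nhds r) := by
      have h0 : Filter.Tendsto (fun n : ℕ => (M - r) / (n + 2)) atTop (nhds 0) := by
        have hb : Filter.Tendsto (fun n : ℕ => ((n:ℝ) + 2)) atTop atTop :=
          Filter.tendsto_atTop_add_const_right atTop 2 tendsto_natCast_atTop_atTop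
        simpa using hb.inv_tendsto_atTop.const_mul (M - r) |>.congr
          (fun n => by simp only [Pi.inv_apply]; field_simp)
      have := h0.const_add r
      simpa [hz] using this
    have hdom : ∀ n : ℕ, (pr α, pr x) ∈ ConicDom I := fun _ => S.domx hx
    have hlim := S.hf.limit_mult (fun _ => pr α) (fun _ => pr x) (fun _ => pr r)
      (fun n => pr (z n)) (pr α) (pr x) (pr r) 2 2
      hdom (S.domx hx) tendsto_const_nhds tendsto_const_nhds
      (fun n => ⟨S.hIcc r (Set.Ioo_subset_Icc_self hrK.1), hrK.2⟩)
      (fun n => ⟨S.hIcc (z n) (Set.Ioo_subset_Icc_self (hzK n).1), (hzK n).2⟩)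
      (S.hIcc r (Set.Ioo_subset_Icc_self hrK.1))
      tendsto_const_nhds (pr_tendsto hztend)
      (fun n => by exact_mod_cast S.two_le (S.domx hx) hrK.2)
      (fun n => by exact_mod_cast S.two_le (S.domx hx) (hzK n).2)
    have hne : ∀ n, pr r ≠ pr (z n) := by
      intro n h
      exact (hzr n) (((S.pr_inj' (Set.Ioo_subset_Icc_self hrK.1)
        (Set.Ioo_subset_Icc_self (hzK n).1)).1 h).symm)
    have hlt := hlim.2 hne
    have hlt2 : (2:ℕ∞) < f (pr α) (pr x) (pr r) := by
      have : ((max 2 2 : ℕ) : ℕ∞) = (2:ℕ∞) := by norm_num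
      rwa [this] at hlt
    exact S.four_le (S.domx hx) hlt2

end Setup


lemma chain6_neg {p q p' q' p'' q'' : S1} (h : chain6 p q p' q' p'' q'') :
    chain6rev (-p) (-q) (-p') (-q') (-p'') (-q'') := by
  obtain ⟨a, b, c, d, e, g, ha, hb, hc, hd, he, hg, h1, h2, h3, h4, h5, h6⟩ := h
  exact ⟨-a, -b, -c, -d, -e, -g, by rw [pr_neg, ha], by rw [pr_neg, hb],
    by rw [pr_neg, hc], by rw [pr_neg, hd], by rw [pr_neg, he], by rw [pr_neg, hg],
    by linarith, by linarith, by linarith, by linarith, by linarith, by linarith⟩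

lemma chain6rev_neg {p q p' q' p'' q'' : S1} (h : chain6rev p q p' q' p'' q'') :
    chain6 (-p) (-q) (-p') (-q') (-p'') (-q'') := by
  obtain ⟨a, b, c, d, e, g, ha, hb, hc, hd, he, hg, h1, h2, h3, h4, h5, h6⟩ := h
  exact ⟨-a, -b, -c, -d, -e, -g, by rw [pr_neg, ha], by rw [pr_neg, hb],
    by rw [pr_neg, hc], by rw [pr_neg, hd], by rw [pr_neg, he], by rw [pr_neg, hg],
    by linarith, by linarith, by linarith, by linarith, by linarith, by linarith⟩

lemma closure_neg_preimage (I : Set S1) :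
    closure ((fun z : S1 => -z) ⁻¹' I) = (fun z : S1 => -z) ⁻¹' closure I := by
  have h := (Homeomorph.neg S1).preimage_closure I
  convert h.symm using 2
  all_goals rfl

lemma dom_neg {I : Set S1} {p q : S1} :
    (p, q) ∈ ConicDom ((fun z : S1 => -z) ⁻¹' I) ↔ (-p, -q) ∈ ConicDom I := by
  simp only [ConicDom, Set.mem_setOf_eq, closure_neg_preimage, Set.mem_preimage]
  exact ⟨fun h => ⟨h.1, h.2.1, fun hh => h.2.2 (neg_inj.1 hh)⟩,
    fun h => ⟨h.1, h.2.1, fun hh => h.2.2 (congrArg Neg.neg hh)⟩⟩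

lemma reflect {I : Set S1} {f : S1 → S1 → S1 → ℕ∞}
    (hf : IsIntrinsicConicSystem I f) :
    IsIntrinsicConicSystem ((fun z : S1 => -z) ⁻¹' I)
      (fun p q r => f (-p) (-q) (-r)) := by
  constructor
  · exact fun p q r hd => hf.even_values _ _ _ (dom_neg.1 hd)
  · intro p q hd
    exact IsClosed.preimage continuous_neg (hf.supp_closed _ _ (dom_neg.1 hd))
  · exact fun p q hd => hf.self_mem _ _ (dom_neg.1 hd)
  · intro p q hd
    funext r
    exact congrFun (hf.symm _ _ (dom_neg.1 hd)) (-r)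
  · intro p q r s hd1 hd2 hsp h1 h2
    have := hf.eq_of_common (-p) (-q) (-r) (-s) (dom_neg.1 hd1) (dom_neg.1 hd2)
      (fun h => hsp (neg_inj.1 h)) h1 h2
    funext t
    exact congrFun this (-t)
  · intro p q p' q' p'' q'' hd1 hd2 h1 h2 hch hs1 hs2
    have hch' : chain6 (-p) (-q) (-p') (-q') (-p'') (-q'') ∨
        chain6rev (-p) (-q) (-p') (-q') (-p'') (-q'') := by
      rcases hch with h | h
      · exact Or.inr (chain6_neg h)
      · exact Or.inl (chain6rev_neg h)
    have := hf.eq_of_chain (-p) (-q) (-p') (-q') (-p'') (-q'')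
      (dom_neg.1 hd1) (dom_neg.1 hd2) h1 h2 hch'
      (fun h => hs1 (neg_inj.1 h)) (fun h => hs2 (neg_inj.1 h))
    funext t
    exact congrFun this (-t)
  · intro p q r hd h4 hr
    have := hf.eq_diag (-p) (-q) (-r) (dom_neg.1 hd) h4 hr
    funext t
    exact congrFun this (-t)
  · intro pn qn rn1 rn2 p q r k1 k2 hdn hd hp hq h1 h2 hr hr1 hr2 hk1 hk2
    have hcl : ∀ (u : S1), u ∈ closure ((fun z : S1 => -z) ⁻¹' I) → -u ∈ closure I := by
      intro u hu; rw [closure_neg_preimage] at hu; exact hu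
    exact hf.limit_mult (fun n => -(pn n)) (fun n => -(qn n)) (fun n => -(rn1 n))
      (fun n => -(rn2 n)) (-p) (-q) (-r) k1 k2
      (fun n => dom_neg.1 (hdn n)) (dom_neg.1 hd) hp.neg hq.neg
      (fun n => ⟨hcl _ (h1 n).1, (h1 n).2⟩) (fun n => ⟨hcl _ (h2 n).1, (h2 n).2⟩)
      (hcl _ hr) hr1.neg hr2.neg hk1 hk2
      |>.imp id (fun h hne => h (fun n hh => hne n (neg_inj.1 hh)))
  · intro p q hd
    classical
    obtain ⟨sF, hs⟩ := hf.total_six (-p) (-q) (dom_neg.1 hd)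
    refine ⟨sF.image (fun z => -z), ?_⟩
    rw [Finset.sum_image (fun x _ y _ h => neg_inj.1 h)]
    simpa using hs
  · intro p q hd h2
    obtain ⟨U, hUo, hUm, hUe⟩ := hf.isolated_of_two (-p) (-q) (dom_neg.1 hd) h2
    refine ⟨(fun z : S1 => -z) ⁻¹' U, hUo.preimage continuous_neg, hUm, ?_⟩
    ext r
    constructor
    · rintro ⟨hrU, hrs⟩
      have : -r ∈ U ∩ suppF f (-p) (-q) := ⟨hrU, hrs⟩
      rw [hUe] at this
      simpa using neg_inj.1 this
    · intro hr
      have hrp : r = p := hr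
      subst hrp
      refine ⟨hUm, ?_⟩
      have h1 : -r ∈ U ∩ suppF f (-r) (-q) := by rw [hUe]; exact rfl
      exact h1.2


lemma two_le0 {I : Set S1} {f : S1 → S1 → S1 → ℕ∞} (hf : IsIntrinsicConicSystem I f)
    {p q r : S1} (hd : (p, q) ∈ ConicDom I) (h : f p q r ≠ 0) : 2 ≤ f p q r := by
  rcases hf.even_values p q r hd with h' | ⟨k, h'⟩
  · rw [h']; exact le_top
  · rw [h'] at h ⊢
    match k with
    | 0 => simp at h
    | (n+1) => exact_mod_cast Nat.cast_le.mpr (by omega : (2:ℕ) ≤ 2*(n+1))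

lemma four_le0 {I : Set S1} {f : S1 → S1 → S1 → ℕ∞} (hf : IsIntrinsicConicSystem I f)
    {p q r : S1} (hd : (p, q) ∈ ConicDom I) (h : 2 < f p q r) : 4 ≤ f p q r := by
  rcases hf.even_values p q r hd with h' | ⟨k, h'⟩
  · rw [h']; exact le_top
  · rw [h'] at h ⊢
    have h2 : ((2:ℕ) : ℕ∞) < ((2*k : ℕ) : ℕ∞) := by exact_mod_cast h
    exact_mod_cast Nat.cast_le.mpr (by have := Nat.cast_lt.mp h2; omega : (4:ℕ) ≤ 2*k)

lemma tendsto_aux (a e : ℝ) :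
    Filter.Tendsto (fun n : ℕ => a + e / (n + 2)) atTop (nhds a) := by
  have hb : Filter.Tendsto (fun n : ℕ => ((n:ℝ) + 2)) atTop atTop :=
    Filter.tendsto_atTop_add_const_right atTop 2 tendsto_natCast_atTop_atTop
  have h0 : Filter.Tendsto (fun n : ℕ => e / (n + 2)) atTop (nhds 0) := by
    simpa using hb.inv_tendsto_atTop.const_mul e |>.congr (fun n => by simp only [Pi.inv_apply]; field_simp)
  simpa using h0.const_add a

lemma stage0 {I : Set S1} {f : S1 → S1 → S1 → ℕ∞} (hf : IsIntrinsicConicSystem I f)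
    {a b : ℝ} (hab : a < b) (hb1 : b < a + 1)
    (hIoo : ∀ t ∈ Set.Ioo a b, pr t ∈ I) (haI : pr a ∈ I) :
    4 ≤ f (pr a) (pr a) (pr a) := by
  set z : ℕ → ℝ := fun n => a + (b - a) / (n + 2) with hz
  have hzIoo : ∀ n, z n ∈ Set.Ioo a b := by
    intro n
    have h1 : 0 < (b - a) / ((n:ℝ) + 2) := div_pos (by linarith) (by positivity)
    have h2 : (b - a) / ((n:ℝ) + 2) ≤ (b - a) / 2 := by
      apply div_le_div_of_nonneg_left (by linarith) (by norm_num)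
      have : (0:ℝ) ≤ (n:ℝ) := Nat.cast_nonneg n
      linarith
    constructor
    · rw [hz]; simp only []; linarith
    · rw [hz]; simp only []; linarith
  have hwnd : ∀ n, z n ∈ Set.Ico a (a+1) :=
    fun n => ⟨le_of_lt (hzIoo n).1, lt_trans (hzIoo n).2 hb1⟩
  have hne : ∀ n, pr a ≠ pr (z n) := by
    intro n h
    have := (pr_inj ⟨le_refl a, by linarith⟩ (hwnd n)).1 h
    exact absurd this (ne_of_gt (hzIoo n).1).symm
  have hdomn : ∀ n, (pr a, pr (z n)) ∈ ConicDom I := by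
    intro n
    exact ⟨subset_closure haI, subset_closure (hIoo _ (hzIoo n)), fun h => absurd h (hne n)⟩
  have hdd : (pr a, pr a) ∈ ConicDom I := ⟨subset_closure haI, subset_closure haI, fun _ => haI⟩
  have hztend : Filter.Tendsto (fun n => pr (z n)) atTop (nhds (pr a)) :=
    pr_tendsto (tendsto_aux a (b - a))
  have hlim := hf.limit_mult (fun _ => pr a) (fun n => pr (z n)) (fun _ => pr a)
    (fun n => pr (z n)) (pr a) (pr a) (pr a) 2 2
    hdomn hdd tendsto_const_nhds hztend
    (fun n => ⟨subset_closure haI, (hf.self_mem _ _ (hdomn n)).1⟩)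
    (fun n => ⟨subset_closure (hIoo _ (hzIoo n)), (hf.self_mem _ _ (hdomn n)).2⟩)
    (subset_closure haI) tendsto_const_nhds hztend
    (fun n => by exact_mod_cast two_le0 hf (hdomn n) (hf.self_mem _ _ (hdomn n)).1)
    (fun n => by exact_mod_cast two_le0 hf (hdomn n) (hf.self_mem _ _ (hdomn n)).2)
  have hlt := hlim.2 hne
  have hlt2 : (2:ℕ∞) < f (pr a) (pr a) (pr a) := by
    have hmax : ((max 2 2 : ℕ) : ℕ∞) = (2:ℕ∞) := by norm_num
    rwa [hmax] at hlt
  exact four_le0 hf hdd hlt2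


end CPK


open CPK

/-- If `f_{a,a} = f_{a,b}` and `F_{a,b}` misses `(a,b)`, then there are two
distinct points `a ≺ a₁ ≺ b₁ ≺ b` with `f_{a₁,b₁} = f_{a₁,a₁}`, support
`F_{a₁,b₁} = F_{a₁,a₁}` contained in `(a,b)`, `b₁` isolated in `F_{a₁,b₁}`,
and `F_{a₁,b₁}` having exactly two components. -/
theorem conicSystem_exists_interior_pair
    (a b : ℝ) (hab : a < b) (hb1 : b < a + 1)
    (I : Set S1) (hI : I = arcCC a b ∨ I = arcCO a b)
    (f : S1 → S1 → S1 → ℕ∞)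
    (hf : IsIntrinsicConicSystem I f)
    (heq : f (pr a) (pr a) = f (pr a) (pr b))
    (hdisj : suppF f (pr a) (pr b) ∩ arcOO a b = ∅) :
    ∃ a₁ b₁ : ℝ, a < a₁ ∧ a₁ < b₁ ∧ b₁ < b ∧
      f (pr a₁) (pr b₁) = f (pr a₁) (pr a₁) ∧
      suppF f (pr a₁) (pr b₁) = suppF f (pr a₁) (pr a₁) ∧
      suppF f (pr a₁) (pr b₁) ⊆ arcOO a b ∧
      IsolatedIn (pr b₁) (suppF f (pr a₁) (pr b₁)) ∧
      TwoComponents (suppF f (pr a₁) (pr b₁)) := by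
  classical
  -- basic facts about I
  have hIoo : ∀ t ∈ Set.Ioo a b, pr t ∈ I := by
    intro t ht
    rcases hI with h | h
    · rw [h]; exact ⟨t, Set.Ioo_subset_Icc_self ht, rfl⟩
    · rw [h]; exact ⟨t, Set.Ioo_subset_Ico_self ht, rfl⟩
  have haI : pr a ∈ I := by
    rcases hI with h | h
    · rw [h]; exact ⟨a, ⟨le_refl a, le_of_lt hab⟩, rfl⟩
    · rw [h]; exact ⟨a, ⟨le_refl a, hab⟩, rfl⟩
  have hbcl : pr b ∈ closure I := by
    rcases hI with h | h
    · exact subset_closure (h ▸ ⟨b, ⟨le_of_lt hab, le_refl b⟩, rfl⟩)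
    · -- b is a limit of points of [a,b)
      have htend : Filter.Tendsto (fun n : ℕ => pr (b + (a - b) / (n + 2)))
          atTop (nhds (pr b)) := pr_tendsto (tendsto_aux b (a - b))
      apply mem_closure_of_tendsto htend
      apply Filter.Eventually.of_forall
      intro n
      have h1 : (a - b) / ((n:ℝ) + 2) < 0 := div_neg_of_neg_of_pos (by linarith) (by positivity)
      have h2 : (b - a) / ((n:ℝ) + 2) ≤ (b - a) / 2 := by
        apply div_le_div_of_nonneg_left (by linarith) (by norm_num)
        have : (0:ℝ) ≤ (n:ℝ) := Nat.cast_nonneg n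
        linarith
      have h3 : (a - b) / ((n:ℝ) + 2) = -((b - a) / ((n:ℝ) + 2)) := by ring
      rw [h]
      exact ⟨b + (a - b) / (n + 2), ⟨by rw [h3]; linarith, by linarith⟩, rfl⟩
  -- window injectivity
  have hwnd : ∀ t ∈ Set.Icc a b, t ∈ Set.Ico a (a + 1) :=
    fun t ht => ⟨ht.1, lt_of_le_of_lt ht.2 hb1⟩
  have hprab : pr a ≠ pr b := by
    intro h
    exact absurd ((pr_inj (hwnd a ⟨le_refl a, le_of_lt hab⟩) (hwnd b ⟨le_of_lt hab, le_refl b⟩)).1 h)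
      (ne_of_lt hab)
  have hdomab : (pr a, pr b) ∈ ConicDom I :=
    ⟨subset_closure haI, hbcl, fun h => absurd h hprab⟩
  -- Setup for stage 1
  have hbT : f (pr a) (pr a) (pr b) ≠ 0 := by
    rw [heq]
    exact (hf.self_mem _ _ hdomab).2
  have St1 : CPK.Setup I f a b :=
    ⟨hf, hab, hb1, hIoo, haI, hbcl, stage0 hf hab hb1 hIoo haI, hbT⟩
  have hTz : ∀ x ∈ Set.Ioo a b, f (pr a) (pr a) (pr x) = 0 := by
    intro x hx
    by_contra h
    have h1 : f (pr a) (pr b) (pr x) ≠ 0 := by rw [← heq]; exact h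
    have h2 : pr x ∈ suppF f (pr a) (pr b) ∩ arcOO a b := ⟨h1, ⟨x, hx, rfl⟩⟩
    rw [hdisj] at h2
    exact h2
  -- Stage 1: find a conic through `a` tangent at some interior point `c`
  obtain ⟨x₁, hx₁, hx₁T, hoc₁⟩ := St1.descend ⟨(a + b)/2, ⟨by linarith, by linarith⟩,
    hTz _ ⟨by linarith, by linarith⟩⟩
  obtain ⟨c, hcK, h4c⟩ := St1.ext4 hx₁ hx₁T hoc₁
  have hcIoo : c ∈ Set.Ioo a b := hcK.1
  have hcI : pr c ∈ I := hIoo c hcIoo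
  have hT1 : f (pr c) (pr c) = f (pr a) (pr x₁) :=
    hf.eq_diag (pr a) (pr x₁) (pr c) (St1.domx hx₁) h4c hcI
  -- Stage 2 setup: the reflected system, with base point -c and anchor -a
  set I' : Set S1 := (fun z : S1 => -z) ⁻¹' I with hI'
  set g : S1 → S1 → S1 → ℕ∞ := fun p q r => f (-p) (-q) (-r) with hg
  have hgf : IsIntrinsicConicSystem I' g := reflect hf
  have gval : ∀ u v w : ℝ, g (pr u) (pr v) (pr w) = f (pr (-u)) (pr (-v)) (pr (-w)) := by
    intro u v w
    simp only [hg, pr_neg]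
  have hswap : ∀ t : ℝ, t ∈ Set.Ioo (-c) (-a) ↔ -t ∈ Set.Ioo a c := by
    intro t
    constructor
    · rintro ⟨h1, h2⟩; exact ⟨by linarith, by linarith⟩
    · rintro ⟨h1, h2⟩; exact ⟨by linarith, by linarith⟩
  have St2 : CPK.Setup I' g (-c) (-a) := by
    refine ⟨hgf, by linarith [hcIoo.1], by linarith [hcIoo.2], ?_, ?_, ?_, ?_, ?_⟩
    · intro t ht
      have h1 : -t ∈ Set.Ioo a c := (hswap t).1 ht
      show -(pr t) ∈ I
      rw [← pr_neg]
      exact hIoo (-t) ⟨h1.1, lt_trans h1.2 hcIoo.2⟩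
    · show -(pr (-c)) ∈ I
      rw [neg_pr]
      exact hcI
    · rw [hI', closure_neg_preimage]
      show -(pr (-a)) ∈ closure I
      rw [neg_pr]
      exact subset_closure haI
    · rw [gval]
      simp only [neg_neg]
      rw [show f (pr c) (pr c) (pr c) = f (pr a) (pr x₁) (pr c) from congrFun hT1 (pr c)]
      exact h4c
    · rw [gval]
      simp only [neg_neg]
      rw [show f (pr c) (pr c) (pr a) = f (pr a) (pr x₁) (pr a) from congrFun hT1 (pr a)]
      rw [St1.mass_a hx₁ hx₁T]
      norm_num
  -- a point of (a,c) not on the tangent conic at c, from isolatedness of a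
  have hx02 : ∃ y₀ ∈ Set.Ioo (-c) (-a), g (pr (-c)) (pr (-c)) (pr y₀) = 0 := by
    obtain ⟨U, hUo, hUm, hUe⟩ := St1.isolated_a hx₁ hx₁T
    have hUopen : IsOpen (pr ⁻¹' U) := hUo.preimage pr_cont
    obtain ⟨ε, hε, hball⟩ := Metric.isOpen_iff.1 hUopen a hUm
    set s := a + min ε (c - a) / 2 with hs
    have hεc : 0 < min ε (c - a) := lt_min hε (by linarith [hcIoo.1])
    have hsIoo : s ∈ Set.Ioo a c := by
      constructor
      · rw [hs]; linarith
      · rw [hs]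
        have : min ε (c - a) ≤ c - a := min_le_right _ _
        linarith
    have hsU : pr s ∈ U := by
      apply hball
      rw [Real.ball_eq_Ioo]
      constructor
      · rw [hs]; linarith [lt_min_iff.1 hεc]
      · rw [hs]
        have : min ε (c - a) ≤ ε := min_le_left _ _
        linarith
    refine ⟨-s, (hswap (-s)).2 (by rw [neg_neg]; exact hsIoo), ?_⟩
    rw [gval]
    simp only [neg_neg]
    rw [show f (pr c) (pr c) (pr s) = f (pr a) (pr x₁) (pr s) from congrFun hT1 (pr s)]
    by_contra h
    have h2 : pr s ∈ U ∩ suppF f (pr a) (pr x₁) := ⟨hsU, h⟩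
    rw [hUe] at h2
    have h3 : s = a := (pr_inj (hwnd s (Set.Ioo_subset_Icc_self
      ⟨hsIoo.1, lt_trans hsIoo.2 hcIoo.2⟩)) (hwnd a ⟨le_refl a, le_of_lt hab⟩)).1 h2
    exact absurd h3 (ne_of_gt hsIoo.1)
  -- Stage 2: descent on the reflected system
  obtain ⟨y', hy', hy'T, hoc₂⟩ := St2.descend hx02
  obtain ⟨r', hr'K, h4r'⟩ := St2.ext4 hy' hy'T hoc₂
  -- translate stage-2 output back to the original system
  have hy'Ioo : -y' ∈ Set.Ioo a c := (hswap y').1 hy'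
  have ha₁Ioo : -r' ∈ Set.Ioo a c := (hswap r').1 hr'K.1
  have hIooab : ∀ t : ℝ, t ∈ Set.Ioo a c → t ∈ Set.Ioo a b :=
    fun t ht => ⟨ht.1, lt_trans ht.2 hcIoo.2⟩
  have h4f : 4 ≤ f (pr c) (pr (-y')) (pr (-r')) := by
    have h := h4r'
    rw [gval] at h
    simpa [neg_neg] using h
  have hdomcy : (pr c, pr (-y')) ∈ ConicDom I :=
    St1.dom_pair (Set.Ioo_subset_Icc_self hcIoo)
      (Set.Ioo_subset_Icc_self (hIooab _ hy'Ioo)) (ne_of_gt hy'Ioo.2)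
  have hfy : f (pr (-r')) (pr (-r')) = f (pr c) (pr (-y')) :=
    hf.eq_diag (pr c) (pr (-y')) (pr (-r')) hdomcy h4f (hIoo _ (hIooab _ ha₁Ioo))
  have hprr'c : pr (-r') ≠ pr c := by
    intro h
    exact absurd ((pr_inj (hwnd _ (Set.Ioo_subset_Icc_self (hIooab _ ha₁Ioo)))
      (hwnd _ (Set.Ioo_subset_Icc_self hcIoo))).1 h) (ne_of_lt ha₁Ioo.2)
  have hdomr'c : (pr (-r'), pr c) ∈ ConicDom I :=
    St1.dom_pair (Set.Ioo_subset_Icc_self (hIooab _ ha₁Ioo))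
      (Set.Ioo_subset_Icc_self hcIoo) (ne_of_lt ha₁Ioo.2)
  have hdomr'd : (pr (-r'), pr (-r')) ∈ ConicDom I :=
    St1.dom_diag (hIoo _ (hIooab _ ha₁Ioo))
  have hfc : f (pr (-r')) (pr c) = f (pr (-r')) (pr (-r')) := by
    apply hf.eq_of_common (pr (-r')) (pr c) (pr (-r')) (pr c) hdomr'c hdomr'd
      (Ne.symm hprr'c) (hf.self_mem _ _ hdomr'c).2
    rw [hfy]
    exact (hf.self_mem _ _ hdomcy).1
  have hmassc : f (pr c) (pr (-y')) (pr c) = 2 := by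
    have h := St2.mass_a hy' hy'T
    rw [gval] at h
    simpa [neg_neg] using h
  have hisoc : IsolatedIn (pr c) (suppF f (pr c) (pr (-y'))) :=
    hf.isolated_of_two _ _ hdomcy hmassc
  have hsupp_sub : ∀ u : S1, f (pr c) (pr (-y')) u ≠ 0 →
      u = pr c ∨ ∃ t ∈ Set.Ioo a c, pr t = u := by
    intro u hu
    have hu' : g (pr (-c)) (pr y') (-u) ≠ 0 := by
      show f (-(pr (-c))) (-(pr y')) (-(-u)) ≠ 0
      rw [neg_pr, neg_neg, ← pr_neg]
      exact hu
    rcases St2.barrier hy' hy'T hu' with h | ⟨t, ht, hpt⟩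
    · left
      have h2 : -(-u) = -(pr (-c)) := by rw [h]
      rwa [neg_neg, neg_pr] at h2
    · right
      refine ⟨-t, (hswap t).1 ht, ?_⟩
      rw [pr_neg, hpt, neg_neg]
  set K2 : Set ℝ := {t | t ∈ Set.Ioo a c ∧ f (pr c) (pr (-y')) (pr t) ≠ 0} with hK2
  have hK2iff : ∀ t : ℝ, t ∈ K2 ↔ -t ∈ KS g (-c) (-a) y' := by
    intro t
    rw [hK2]
    simp only [Set.mem_setOf_eq, KS]
    constructor
    · rintro ⟨h1, h2⟩
      refine ⟨(hswap (-t)).2 (by rwa [neg_neg]), ?_⟩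
      rw [gval]
      simpa [neg_neg] using h2
    · rintro ⟨h1, h2⟩
      rw [gval] at h2
      simp only [neg_neg] at h2
      refine ⟨?_, h2⟩
      have := (hswap (-t)).1 h1
      rwa [neg_neg] at this
  have hK2closed : IsClosed K2 := by
    have : K2 = (fun t : ℝ => -t) ⁻¹' (KS g (-c) (-a) y') := by
      ext t; exact hK2iff t
    rw [this]
    exact (St2.KS_closed hy' hy'T).preimage continuous_neg
  have hK2cpt : IsCompact K2 :=
    IsCompact.of_isClosed_subset isCompact_Icc hK2closed
      (fun t ht => Set.Ioo_subset_Icc_self ht.1)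
  have ha₁K2 : -r' ∈ K2 := by
    rw [hK2iff, neg_neg]
    exact hr'K
  have hK2ne : K2.Nonempty := ⟨-r', ha₁K2⟩
  have hK2oc : K2.OrdConnected := by
    constructor
    intro x1 hx1 x2 hx2 w hw
    rw [hK2iff] at hx1 hx2 ⊢
    exact hoc₂.out hx2 hx1 ⟨neg_le_neg hw.2, neg_le_neg hw.1⟩
  set m := sInf K2 with hm
  set M := sSup K2 with hM
  have hmK : m ∈ K2 := hK2cpt.sInf_mem hK2ne
  have hMK : M ∈ K2 := hK2cpt.sSup_mem hK2ne
  have hK2eq : K2 = Set.Icc m M := by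
    apply Set.Subset.antisymm
    · exact fun t ht => ⟨csInf_le hK2cpt.bddBelow ht, le_csSup hK2cpt.bddAbove ht⟩
    · exact hK2oc.out hmK hMK
  set SS := suppF f (pr c) (pr (-y')) with hSSdef
  set K : Set S1 := pr '' Set.Icc m M with hKdef
  have hcSS : pr c ∈ SS := (hf.self_mem _ _ hdomcy).1
  have hSSeq : SS = {pr c} ∪ K := by
    apply Set.Subset.antisymm
    · intro u hu
      rcases hsupp_sub u hu with h | ⟨t, ht, hpt⟩
      · exact Or.inl h
      · right
        have htK2 : t ∈ K2 := ⟨ht, by rw [hpt]; exact hu⟩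
        exact ⟨t, hK2eq ▸ htK2, hpt⟩
    · rintro u (h | ⟨t, ht, rfl⟩)
      · rw [Set.mem_singleton_iff] at h
        rw [h]
        exact hcSS
      · have htK2 : t ∈ K2 := hK2eq ▸ ht
        exact htK2.2
  have hsupp_eq : suppF f (pr (-r')) (pr c) = SS := by
    rw [hSSdef]
    show {u | f (pr (-r')) (pr c) u ≠ 0} = {u | f (pr c) (pr (-y')) u ≠ 0}
    rw [hfc, hfy]
  -- topology of SS = {pr c} ∪ K
  have hKpre : IsPreconnected K := isPreconnected_Icc.image pr pr_cont.continuousOn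
  have hKS : K ⊆ SS := by rw [hSSeq]; exact Set.subset_union_right
  have hIccIoo : Set.Icc m M ⊆ Set.Ioo a c := by
    intro t ht
    have hm2 : m ∈ Set.Ioo a c := hmK.1
    have hM2 : M ∈ Set.Ioo a c := hMK.1
    exact ⟨lt_of_lt_of_le hm2.1 ht.1, lt_of_le_of_lt ht.2 hM2.2⟩
  have hprcK : pr c ∉ K := by
    rintro ⟨t, ht, hpt⟩
    have htIoo : t ∈ Set.Ioo a c := hIccIoo ht
    exact absurd ((pr_inj (hwnd t (Set.Ioo_subset_Icc_self (hIooab _ htIoo)))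
      (hwnd c (Set.Ioo_subset_Icc_self hcIoo))).1 hpt) (ne_of_lt htIoo.2)
  obtain ⟨U, hUo, hUm, hUe⟩ := id hisoc
  have hsep : ∀ C : Set S1, IsPreconnected C → C ⊆ SS → pr c ∈ C →
      ∀ u ∈ C, u ≠ pr c → False := by
    intro C hC hCS hcC u huC hune
    obtain ⟨w, hwC, hwU, hwV⟩ := hC U {pr c}ᶜ hUo isOpen_compl_singleton
      (fun v _ => by
        by_cases hvc : v = pr c
        · exact Or.inl (hvc ▸ hUm)
        · exact Or.inr hvc)
      ⟨pr c, hcC, hUm⟩ ⟨u, huC, hune⟩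
    have hw2 : w ∈ U ∩ SS := ⟨hwU, hCS hwC⟩
    rw [hSSdef] at hw2
    rw [hUe] at hw2
    exact hwV hw2
  have hcompK : ∀ z ∈ K, connectedComponentIn SS z = K := by
    intro z hz
    apply Set.Subset.antisymm
    · intro u hu
      have hCp := isPreconnected_connectedComponentIn (x := z) (F := SS)
      have hCs := connectedComponentIn_subset SS z
      have hzS := hKS hz
      have hcnot : pr c ∉ connectedComponentIn SS z := by
        intro hcC
        exact hsep _ hCp hCs hcC z (mem_connectedComponentIn hzS)
          (fun h => hprcK (h ▸ hz))
      have huS := hCs hu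
      rw [hSSeq] at huS
      rcases huS with h | h
      · rw [Set.mem_singleton_iff] at h
        exact absurd (h ▸ hu) hcnot
      · exact h
    · exact hKpre.subset_connectedComponentIn hz hKS
  have hcompc : connectedComponentIn SS (pr c) = {pr c} := by
    apply Set.Subset.antisymm
    · intro u hu
      by_contra hne
      exact hsep _ (isPreconnected_connectedComponentIn)
        (connectedComponentIn_subset _ _) (mem_connectedComponentIn hcSS) u hu hne
    · intro u hu
      rw [Set.mem_singleton_iff] at hu
      rw [hu]
      exact mem_connectedComponentIn hcSS
  have ha₁K : pr (-r') ∈ K := ⟨-r', hK2eq ▸ ha₁K2, rfl⟩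
  -- assemble everything
  refine ⟨-r', c, ha₁Ioo.1, ha₁Ioo.2, hcIoo.2, hfc, ?_, ?_, ?_, ?_⟩
  · show suppF f (pr (-r')) (pr c) = suppF f (pr (-r')) (pr (-r'))
    show {u | f (pr (-r')) (pr c) u ≠ 0} = {u | f (pr (-r')) (pr (-r')) u ≠ 0}
    rw [hfc]
  · rw [hsupp_eq, hSSeq]
    rintro u (h | ⟨t, ht, rfl⟩)
    · rw [Set.mem_singleton_iff] at h
      rw [h]
      exact ⟨c, hcIoo, rfl⟩
    · exact ⟨t, hIooab _ (hIccIoo ht), rfl⟩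
  · rw [hsupp_eq]
    exact hisoc
  · rw [hsupp_eq]
    refine ⟨pr (-r'), hKS ha₁K, pr c, hcSS, ?_, ?_⟩
    · rw [hcompK _ ha₁K, hcompc]
      intro h
      exact hprr'c (by rw [← Set.mem_singleton_iff, ← h]; exact ha₁K)
    · intro z hz
      have hz2 := hz
      rw [hSSeq] at hz2
      rcases hz2 with h | h
      · rw [Set.mem_singleton_iff] at h
        right
        rw [h]
      · left
        rw [hcompK _ h, hcompK _ ha₁K]
end
end

section
/- Let I be a closed or half-open arc of S¹ = ℝ/ℤ with endpoints a ≠ b, and let {f_{p,q}}_{(p,q)∈I²_*} be an intrinsic conic system on I. Suppose F_{a,b} ∩ (a,b) = ∅, and that either f_{a,b} = f_{a,a} or f_{a,b} = f_{b,b} (whichever of these equations is meaningful when I is half-open). Then there exists a sextactic point r ∈ (a,b), i.e. a point r of the open arc with f_{p,q}(r) ≥ 6 for some (p,q) ∈ I²_*. -/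
open Filter Topology

noncomputable section

namespace SexTactic


lemma pr_eq_iff {x y : ℝ} : pr x = pr y ↔ ∃ k : ℤ, y = x + k := by
  show ((x : ℝ) : S1) = (y : S1) ↔ _
  rw [QuotientAddGroup.eq_iff_sub_mem, AddSubgroup.mem_zmultiples_iff]
  constructor
  · rintro ⟨k, hk⟩
    rw [zsmul_eq_mul, mul_one] at hk
    exact ⟨-k, by push_cast; linarith⟩
  · rintro ⟨k, rfl⟩
    refine ⟨-k, ?_⟩
    rw [zsmul_eq_mul, mul_one]
    push_cast; ring

lemma pr_add_one (x : ℝ) : pr (x + 1) = pr x := by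
  rw [pr_eq_iff]; exact ⟨-1, by push_cast; ring⟩

lemma pr_sub_one (x : ℝ) : pr (x - 1) = pr x := by
  rw [pr_eq_iff]; exact ⟨1, by push_cast; ring⟩

lemma pr_inj {x y : ℝ} (h1 : x - 1 < y) (h2 : y < x + 1) (he : pr x = pr y) : x = y := by
  rcases pr_eq_iff.1 he with ⟨k, rfl⟩
  have hk1 : (k : ℝ) < 1 := by linarith
  have hk2 : (-1 : ℝ) < (k : ℝ) := by linarith
  have e1 : k < 1 := by exact_mod_cast hk1
  have e2 : -1 < k := by exact_mod_cast hk2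
  have : k = 0 := by omega
  simp [this]

lemma pr_ne {x y : ℝ} (h1 : x < y) (h2 : y < x + 1) : pr x ≠ pr y := fun he =>
  absurd (pr_inj (by linarith) h2 he) (by linarith)

lemma continuous_pr : Continuous pr := continuous_quotient_mk'

lemma tendsto_pr {u : ℕ → ℝ} {x : ℝ} (h : Tendsto u atTop (nhds x)) :
    Tendsto (fun n => pr (u n)) atTop (nhds (pr x)) :=
  (continuous_pr.tendsto x).comp h

/-- every point of the circle has a representative in `[t, t+1)`. -/
lemma exists_rep (r : S1) (t : ℝ) : ∃ ζ : ℝ, t ≤ ζ ∧ ζ < t + 1 ∧ pr ζ = r := by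
  induction r using QuotientAddGroup.induction_on with
  | H x =>
    refine ⟨t + Int.fract (x - t), by simp [Int.fract_nonneg], by
      have := Int.fract_lt_one (x - t); linarith, ?_⟩
    show pr _ = pr x
    rw [pr_eq_iff]
    refine ⟨⌊x - t⌋, ?_⟩
    rw [Int.fract]; push_cast; ring

lemma tendsto_seq (x c : ℝ) : Tendsto (fun n : ℕ => x + c / (n + 2)) atTop (nhds x) := by
  have h2 : Tendsto (fun n : ℕ => ((n : ℝ) + 2)) atTop atTop :=
    tendsto_atTop_add_const_right _ 2 tendsto_natCast_atTop_atTop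
  have : Tendsto (fun n : ℕ => c / (n + 2)) atTop (nhds 0) :=
    Tendsto.div_atTop tendsto_const_nhds h2
  simpa using tendsto_const_nhds.add this

lemma exists_seq_tendsto_sInf' {S : Set ℝ} (hne : S.Nonempty) (hbd : BddBelow S) :
    ∃ w : ℕ → ℝ, (∀ n, w n ∈ S) ∧ Tendsto w atTop (nhds (sInf S)) := by
  have h : ∀ n : ℕ, ∃ z ∈ S, z < sInf S + 1 / (n + 1) := by
    intro n
    have hpos : (0:ℝ) < 1 / (n + 1) := by positivity
    obtain ⟨z, hz, hz2⟩ := Real.lt_sInf_add_pos hne hpos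
    exact ⟨z, hz, hz2⟩
  choose w hw hw2 using h
  refine ⟨w, hw, ?_⟩
  have hlow : ∀ n, sInf S ≤ w n := fun n => csInf_le hbd (hw n)
  have h1 : Tendsto (fun n : ℕ => sInf S + 1 / (n + 1)) atTop (nhds (sInf S)) := by
    have h2 : Tendsto (fun n : ℕ => ((n : ℝ) + 1)) atTop atTop :=
      tendsto_atTop_add_const_right _ 1 tendsto_natCast_atTop_atTop
    have : Tendsto (fun n : ℕ => 1 / ((n:ℝ) + 1)) atTop (nhds 0) :=
      Tendsto.div_atTop tendsto_const_nhds h2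
    simpa using tendsto_const_nhds.add this
  exact tendsto_of_tendsto_of_tendsto_of_le_of_le tendsto_const_nhds h1 hlow (fun n => le_of_lt (hw2 n))

lemma exists_seq_tendsto_sSup' {S : Set ℝ} (hne : S.Nonempty) (hbd : BddAbove S) :
    ∃ w : ℕ → ℝ, (∀ n, w n ∈ S) ∧ Tendsto w atTop (nhds (sSup S)) := by
  have h : ∀ n : ℕ, ∃ z ∈ S, sSup S - 1 / (n + 1) < z := by
    intro n
    have hpos : (0:ℝ) < 1 / (n + 1) := by positivity
    obtain ⟨z, hz, hz2⟩ := Real.add_neg_lt_sSup hne (ε := -(1/(n+1))) (by linarith)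
    exact ⟨z, hz, by linarith⟩
  choose w hw hw2 using h
  refine ⟨w, hw, ?_⟩
  have hup : ∀ n, w n ≤ sSup S := fun n => le_csSup hbd (hw n)
  have h1 : Tendsto (fun n : ℕ => sSup S - 1 / (n + 1)) atTop (nhds (sSup S)) := by
    have h2 : Tendsto (fun n : ℕ => ((n : ℝ) + 1)) atTop atTop :=
      tendsto_atTop_add_const_right _ 1 tendsto_natCast_atTop_atTop
    have : Tendsto (fun n : ℕ => 1 / ((n:ℝ) + 1)) atTop (nhds 0) :=
      Tendsto.div_atTop tendsto_const_nhds h2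
    simpa using tendsto_const_nhds.sub this
  exact tendsto_of_tendsto_of_tendsto_of_le_of_le h1 tendsto_const_nhds (fun n => le_of_lt (hw2 n)) hup



/-- Working context for the main development. -/
structure Ctx where
  a : ℝ
  b : ℝ
  hab : a < b
  hb1 : b < a + 1
  I : Set S1
  f : S1 → S1 → S1 → ℕ∞
  hf : IsIntrinsicConicSystem I f
  hIi : ∀ z : ℝ, a < z → z < b → pr z ∈ I
  hIc : ∀ z : ℝ, a ≤ z → z ≤ b → pr z ∈ closure I
  hN : ∀ p q : S1, (p, q) ∈ ConicDom I → ∀ c : ℝ, a < c → c < b → ¬ (6 ≤ f p q (pr c))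

namespace Ctx

variable (C : Ctx)

lemma two_le {p q : S1} (hdom : (p, q) ∈ ConicDom C.I) {r : S1}
    (h : C.f p q r ≠ 0) : 2 ≤ C.f p q r := by
  rcases C.hf.even_values p q r hdom with h1 | ⟨k, h1⟩
  · rw [h1]; exact le_top
  · rw [h1] at h ⊢
    have hk : k ≠ 0 := by rintro rfl; simp at h
    have : (2 : ℕ) ≤ 2 * k := by omega
    exact_mod_cast Nat.cast_le.2 this

lemma four_le {p q : S1} (hdom : (p, q) ∈ ConicDom C.I) {r : S1}
    (h : 2 < C.f p q r) : 4 ≤ C.f p q r := by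
  rcases C.hf.even_values p q r hdom with h1 | ⟨k, h1⟩
  · rw [h1]; exact le_top
  · rw [h1] at h ⊢
    have h2 : (2 : ℕ) < 2 * k := by exact_mod_cast h
    have : (4 : ℕ) ≤ 2 * k := by omega
    exact_mod_cast Nat.cast_le.2 this

lemma six_le {p q : S1} (hdom : (p, q) ∈ ConicDom C.I) {r : S1}
    (h : 4 < C.f p q r) : 6 ≤ C.f p q r := by
  rcases C.hf.even_values p q r hdom with h1 | ⟨k, h1⟩
  · rw [h1]; exact le_top
  · rw [h1] at h ⊢
    have h2 : (4 : ℕ) < 2 * k := by exact_mod_cast h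
    have : (6 : ℕ) ≤ 2 * k := by omega
    exact_mod_cast Nat.cast_le.2 this

lemma le_four {p q : S1} (hdom : (p, q) ∈ ConicDom C.I) {r : S1}
    (h : ¬ (6 ≤ C.f p q r)) : C.f p q r ≤ 4 := by
  by_contra h4
  exact h (C.six_le hdom (lt_of_not_ge h4))

lemma le_two {p q : S1} (hdom : (p, q) ∈ ConicDom C.I) {r : S1}
    (h : ¬ (4 ≤ C.f p q r)) : C.f p q r ≤ 2 := by
  by_contra h2
  exact h (C.four_le hdom (lt_of_not_ge h2))

lemma mem_closure {z : ℝ} (h1 : C.a ≤ z) (h2 : z ≤ C.b) : pr z ∈ closure C.I :=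
  C.hIc z h1 h2

lemma dom_pair {x y : ℝ} (hx1 : C.a ≤ x) (hx2 : x ≤ C.b) (hy1 : C.a ≤ y) (hy2 : y ≤ C.b)
    (hne : pr x ≠ pr y) : (pr x, pr y) ∈ ConicDom C.I :=
  ⟨C.mem_closure hx1 hx2, C.mem_closure hy1 hy2, fun h => absurd h hne⟩

lemma dom_diag {x : ℝ} (hx1 : C.a < x) (hx2 : x < C.b) : (pr x, pr x) ∈ ConicDom C.I :=
  ⟨C.mem_closure hx1.le hx2.le, C.mem_closure hx1.le hx2.le, fun _ => C.hIi x hx1 hx2⟩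

/-- distinctness of two reps in a unit window -/
lemma prne {x y : ℝ} (h1 : x < y) (h2 : y - x < 1) : pr x ≠ pr y :=
  pr_ne h1 (by linarith)

/-- Main A6 wrapper, with real sequences. -/
lemma jump {pn qn : ℕ → S1} {p q : S1} (hdom : ∀ n, (pn n, qn n) ∈ ConicDom C.I)
    (hpq : (p, q) ∈ ConicDom C.I) (hp : Tendsto pn atTop (nhds p)) (hq : Tendsto qn atTop (nhds q))
    {u v : ℕ → ℝ} {r : ℝ} (hra : C.a ≤ r) (hrb : r ≤ C.b)
    (hu : ∀ n, C.a ≤ u n ∧ u n ≤ C.b ∧ C.f (pn n) (qn n) (pr (u n)) ≠ 0)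
    (hv : ∀ n, C.a ≤ v n ∧ v n ≤ C.b ∧ C.f (pn n) (qn n) (pr (v n)) ≠ 0)
    (hur : Tendsto u atTop (nhds r)) (hvr : Tendsto v atTop (nhds r))
    (k₁ k₂ : ℕ)
    (hk₁ : ∀ n, (k₁ : ℕ∞) ≤ C.f (pn n) (qn n) (pr (u n)))
    (hk₂ : ∀ n, (k₂ : ℕ∞) ≤ C.f (pn n) (qn n) (pr (v n))) :
    ((max k₁ k₂ : ℕ) : ℕ∞) ≤ C.f p q (pr r) ∧
      ((∀ n, pr (u n) ≠ pr (v n)) → ((max k₁ k₂ : ℕ) : ℕ∞) < C.f p q (pr r)) := by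
  have := C.hf.limit_mult pn qn (fun n => pr (u n)) (fun n => pr (v n)) p q (pr r) k₁ k₂
    hdom hpq hp hq
    (fun n => ⟨C.mem_closure (hu n).1 (hu n).2.1, (hu n).2.2⟩)
    (fun n => ⟨C.mem_closure (hv n).1 (hv n).2.1, (hv n).2.2⟩)
    (C.mem_closure hra hrb) (tendsto_pr hur) (tendsto_pr hvr) hk₁ hk₂
  exact this

/-- L1 : diagonal multiplicity at least 4. -/
lemma diag_four {x : ℝ} (hx1 : C.a ≤ x) (hx2 : x ≤ C.b)
    (hdom : (pr x, pr x) ∈ ConicDom C.I) : 4 ≤ C.f (pr x) (pr x) (pr x) := by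
  -- approach x from one side within (a,b)
  obtain ⟨u, hu, hten⟩ : ∃ u : ℕ → ℝ, (∀ n, C.a < u n ∧ u n < C.b ∧ u n ≠ x ∧ |u n - x| < 1) ∧
      Tendsto u atTop (nhds x) := by
    rcases lt_or_ge x C.b with h | h
    · refine ⟨fun n => x + (C.b - x) / (n + 2), fun n => ?_, tendsto_seq x _⟩
      have hp : (0:ℝ) < (C.b - x) / (n + 2) := by
        apply div_pos (by linarith) (by positivity)
      have hq : (C.b - x) / (n + 2) < C.b - x := by
        apply div_lt_self (by linarith) (by push_cast; linarith [Nat.cast_nonneg (α := ℝ) n])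
      constructor
      · linarith
      refine ⟨by linarith, by intro h'; nlinarith, ?_⟩
      rw [abs_lt]; constructor <;> [linarith; nlinarith [C.hab, C.hb1]]
    · -- x = b (since x ≤ b ≤ x), approach from below
      have hxb : x = C.b := le_antisymm hx2 (by linarith)
      refine ⟨fun n => x + (C.a - x) / (n + 2), fun n => ?_, tendsto_seq x _⟩
      have hax : C.a - x < 0 := by linarith [C.hab]
      have hp : (C.a - x) / (n + 2) < 0 := by
        apply div_neg_of_neg_of_pos hax (by positivity)
      have hq : C.a - x < (C.a - x) / (n + 2) := by
        rw [div_eq_mul_inv]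
        nlinarith [inv_pos.2 (show (0:ℝ) < (n:ℝ) + 2 by positivity),
          (show ((n:ℝ)+2)⁻¹ ≤ 1/2 by rw [inv_le_comm₀ (by positivity) (by norm_num)]; push_cast; linarith [Nat.cast_nonneg (α := ℝ) n])]
      constructor
      · linarith [C.hab]
      refine ⟨by linarith, by intro h'; nlinarith, ?_⟩
      rw [abs_lt]; constructor <;> [nlinarith [C.hb1, C.hab]; linarith]
  have hdomn : ∀ n, (pr x, pr (u n)) ∈ ConicDom C.I := by
    intro n
    apply C.dom_pair hx1 hx2 (hu n).1.le (hu n).2.1.le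
    intro he
    exact (hu n).2.2.1 (pr_inj (by have := (hu n).2.2.2; rw [abs_lt] at this; linarith)
      (by have := (hu n).2.2.2; rw [abs_lt] at this; linarith) he).symm
  have hsupp : ∀ n, C.f (pr x) (pr (u n)) (pr (u n)) ≠ 0 := fun n =>
    (C.hf.self_mem _ _ (hdomn n)).2
  have hself : ∀ n, C.f (pr x) (pr (u n)) (pr x) ≠ 0 := fun n =>
    (C.hf.self_mem _ _ (hdomn n)).1
  have h := C.jump (pn := fun _ => pr x) (qn := fun n => pr (u n)) hdomn hdom
    tendsto_const_nhds (tendsto_pr hten) (u := u) (v := fun _ => x) hx1 hx2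
    (fun n => ⟨(hu n).1.le, (hu n).2.1.le, hsupp n⟩)
    (fun n => ⟨hx1, hx2, hself n⟩) hten tendsto_const_nhds 2 2
    (fun n => C.two_le (hdomn n) (hsupp n))
    (fun n => C.two_le (hdomn n) (hself n))
  have hne : ∀ n, pr (u n) ≠ pr x := by
    intro n he
    exact (hu n).2.2.1 (pr_inj (by have := (hu n).2.2.2; rw [abs_lt] at this; linarith)
      (by have := (hu n).2.2.2; rw [abs_lt] at this; linarith) he.symm).symm
  have := h.2 hne
  apply C.four_le hdom
  simpa using this

end Ctx
end SexTactic

namespace SexTactic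
namespace Ctx

variable (C : Ctx)

lemma ne_zero_of_two_le {v : ℕ∞} (h : 2 ≤ v) : v ≠ 0 := by
  intro h0; rw [h0] at h; simp at h

/-- `(t, m)`: `m` is the first point of the diagonal support above `t`. -/
def GoodUp (t m : ℝ) : Prop :=
  C.a < t ∧ t < m ∧ m < C.b ∧ C.f (pr t) (pr t) (pr m) ≠ 0 ∧
    ∀ z, t < z → z < m → C.f (pr t) (pr t) (pr z) = 0

/-- `(t, m)`: `t` is the last point of the diagonal support of `m` below `m`. -/
def GoodDn (t m : ℝ) : Prop :=
  C.a < t ∧ t < m ∧ m < C.b ∧ C.f (pr m) (pr m) (pr t) ≠ 0 ∧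
    ∀ z, t < z → z < m → C.f (pr m) (pr m) (pr z) = 0

lemma hN' {x : ℝ} (hx1 : C.a < x) (hx2 : x < C.b) {p q : S1}
    (hdom : (p, q) ∈ ConicDom C.I) (h : 4 < C.f p q (pr x)) : False :=
  C.hN p q hdom x hx1 hx2 (C.six_le hdom h)

lemma companion_above {t w : ℝ} (ht : C.a < t) (htw : t < w) (hwb : w < C.b)
    (hw : C.f (pr t) (pr t) (pr w) ≠ 0) : ∃ m, t < m ∧ m ≤ w ∧ C.GoodUp t m := by
  have htb : t < C.b := lt_trans htw hwb
  have hdomT : (pr t, pr t) ∈ ConicDom C.I := C.dom_diag ht htb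
  set S : Set ℝ := {z | (t < z ∧ z ≤ w) ∧ C.f (pr t) (pr t) (pr z) ≠ 0} with hS
  have hSne : S.Nonempty := ⟨w, ⟨htw, le_refl _⟩, hw⟩
  have hSbd : BddBelow S := ⟨t, fun z hz => hz.1.1.le⟩
  set m := sInf S with hm
  have hml : t ≤ m := le_csInf hSne (fun z hz => hz.1.1.le)
  have hmu : m ≤ w := csInf_le hSbd ⟨⟨htw, le_refl _⟩, hw⟩
  obtain ⟨wn, hwn, hwten⟩ := exists_seq_tendsto_sInf' hSne hSbd
  have hdomconst : ∀ _ : ℕ, (pr t, pr t) ∈ ConicDom C.I := fun _ => hdomT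
  have hwnb : ∀ n, C.a ≤ wn n ∧ wn n ≤ C.b ∧ C.f (pr t) (pr t) (pr (wn n)) ≠ 0 := by
    intro n
    exact ⟨le_trans ht.le (hwn n).1.1.le, le_trans (hwn n).1.2 hwb.le, (hwn n).2⟩
  have hjump := C.jump (pn := fun _ => pr t) (qn := fun _ => pr t) hdomconst hdomT
    tendsto_const_nhds tendsto_const_nhds (u := wn) (v := wn)
    (le_trans ht.le hml) (le_trans hmu hwb.le) hwnb hwnb hwten hwten 2 2
    (fun n => C.two_le hdomT (hwnb n).2.2) (fun n => C.two_le hdomT (hwnb n).2.2)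
  have hfm : 2 ≤ C.f (pr t) (pr t) (pr m) := by simpa using hjump.1
  rcases eq_or_lt_of_le hml with hmt | hmt
  · -- m = t : strict jump with the diagonal point, multiplicity ≥ 4 there
    exfalso
    have hselft : C.f (pr t) (pr t) (pr t) ≠ 0 :=
      ne_zero_of_two_le (le_trans (by norm_num) (C.diag_four ht.le htb.le hdomT))
    have hj2 := C.jump (pn := fun _ => pr t) (qn := fun _ => pr t) hdomconst hdomT
      tendsto_const_nhds tendsto_const_nhds (u := wn) (v := fun _ => t)
      ht.le htb.le hwnb (fun _ => ⟨ht.le, htb.le, hselft⟩)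
      (hmt ▸ hwten) tendsto_const_nhds 2 4
      (fun n => C.two_le hdomT (hwnb n).2.2)
      (fun n => C.diag_four ht.le htb.le hdomT)
    have hne : ∀ n, pr (wn n) ≠ pr t := by
      intro n
      refine (prne (hwn n).1.1 ?_).symm
      have := (hwn n).1.2
      have := C.hb1; have := C.hab
      linarith
    have := hj2.2 hne
    exact C.hN' ht htb hdomT (by simpa using this)
  · refine ⟨m, hmt, hmu, ht, hmt, lt_of_le_of_lt hmu hwb, ne_zero_of_two_le hfm, ?_⟩
    intro z hz1 hz2
    by_contra hzne
    have hzS : z ∈ S := ⟨⟨hz1, le_trans hz2.le hmu⟩, hzne⟩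
    exact absurd (csInf_le hSbd hzS) (not_le.2 hz2)

lemma companion_below {lo z : ℝ} (hlo : C.a < lo) (hloz : lo < z) (hzb : z < C.b)
    (hne : C.f (pr z) (pr z) (pr lo) ≠ 0) : ∃ u, lo ≤ u ∧ u < z ∧ C.GoodDn u z := by
  have hza : C.a < z := lt_trans hlo hloz
  have hdomZ : (pr z, pr z) ∈ ConicDom C.I := C.dom_diag hza hzb
  set S : Set ℝ := {x | (lo ≤ x ∧ x < z) ∧ C.f (pr z) (pr z) (pr x) ≠ 0} with hS
  have hSne : S.Nonempty := ⟨lo, ⟨le_refl _, hloz⟩, hne⟩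
  have hSbd : BddAbove S := ⟨z, fun x hx => hx.1.2.le⟩
  set u := sSup S with hu
  have hul : lo ≤ u := le_csSup hSbd ⟨⟨le_refl _, hloz⟩, hne⟩
  have huu : u ≤ z := csSup_le hSne (fun x hx => hx.1.2.le)
  obtain ⟨wn, hwn, hwten⟩ := exists_seq_tendsto_sSup' hSne hSbd
  have hdomconst : ∀ _ : ℕ, (pr z, pr z) ∈ ConicDom C.I := fun _ => hdomZ
  have hwnb : ∀ n, C.a ≤ wn n ∧ wn n ≤ C.b ∧ C.f (pr z) (pr z) (pr (wn n)) ≠ 0 := by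
    intro n
    exact ⟨le_trans hlo.le (hwn n).1.1, le_trans (hwn n).1.2.le hzb.le, (hwn n).2⟩
  have hjump := C.jump (pn := fun _ => pr z) (qn := fun _ => pr z) hdomconst hdomZ
    tendsto_const_nhds tendsto_const_nhds (u := wn) (v := wn)
    (le_trans hlo.le hul) (le_trans huu hzb.le) hwnb hwnb hwten hwten 2 2
    (fun n => C.two_le hdomZ (hwnb n).2.2) (fun n => C.two_le hdomZ (hwnb n).2.2)
  have hfu : 2 ≤ C.f (pr z) (pr z) (pr u) := by simpa using hjump.1
  rcases eq_or_lt_of_le huu with huz | huz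
  · exfalso
    have hselfz : C.f (pr z) (pr z) (pr z) ≠ 0 :=
      ne_zero_of_two_le (le_trans (by norm_num) (C.diag_four hza.le hzb.le hdomZ))
    have hj2 := C.jump (pn := fun _ => pr z) (qn := fun _ => pr z) hdomconst hdomZ
      tendsto_const_nhds tendsto_const_nhds (u := wn) (v := fun _ => z)
      hza.le hzb.le hwnb (fun _ => ⟨hza.le, hzb.le, hselfz⟩)
      (huz ▸ hwten) tendsto_const_nhds 2 4
      (fun n => C.two_le hdomZ (hwnb n).2.2)
      (fun n => C.diag_four hza.le hzb.le hdomZ)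
    have hnee : ∀ n, pr (wn n) ≠ pr z := by
      intro n
      refine prne (hwn n).1.2 ?_
      have := (hwn n).1.1
      have := C.hb1; have := C.hab
      linarith
    have := hj2.2 hnee
    exact C.hN' hza hzb hdomZ (by simpa using this)
  · refine ⟨u, hul, huz, lt_of_lt_of_le hlo hul, huz, hzb, ne_zero_of_two_le hfu, ?_⟩
    intro x hx1 hx2
    by_contra hxne
    have hxS : x ∈ S := ⟨⟨le_trans hul hx1.le, hx2⟩, hxne⟩
    exact absurd (le_csSup hSbd hxS) (not_le.2 hx1)

end Ctx
end SexTactic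

namespace SexTactic
namespace Ctx

variable (C : Ctx)

section Arena

variable {t m : ℝ}

/-- Domain of an anchored pair. -/
lemma domTS (ht : C.a < t) (htm : t < m) (hmb : m ≤ C.b) {s : ℝ} (hs : t < s) (hsm : s ≤ m) :
    (pr t, pr s) ∈ ConicDom C.I := by
  refine C.dom_pair ht.le (le_trans htm.le hmb) (lt_trans ht hs).le (le_trans hsm hmb) ?_
  exact prne hs (by have := C.hb1; have := C.hab; linarith)

/-- A3: the pair `(t,m)` carries the same function as the diagonal at `t`. -/
lemma eq_TM (ht : C.a < t) (htm : t < m) (hmb : m ≤ C.b)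
    (hcomp : C.f (pr t) (pr t) (pr m) ≠ 0) :
    C.f (pr t) (pr m) = C.f (pr t) (pr t) := by
  have hdomTM := C.domTS ht htm hmb htm (le_refl m)
  have hdomTT := C.dom_diag ht (lt_of_lt_of_le htm hmb)
  have hne : pr m ≠ pr t := (prne htm (by have := C.hb1; have := C.hab; linarith)).symm
  exact C.hf.eq_of_common (pr t) (pr m) (pr t) (pr m) hdomTM hdomTT hne
    (C.hf.self_mem _ _ hdomTM).2 hcomp

/-- D1: the support of an anchored pair is confined to `[t, m]`. -/
lemma confine (ht : C.a < t) (htm : t < m) (hmb : m ≤ C.b)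
    (hcomp : C.f (pr t) (pr t) (pr m) ≠ 0)
    (hgap : ∀ z, t < z → z < m → C.f (pr t) (pr t) (pr z) = 0)
    {s : ℝ} (hs : t < s) (hsm : s < m)
    {ζ : ℝ} (hζ1 : m < ζ) (hζ2 : ζ < t + 1) : C.f (pr t) (pr s) (pr ζ) = 0 := by
  by_contra hne
  have hdomTT := C.dom_diag ht (lt_of_lt_of_le htm hmb)
  have hdomTS := C.domTS ht htm hmb hs hsm.le
  have hchain : chain6 (pr t) (pr t) (pr t) (pr s) (pr m) (pr ζ) :=
    ⟨t, t, t, s, m, ζ, rfl, rfl, rfl, rfl, rfl, rfl, le_refl t, le_refl t, hs.le, hsm, hζ1, hζ2⟩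
  have heq := C.hf.eq_of_chain (pr t) (pr t) (pr t) (pr s) (pr m) (pr ζ)
    hdomTT hdomTS hcomp hne (Or.inl hchain)
    (fun _ => C.diag_four ht.le (le_trans htm.le hmb) hdomTT)
    (fun h => absurd h (prne hs (by have := C.hb1; have := C.hab; linarith)))
  have : C.f (pr t) (pr t) (pr s) ≠ 0 := by
    rw [heq]; exact (C.hf.self_mem _ _ hdomTS).2
  exact this (hgap s hs hsm)

/-- D2: `m` is not in the support of an anchored pair. -/
lemma m_zero (ht : C.a < t) (htm : t < m) (hmb : m ≤ C.b)
    (hcomp : C.f (pr t) (pr t) (pr m) ≠ 0)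
    (hgap : ∀ z, t < z → z < m → C.f (pr t) (pr t) (pr z) = 0)
    {s : ℝ} (hs : t < s) (hsm : s < m) : C.f (pr t) (pr s) (pr m) = 0 := by
  by_contra hne
  have hdomTM := C.domTS ht htm hmb htm (le_refl m)
  have hdomTS := C.domTS ht htm hmb hs hsm.le
  have hnemt : pr m ≠ pr t := (prne htm (by have := C.hb1; have := C.hab; linarith)).symm
  have heq := C.hf.eq_of_common (pr t) (pr s) (pr m) (pr m) hdomTS hdomTM hnemt
    hne (C.hf.self_mem _ _ hdomTM).2
  rw [C.eq_TM ht htm hmb hcomp] at heq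
  have : C.f (pr t) (pr t) (pr s) ≠ 0 := by
    rw [← heq]; exact (C.hf.self_mem _ _ hdomTS).2
  exact this (hgap s hs hsm)

/-- D3: the anchor has multiplicity exactly two for anchored pairs. -/
lemma anchor_two (ht : C.a < t) (htm : t < m) (hmb : m ≤ C.b)
    (hgap : ∀ z, t < z → z < m → C.f (pr t) (pr t) (pr z) = 0)
    {s : ℝ} (hs : t < s) (hsm : s < m) :
    C.f (pr t) (pr s) (pr t) ≠ 0 ∧ ¬ (4 ≤ C.f (pr t) (pr s) (pr t)) := by
  have hdomTS := C.domTS ht htm hmb hs hsm.le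
  refine ⟨(C.hf.self_mem _ _ hdomTS).1, ?_⟩
  intro h4
  have htI : pr t ∈ C.I := C.hIi t ht (lt_of_lt_of_le htm hmb)
  have heq := C.hf.eq_diag (pr t) (pr s) (pr t) hdomTS h4 htI
  have : C.f (pr t) (pr t) (pr s) ≠ 0 := by
    rw [heq]; exact (C.hf.self_mem _ _ hdomTS).2
  exact this (hgap s hs hsm)

/-- C4: no interior point of `(t, m)` has multiplicity `≥ 4` for an anchored pair
(otherwise a strictly smaller good pair spawns). -/
lemma no_four (ht : C.a < t) (htm : t < m) (hmb : m ≤ C.b)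
    (hspawn : ∀ u v, t ≤ u → v < m → C.GoodDn u v → False)
    {s : ℝ} (hs : t < s) (hsm : s < m)
    {z : ℝ} (hz : t < z) (hzm : z < m) : ¬ (4 ≤ C.f (pr t) (pr s) (pr z)) := by
  intro h4
  have hdomTS := C.domTS ht htm hmb hs hsm.le
  have hzb : z < C.b := lt_of_lt_of_le hzm hmb
  have hzI : pr z ∈ C.I := C.hIi z (lt_trans ht hz) hzb
  have heq := C.hf.eq_diag (pr t) (pr s) (pr z) hdomTS h4 hzI
  have hzt : C.f (pr z) (pr z) (pr t) ≠ 0 := by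
    rw [heq]; exact (C.hf.self_mem _ _ hdomTS).1
  obtain ⟨u, hu1, hu2, hGood⟩ := C.companion_below ht hz hzb hzt
  exact hspawn u z hu1 hzm hGood

/-- A3 within the arena: class equality. -/
lemma class_eq (ht : C.a < t) (htm : t < m) (hmb : m ≤ C.b)
    {s z : ℝ} (hs : t < s) (hsm : s < m) (hz : t < z) (hzm : z < m)
    (hzs : C.f (pr t) (pr s) (pr z) ≠ 0) :
    C.f (pr t) (pr z) = C.f (pr t) (pr s) := by
  have hdomTS := C.domTS ht htm hmb hs hsm.le
  have hdomTZ := C.domTS ht htm hmb hz hzm.le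
  have hnezt : pr z ≠ pr t := (prne hz (by have := C.hb1; have := C.hab; linarith)).symm
  exact C.hf.eq_of_common (pr t) (pr z) (pr s) (pr z) hdomTZ hdomTS hnezt
    (C.hf.self_mem _ _ hdomTZ).2 hzs

/-- the noncrossing A4 instance within the arena. -/
lemma noncross (ht : C.a < t) (htm : t < m) (hmb : m ≤ C.b)
    {w x y z : ℝ} (hw : t < w) (hwm : w < m) (hx : t < x) (hxm : x < m)
    (hwx : w ≤ x) (hxy : x < y) (hyz : y < z) (hzm : z < m)
    (hyW : C.f (pr t) (pr w) (pr y) ≠ 0) (hzX : C.f (pr t) (pr x) (pr z) ≠ 0) :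
    C.f (pr t) (pr w) = C.f (pr t) (pr x) := by
  have hdomTW := C.domTS ht htm hmb hw hwm.le
  have hdomTX := C.domTS ht htm hmb hx hxm.le
  have hchain : chain6 (pr t) (pr t) (pr w) (pr x) (pr y) (pr z) :=
    ⟨t, t, w, x, y, z, rfl, rfl, rfl, rfl, rfl, rfl, le_refl t, hw.le, hwx, hxy, hyz,
      by have := C.hb1; have := C.hab; linarith⟩
  exact C.hf.eq_of_chain (pr t) (pr t) (pr w) (pr x) (pr y) (pr z)
    hdomTW hdomTX hyW hzX (Or.inl hchain)
    (fun h => absurd h (prne hw (by have := C.hb1; have := C.hab; linarith)))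
    (fun h => absurd h (prne hx (by have := C.hb1; have := C.hab; linarith)))

end Arena
end Ctx
end SexTactic

namespace SexTactic
namespace Ctx

variable (C : Ctx)

/-- A7 ⇒ the總 sum of any finset is dominated when the support has ≤ 2 points with values ≤ 2. -/
lemma sum_bound {p q : S1} (hdom : (p, q) ∈ ConicDom C.I) {r₁ r₂ : S1} (hne : r₁ ≠ r₂)
    (hsupp : ∀ r : S1, C.f p q r ≠ 0 → r = r₁ ∨ r = r₂)
    (h1 : C.f p q r₁ ≤ 2) (h2 : C.f p q r₂ ≤ 2) : False := by
  obtain ⟨fs, h6⟩ := C.hf.total_six p q hdom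
  have hsub : fs ∩ {r₁, r₂} ⊆ fs := Finset.inter_subset_left
  have hzero : ∀ x ∈ fs, x ∉ fs ∩ {r₁, r₂} → C.f p q x = 0 := by
    intro x hx hnx
    by_contra hxx
    rcases hsupp x hxx with rfl | rfl
    · exact hnx (Finset.mem_inter.2 ⟨hx, by simp⟩)
    · exact hnx (Finset.mem_inter.2 ⟨hx, by simp⟩)
  have heq : ∑ r ∈ fs ∩ {r₁, r₂}, C.f p q r = ∑ r ∈ fs, C.f p q r :=
    Finset.sum_subset hsub hzero
  have hle : ∑ r ∈ fs ∩ {r₁, r₂}, C.f p q r ≤ ∑ r ∈ ({r₁, r₂} : Finset S1), C.f p q r :=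
    Finset.sum_le_sum_of_subset Finset.inter_subset_right
  have hpair : ∑ r ∈ ({r₁, r₂} : Finset S1), C.f p q r = C.f p q r₁ + C.f p q r₂ :=
    Finset.sum_pair hne
  have : (6 : ℕ∞) ≤ 2 + 2 := by
    calc (6:ℕ∞) ≤ ∑ r ∈ fs, C.f p q r := h6
    _ = ∑ r ∈ fs ∩ {r₁, r₂}, C.f p q r := heq.symm
    _ ≤ C.f p q r₁ + C.f p q r₂ := hle.trans_eq hpair
    _ ≤ 2 + 2 := add_le_add h1 h2
  norm_num at this

/-- every anchored pair on a good pair has a second class element. -/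
lemma second_elem {t m : ℝ} (ht : C.a < t) (htm : t < m) (hmb : m ≤ C.b)
    (hcomp : C.f (pr t) (pr t) (pr m) ≠ 0)
    (hgap : ∀ z, t < z → z < m → C.f (pr t) (pr t) (pr z) = 0)
    (hspawn : ∀ u v, t ≤ u → v < m → C.GoodDn u v → False)
    {s : ℝ} (hs : t < s) (hsm : s < m) :
    ∃ z, t < z ∧ z < m ∧ z ≠ s ∧ C.f (pr t) (pr s) (pr z) ≠ 0 := by
  by_contra hno
  push_neg at hno
  have hdomTS := C.domTS ht htm hmb hs hsm.le
  have hsupp : ∀ r : S1, C.f (pr t) (pr s) r ≠ 0 → r = pr t ∨ r = pr s := by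
    intro r hr
    obtain ⟨ζ, hζ1, hζ2, rfl⟩ := exists_rep r t
    rcases eq_or_lt_of_le hζ1 with h | h
    · exact Or.inl (by rw [← h])
    rcases lt_trichotomy ζ m with h2 | h2 | h2
    · rcases eq_or_ne ζ s with rfl | hne
      · exact Or.inr rfl
      · exact absurd (hno ζ h h2 hne) hr
    · subst h2
      exact absurd (C.m_zero ht htm hmb hcomp hgap hs hsm) hr
    · exact absurd (C.confine ht htm hmb hcomp hgap hs hsm h2 hζ2) hr
  have hnets : pr t ≠ pr s := prne hs (by have := C.hb1; have := C.hab; linarith)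
  refine C.sum_bound hdomTS hnets hsupp ?_ ?_
  · exact C.le_two hdomTS (C.anchor_two ht htm hmb hgap hs hsm).2
  · exact C.le_two hdomTS (C.no_four ht htm hmb hspawn hs hsm hs hsm)

end Ctx
end SexTactic

namespace SexTactic

/-- gap invariance from noncrossing. -/
lemma gapInv {α β : ℝ} (D : ℝ → Set ℝ)
    (h1 : ∀ x ∈ Set.Ioo α β, x ∈ D x ∧ D x ⊆ Set.Ioo α β)
    (h2 : ∀ x ∈ Set.Ioo α β, ∀ y ∈ D x, D y = D x)
    (h4 : ∀ x₁ ∈ Set.Ioo α β, ∀ x₂ ∈ Set.Ioo α β, ∀ w ∈ D x₁, ∀ x ∈ D x₂, ∀ y ∈ D x₁,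
      ∀ z ∈ D x₂, w ≤ x → x < y → y < z → D x₁ = D x₂)
    {p u v : ℝ} (hp : p ∈ Set.Ioo α β) (hu : u ∈ D p) (hv : v ∈ D p) (huv : u < v)
    (hgap : ∀ z ∈ Set.Ioo u v, z ∉ D p)
    {x : ℝ} (hx : x ∈ Set.Ioo u v) : D x ⊆ Set.Ioo u v := by
  have huI : u ∈ Set.Ioo α β := (h1 p hp).2 hu
  have hvI : v ∈ Set.Ioo α β := (h1 p hp).2 hv
  have hxI : x ∈ Set.Ioo α β := ⟨lt_trans huI.1 hx.1, lt_trans hx.2 hvI.2⟩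
  have hDne : D x ≠ D p := by
    intro he
    exact hgap x hx (he ▸ (h1 x hxI).1)
  intro w' hw'
  by_contra hw'out
  have hxx : x ∈ D x := (h1 x hxI).1
  rcases lt_or_ge w' v with hlt | hge
  · have hle : w' ≤ u := by
      by_contra hgt
      exact hw'out ⟨lt_of_not_ge hgt, hlt⟩
    rcases eq_or_lt_of_le hle with heq | hlt2
    · subst heq
      have e1 : D w' = D x := h2 x hxI w' hw'
      have e2 : D w' = D p := h2 p hp w' hu
      exact hDne (e1 ▸ e2 ▸ rfl)
    · exact hDne (h4 x hxI p hp w' hw' u hu x hxx v hv hlt2.le hx.1 hx.2)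
  · rcases eq_or_lt_of_le hge with heq | hgt
    · have e1 : D w' = D x := h2 x hxI w' hw'
      have e2 : D w' = D p := h2 p hp w' (heq ▸ hv)
      exact hDne (e1 ▸ e2 ▸ rfl)
    · exact hDne (h4 p hp x hxI u hu x hxx v hv w' hw' hx.1.le hx.2 hgt).symm

/-- The abstract matching-impossibility theorem. -/
theorem AMT {α β : ℝ} (hαβ : α < β) (D : ℝ → Set ℝ)
    (h1 : ∀ x ∈ Set.Ioo α β, x ∈ D x ∧ D x ⊆ Set.Ioo α β)
    (h2 : ∀ x ∈ Set.Ioo α β, ∀ y ∈ D x, D y = D x)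
    (h3 : ∀ x ∈ Set.Ioo α β, ∃ y ∈ D x, y ≠ x)
    (h4 : ∀ x₁ ∈ Set.Ioo α β, ∀ x₂ ∈ Set.Ioo α β, ∀ w ∈ D x₁, ∀ x ∈ D x₂, ∀ y ∈ D x₁,
      ∀ z ∈ D x₂, w ≤ x → x < y → y < z → D x₁ = D x₂)
    (h5 : ∀ (xs ys zs : ℕ → ℝ) (x₀ c : ℝ), x₀ ∈ Set.Icc α β → c ∈ Set.Ioo α β →
      (∀ n, xs n ∈ Set.Ioo α β ∧ ys n ∈ D (xs n) ∧ zs n ∈ D (xs n) ∧ ys n ≠ zs n) →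
      Tendsto xs atTop (nhds x₀) → Tendsto ys atTop (nhds c) →
      Tendsto zs atTop (nhds c) → False)
    (h6 : ∀ x ∈ Set.Ioo α β, ∀ ys : ℕ → ℝ, (∀ n, ys n ∈ D x) →
      (Tendsto ys atTop (nhds α) ∨ Tendsto ys atTop (nhds β)) → False) : False := by
  classical
  -- Step 0 : every class is finite
  have hfin : ∀ x ∈ Set.Ioo α β, (D x).Finite := by
    intro x hx
    by_contra hinf
    have hinf' : (D x).Infinite := hinf
    set e := hinf'.natEmbedding with he
    have hmem : ∀ n : ℕ, (e n : ℝ) ∈ D x := fun n => (e n).2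
    have hbd : Bornology.IsBounded (D x) := (Metric.isBounded_Ioo α β).subset (h1 x hx).2
    obtain ⟨c, hc, φ, hφ, hten0⟩ := tendsto_subseq_of_bounded hbd hmem
    have hten : Tendsto (fun n => (e (φ n) : ℝ)) atTop (nhds c) := hten0
    have hcIcc : c ∈ Set.Icc α β := by
      have : closure (D x) ⊆ Set.Icc α β :=
        (closure_mono (h1 x hx).2).trans (by rw [closure_Ioo hαβ.ne]) 
      exact this hc
    have hinj : ∀ n, ((e (φ n) : ℝ)) ≠ ((e (φ (n+1)) : ℝ)) := by
      intro n h
      have h' : e (φ n) = e (φ (n+1)) := Subtype.ext h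
      exact absurd (e.injective h') (hφ (Nat.lt_succ_self n)).ne
    rcases lt_trichotomy c α with hlt | heq | hgt
    · exact absurd hcIcc.1 (not_le.2 hlt)
    · exact h6 x hx (fun n => (e (φ n) : ℝ)) (fun n => hmem (φ n)) (Or.inl (heq ▸ hten))
    rcases lt_trichotomy c β with hlt2 | heq2 | hgt2
    · have hten2 : Tendsto (fun n => ((e (φ (n+1)) : ℝ))) atTop (nhds c) :=
        hten.comp (tendsto_add_atTop_nat 1)
      exact h5 (fun _ => x) (fun n => (e (φ n) : ℝ)) (fun n => (e (φ (n+1)) : ℝ)) x c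
        ⟨hx.1.le, hx.2.le⟩ ⟨hgt, hlt2⟩
        (fun n => ⟨hx, hmem (φ n), hmem (φ (n+1)), hinj n⟩)
        tendsto_const_nhds hten hten2
    · exact h6 x hx (fun n => (e (φ n) : ℝ)) (fun n => hmem (φ n)) (Or.inr (heq2 ▸ hten))
    · exact absurd hcIcc.2 (not_le.2 hgt2)
  -- consecutive pair in a class around a point
  have consec : ∀ p ∈ Set.Ioo α β, ∃ u v, u ∈ D p ∧ v ∈ D p ∧ u < v ∧
      (∀ z ∈ Set.Ioo u v, z ∉ D p) := by
    intro p hp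
    obtain ⟨y, hy, hyne⟩ := h3 p hp
    have hpD : p ∈ D p := (h1 p hp).1
    rcases lt_or_gt_of_ne hyne with hlt | hgt
    · set S : Set ℝ := {z ∈ D p | z < p} with hS
      have hSne : S.Nonempty := ⟨y, hy, hlt⟩
      have hSfin : S.Finite := ((hfin p hp).subset (Set.sep_subset _ _))
      have hsup := hSne.csSup_mem hSfin
      refine ⟨sSup S, p, hsup.1, hpD, hsup.2, ?_⟩
      intro z hz hzD
      have : z ∈ S := ⟨hzD, hz.2⟩
      exact absurd (le_csSup hSfin.bddAbove this) (not_le.2 hz.1)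
    · set S : Set ℝ := {z ∈ D p | p < z} with hS
      have hSne : S.Nonempty := ⟨y, hy, hgt⟩
      have hSfin : S.Finite := ((hfin p hp).subset (Set.sep_subset _ _))
      have hinf := hSne.csInf_mem hSfin
      refine ⟨p, sInf S, hpD, hinf.1, hinf.2, ?_⟩
      intro z hz hzD
      have : z ∈ S := ⟨hzD, hz.1⟩
      exact absurd (csInf_le hSfin.bddBelow this) (not_le.2 hz.2)
  -- Step 1 : fix a base class and a consecutive pair u₀ < v₀ in it
  have hx₀ : (α + β) / 2 ∈ Set.Ioo α β := ⟨by linarith, by linarith⟩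
  obtain ⟨u₀, v₀, hu₀, hv₀, huv₀, hgap₀⟩ := consec _ hx₀
  have hu₀I : u₀ ∈ Set.Ioo α β := (h1 _ hx₀).2 hu₀
  have hv₀I : v₀ ∈ Set.Ioo α β := (h1 _ hx₀).2 hv₀
  -- Step 2 : Zorn over invariant closed subintervals of [u₀, v₀]
  set J : Set (Set ℝ) := {s | ∃ u v : ℝ, u < v ∧ s = Set.Icc u v ∧
    Set.Icc u v ⊆ Set.Icc u₀ v₀ ∧ ∀ x ∈ Set.Ioo u v, D x ⊆ Set.Icc u v} with hJ
  have hbase : Set.Icc u₀ v₀ ∈ J :=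
    ⟨u₀, v₀, huv₀, rfl, le_refl _, fun x hx =>
      (gapInv D h1 h2 h4 hx₀ hu₀ hv₀ huv₀ hgap₀ hx).trans Set.Ioo_subset_Icc_self⟩
  -- basic facts about members of J
  have hJspec : ∀ s ∈ J, sInf s < sSup s ∧ s = Set.Icc (sInf s) (sSup s) ∧
      u₀ ≤ sInf s ∧ sSup s ≤ v₀ ∧ (∀ x ∈ Set.Ioo (sInf s) (sSup s), D x ⊆ s) ∧
      sInf s ∈ s ∧ sSup s ∈ s := by
    rintro s ⟨u, v, huv, rfl, hsub, hinv⟩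
    rw [csInf_Icc huv.le, csSup_Icc huv.le]
    have h1' := hsub (Set.left_mem_Icc.2 huv.le)
    have h2' := hsub (Set.right_mem_Icc.2 huv.le)
    exact ⟨huv, rfl, h1'.1, h2'.2, hinv, Set.left_mem_Icc.2 huv.le, Set.right_mem_Icc.2 huv.le⟩
  have hIccIoo : Set.Icc u₀ v₀ ⊆ Set.Ioo α β := Set.Icc_subset_Ioo hu₀I.1 hv₀I.2
  -- Zorn
  have hchain : ∀ c ⊆ J, IsChain (· ⊆ ·) c → c.Nonempty → ∃ lb ∈ J, ∀ s ∈ c, lb ⊆ s := by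
    intro c hcJ hchain hcne
    obtain ⟨s₀, hs₀⟩ := hcne
    set U : Set ℝ := (fun s => sInf s) '' c with hU
    set V : Set ℝ := (fun s => sSup s) '' c with hV
    have hUne : U.Nonempty := ⟨sInf s₀, s₀, hs₀, rfl⟩
    have hVne : V.Nonempty := ⟨sSup s₀, s₀, hs₀, rfl⟩
    have hUbd : BddAbove U := by
      refine ⟨v₀, ?_⟩
      rintro _ ⟨s, hs, rfl⟩
      exact le_trans (hJspec s (hcJ hs)).1.le (hJspec s (hcJ hs)).2.2.2.1
    have hVbd : BddBelow V := by
      refine ⟨u₀, ?_⟩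
      rintro _ ⟨s, hs, rfl⟩
      exact le_trans (hJspec s (hcJ hs)).2.2.1 (hJspec s (hcJ hs)).1.le
    set μ := sSup U with hμ
    set ν := sInf V with hν
    -- every sInf is ≤ every sSup (chain comparability)
    have hcross : ∀ s ∈ c, ∀ s' ∈ c, sInf s ≤ sSup s' := by
      intro s hs s' hs'
      rcases eq_or_ne s s' with rfl | hne
      · exact (hJspec s (hcJ hs)).1.le
      rcases hchain hs hs' hne with h | h
      · -- s ⊆ s'
        have h2 := (hJspec s (hcJ hs)).2.1
        have h3 := (hJspec s' (hcJ hs')).2.1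
        have hmem : sInf s ∈ s := (hJspec s (hcJ hs)).2.2.2.2.2.1
        have := h hmem
        rw [h3] at this
        exact this.2
      · have hmem : sSup s' ∈ s' := (hJspec s' (hcJ hs')).2.2.2.2.2.2
        have := h hmem
        rw [(hJspec s (hcJ hs)).2.1] at this
        exact this.1
    have hμν : μ ≤ ν := by
      apply csSup_le hUne
      rintro _ ⟨s, hs, rfl⟩
      apply le_csInf hVne
      rintro _ ⟨s', hs', rfl⟩
      exact hcross s hs s' hs'
    have hμu₀ : u₀ ≤ μ := le_csSup hUbd ⟨s₀, hs₀, rfl⟩ |>.trans' (hJspec s₀ (hcJ hs₀)).2.2.1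
    have hνv₀ : ν ≤ v₀ := (csInf_le hVbd ⟨s₀, hs₀, rfl⟩).trans (hJspec s₀ (hcJ hs₀)).2.2.2.1
    rcases eq_or_lt_of_le hμν with heq | hlt
    · -- collapse : build merging sequences and contradict h5
      exfalso
      have hseq : ∀ n : ℕ, ∃ s ∈ c, μ - 1/(n+1) < sInf s ∧ sSup s < ν + 1/(n+1) := by
        intro n
        have hpos : (0:ℝ) < 1/(n+1) := by positivity
        obtain ⟨_, ⟨s1, hs1, rfl⟩, hgt⟩ := Real.add_neg_lt_sSup hUne (ε := -(1/(n+1))) (by linarith)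
        obtain ⟨_, ⟨s2, hs2, rfl⟩, hlt2⟩ := Real.lt_sInf_add_pos hVne hpos
        rcases eq_or_ne s1 s2 with rfl | hne
        · exact ⟨s1, hs1, by linarith, by linarith⟩
        rcases hchain hs1 hs2 hne with h | h
        · -- s1 ⊆ s2 : use s1 ; sSup s1 ≤ sSup s2
          refine ⟨s1, hs1, by linarith, ?_⟩
          have : sSup s1 ≤ sSup s2 := by
            have hmem : sSup s1 ∈ s1 := (hJspec s1 (hcJ hs1)).2.2.2.2.2.2
            have := h hmem
            rw [(hJspec s2 (hcJ hs2)).2.1] at this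
            exact this.2
          linarith
        · refine ⟨s2, hs2, ?_, by linarith⟩
          have : sInf s1 ≤ sInf s2 := by
            have hmem : sInf s2 ∈ s2 := (hJspec s2 (hcJ hs2)).2.2.2.2.2.1
            have := h hmem
            rw [(hJspec s1 (hcJ hs1)).2.1] at this
            exact this.1
          linarith
      choose sn hsn hsn1 hsn2 using hseq
      set un : ℕ → ℝ := fun n => sInf (sn n) with hun
      set vn : ℕ → ℝ := fun n => sSup (sn n) with hvn
      have hunlessn : ∀ n, un n < vn n := fun n => (hJspec _ (hcJ (hsn n))).1
      have huntend : Tendsto un atTop (nhds μ) := by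
        have hupper : ∀ n, un n ≤ μ := fun n => le_csSup hUbd ⟨sn n, hsn n, rfl⟩
        have h1' : Tendsto (fun n : ℕ => μ - 1/(n+1)) atTop (nhds μ) := by
          have h2' : Tendsto (fun n : ℕ => ((n : ℝ) + 1)) atTop atTop :=
            tendsto_atTop_add_const_right _ 1 tendsto_natCast_atTop_atTop
          have : Tendsto (fun n : ℕ => 1 / ((n:ℝ) + 1)) atTop (nhds 0) :=
            Tendsto.div_atTop tendsto_const_nhds h2'
          simpa using tendsto_const_nhds.sub this
        exact tendsto_of_tendsto_of_tendsto_of_le_of_le h1' tendsto_const_nhds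
          (fun n => (hsn1 n).le) hupper
      have hvntend : Tendsto vn atTop (nhds ν) := by
        have hlower : ∀ n, ν ≤ vn n := fun n => csInf_le hVbd ⟨sn n, hsn n, rfl⟩
        have h1' : Tendsto (fun n : ℕ => ν + 1/(n+1)) atTop (nhds ν) := by
          have h2' : Tendsto (fun n : ℕ => ((n : ℝ) + 1)) atTop atTop :=
            tendsto_atTop_add_const_right _ 1 tendsto_natCast_atTop_atTop
          have : Tendsto (fun n : ℕ => 1 / ((n:ℝ) + 1)) atTop (nhds 0) :=
            Tendsto.div_atTop tendsto_const_nhds h2'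
          simpa using tendsto_const_nhds.add this
        exact tendsto_of_tendsto_of_tendsto_of_le_of_le tendsto_const_nhds h1'
          hlower (fun n => (hsn2 n).le)
      set xs : ℕ → ℝ := fun n => (un n + vn n)/2 with hxs
      have hxsmem : ∀ n, xs n ∈ Set.Ioo (un n) (vn n) := fun n =>
        ⟨by have := hunlessn n; simp only [hxs]; linarith,
         by have := hunlessn n; simp only [hxs]; linarith⟩
      have hxsI : ∀ n, xs n ∈ Set.Ioo α β := by
        intro n
        apply hIccIoo
        have hs := hJspec _ (hcJ (hsn n))
        exact ⟨le_trans hs.2.2.1 (hxsmem n).1.le, le_trans (hxsmem n).2.le hs.2.2.2.1⟩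
      have hxtend : Tendsto xs atTop (nhds μ) := by
        have : Tendsto (fun n => (un n + vn n)/2) atTop (nhds ((μ + ν)/2)) :=
          (huntend.add hvntend).div_const 2
        rw [← heq] at this
        simpa [hxs, heq, show (μ + μ)/2 = μ by ring] using this
      have hmate : ∀ n, ∃ y ∈ D (xs n), y ≠ xs n := fun n => h3 (xs n) (hxsI n)
      choose zs hzs hzsne using hmate
      have hzsmem : ∀ n, zs n ∈ Set.Icc (un n) (vn n) := by
        intro n
        have hs := hJspec _ (hcJ (hsn n))
        have := hs.2.2.2.2.1 (xs n) (hxsmem n)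
        have h2' := this (hzs n)
        rw [hs.2.1] at h2'
        exact h2'
      have hztend : Tendsto zs atTop (nhds μ) := by
        apply tendsto_of_tendsto_of_tendsto_of_le_of_le huntend
          (by rw [heq]; exact hvntend)
          (fun n => (hzsmem n).1) (fun n => (hzsmem n).2)
      have hμI : μ ∈ Set.Ioo α β := hIccIoo ⟨hμu₀, heq ▸ hνv₀⟩
      exact h5 xs xs zs μ μ ⟨hμI.1.le, hμI.2.le⟩ hμI
        (fun n => ⟨hxsI n, (h1 _ (hxsI n)).1, hzs n, (hzsne n).symm⟩)
        hxtend hxtend hztend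
    · -- nondegenerate intersection : Icc μ ν works
      refine ⟨Set.Icc μ ν, ⟨μ, ν, hlt, rfl, ?_, ?_⟩, ?_⟩
      · exact Set.Icc_subset_Icc hμu₀ hνv₀
      · intro x hx d hd
        have hall : ∀ s ∈ c, d ∈ s := by
          intro s hs
          have hspec := hJspec s (hcJ hs)
          have hxin : x ∈ Set.Ioo (sInf s) (sSup s) := by
            constructor
            · exact lt_of_le_of_lt (le_csSup hUbd ⟨s, hs, rfl⟩) hx.1
            · exact lt_of_lt_of_le hx.2 (csInf_le hVbd ⟨s, hs, rfl⟩)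
          exact hspec.2.2.2.2.1 x hxin hd
        constructor
        · apply csSup_le hUne
          rintro _ ⟨s, hs, rfl⟩
          have := hall s hs
          rw [(hJspec s (hcJ hs)).2.1] at this
          exact this.1
        · apply le_csInf hVne
          rintro _ ⟨s, hs, rfl⟩
          have := hall s hs
          rw [(hJspec s (hcJ hs)).2.1] at this
          exact this.2
      · intro s hs
        rw [(hJspec s (hcJ hs)).2.1]
        apply Set.Icc_subset_Icc
        · exact le_csSup hUbd ⟨s, hs, rfl⟩
        · exact csInf_le hVbd ⟨s, hs, rfl⟩
  obtain ⟨M, hMsub, hMmin⟩ := zorn_superset_nonempty J hchain _ hbase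
  have hMJ : M ∈ J := hMmin.prop
  obtain ⟨us, vs, huvs, hMeq, hMsub0, hMinv⟩ := hMJ
  have husI : us ∈ Set.Ioo α β := hIccIoo (hMsub0 (Set.left_mem_Icc.2 huvs.le))
  have hvsI : vs ∈ Set.Ioo α β := hIccIoo (hMsub0 (Set.right_mem_Icc.2 huvs.le))
  set x := (us + vs)/2 with hxdef
  have hxmem : x ∈ Set.Ioo us vs := ⟨by simp only [hxdef]; linarith, by simp only [hxdef]; linarith⟩
  have hxI : x ∈ Set.Ioo α β := ⟨lt_trans husI.1 hxmem.1, lt_trans hxmem.2 hvsI.2⟩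
  have hDxsub : D x ⊆ Set.Icc us vs := hMinv x hxmem
  obtain ⟨y, hy, hyne⟩ := h3 x hxI
  rcases lt_or_gt_of_ne hyne with hlt | hgt
  · -- mate below x
    set S : Set ℝ := {z ∈ D x | z < x} with hSdef
    have hSne : S.Nonempty := ⟨y, hy, hlt⟩
    have hSfin : S.Finite := (hfin x hxI).subset (Set.sep_subset _ _)
    have hsup := hSne.csSup_mem hSfin
    have hu'x : sSup S < x := hsup.2
    have hu'D : sSup S ∈ D x := hsup.1
    have hgap' : ∀ z ∈ Set.Ioo (sSup S) x, z ∉ D x := by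
      intro z hz hzD
      exact absurd (le_csSup hSfin.bddAbove ⟨hzD, hz.2⟩) (not_le.2 hz.1)
    have hsubM' : Set.Icc (sSup S) x ⊆ Set.Icc us vs :=
      Set.Icc_subset_Icc (hDxsub hu'D).1 hxmem.2.le
    have hnew : Set.Icc (sSup S) x ∈ J := by
      refine ⟨sSup S, x, hu'x, rfl, hsubM'.trans hMsub0, ?_⟩
      intro z hz
      exact (gapInv D h1 h2 h4 hxI hu'D (h1 x hxI).1 hu'x hgap' hz).trans
        Set.Ioo_subset_Icc_self
    have hM2 : M ⊆ Set.Icc (sSup S) x := hMmin.2 hnew (hMeq ▸ hsubM')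
    have hvsM : vs ∈ M := hMeq ▸ Set.right_mem_Icc.2 huvs.le
    exact absurd (hM2 hvsM).2 (not_le.2 hxmem.2)
  · -- mate above x
    set S : Set ℝ := {z ∈ D x | x < z} with hSdef
    have hSne : S.Nonempty := ⟨y, hy, hgt⟩
    have hSfin : S.Finite := (hfin x hxI).subset (Set.sep_subset _ _)
    have hinfm := hSne.csInf_mem hSfin
    have hxv' : x < sInf S := hinfm.2
    have hv'D : sInf S ∈ D x := hinfm.1
    have hgap' : ∀ z ∈ Set.Ioo x (sInf S), z ∉ D x := by
      intro z hz hzD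
      exact absurd (csInf_le hSfin.bddBelow ⟨hzD, hz.1⟩) (not_le.2 hz.2)
    have hsubM' : Set.Icc x (sInf S) ⊆ Set.Icc us vs :=
      Set.Icc_subset_Icc hxmem.1.le (hDxsub hv'D).2
    have hnew : Set.Icc x (sInf S) ∈ J := by
      refine ⟨x, sInf S, hxv', rfl, hsubM'.trans hMsub0, ?_⟩
      intro z hz
      exact (gapInv D h1 h2 h4 hxI (h1 x hxI).1 hv'D hxv' hgap' hz).trans
        Set.Ioo_subset_Icc_self
    have hM2 : M ⊆ Set.Icc x (sInf S) := hMmin.2 hnew (hMeq ▸ hsubM')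
    have husM : us ∈ M := hMeq ▸ Set.left_mem_Icc.2 huvs.le
    exact absurd (hM2 husM).1 (not_le.2 hxmem.1)

end SexTactic

namespace SexTactic
namespace Ctx

variable (C : Ctx)

lemma arena_false {t m : ℝ} (ht : C.a < t) (htm : t < m) (hmb : m ≤ C.b)
    (hcomp : C.f (pr t) (pr t) (pr m) ≠ 0)
    (hgap : ∀ z, t < z → z < m → C.f (pr t) (pr t) (pr z) = 0)
    (hspawn : ∀ u v, t ≤ u → v < m → C.GoodDn u v → False) : False := by
  have htb : t < C.b := lt_of_lt_of_le htm hmb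
  have hwin : m - t < 1 := by have := C.hb1; have := C.hab; linarith
  set D : ℝ → Set ℝ := fun s => {z | z ∈ Set.Ioo t m ∧ C.f (pr t) (pr s) (pr z) ≠ 0} with hD
  have hdomx : ∀ x₀ : ℝ, t ≤ x₀ → x₀ ≤ m → (pr t, pr x₀) ∈ ConicDom C.I := by
    intro x₀ h1 h2
    rcases eq_or_lt_of_le h1 with rfl | h1'
    · exact C.dom_diag ht htb
    · exact C.domTS ht htm hmb h1' h2
  have hDeq : ∀ x y : ℝ, t < x → x < m → t < y → y < m →
      C.f (pr t) (pr y) = C.f (pr t) (pr x) → D y = D x := by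
    intro x y _ _ _ _ he
    ext z
    simp only [hD, Set.mem_setOf_eq, he]
  have h1 : ∀ x ∈ Set.Ioo t m, x ∈ D x ∧ D x ⊆ Set.Ioo t m := by
    intro x hx
    refine ⟨⟨hx, (C.hf.self_mem _ _ (C.domTS ht htm hmb hx.1 hx.2.le)).2⟩, fun z hz => hz.1⟩
  have h2 : ∀ x ∈ Set.Ioo t m, ∀ y ∈ D x, D y = D x := by
    intro x hx y hy
    exact hDeq x y hx.1 hx.2 hy.1.1 hy.1.2
      (C.class_eq ht htm hmb hx.1 hx.2 hy.1.1 hy.1.2 hy.2)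
  have h3 : ∀ x ∈ Set.Ioo t m, ∃ y ∈ D x, y ≠ x := by
    intro x hx
    obtain ⟨z, hz1, hz2, hz3, hz4⟩ := C.second_elem ht htm hmb hcomp hgap hspawn hx.1 hx.2
    exact ⟨z, ⟨⟨hz1, hz2⟩, hz4⟩, hz3⟩
  have h4 : ∀ x₁ ∈ Set.Ioo t m, ∀ x₂ ∈ Set.Ioo t m, ∀ w ∈ D x₁, ∀ x ∈ D x₂, ∀ y ∈ D x₁,
      ∀ z ∈ D x₂, w ≤ x → x < y → y < z → D x₁ = D x₂ := by
    intro x₁ hx₁ x₂ hx₂ w hw x hx y hy z hz hwx hxy hyz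
    have e1 : C.f (pr t) (pr w) = C.f (pr t) (pr x₁) :=
      C.class_eq ht htm hmb hx₁.1 hx₁.2 hw.1.1 hw.1.2 hw.2
    have e2 : C.f (pr t) (pr x) = C.f (pr t) (pr x₂) :=
      C.class_eq ht htm hmb hx₂.1 hx₂.2 hx.1.1 hx.1.2 hx.2
    have hyW : C.f (pr t) (pr w) (pr y) ≠ 0 := by rw [e1]; exact hy.2
    have hzX : C.f (pr t) (pr x) (pr z) ≠ 0 := by rw [e2]; exact hz.2
    have := C.noncross ht htm hmb hw.1.1 hw.1.2 hx.1.1 hx.1.2 hwx hxy hyz hz.1.2 hyW hzX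
    have he : C.f (pr t) (pr x₁) = C.f (pr t) (pr x₂) := by rw [← e1, this, e2]
    exact (hDeq x₂ x₁ hx₂.1 hx₂.2 hx₁.1 hx₁.2 he)
  have h5 : ∀ (xs ys zs : ℕ → ℝ) (x₀ c : ℝ), x₀ ∈ Set.Icc t m → c ∈ Set.Ioo t m →
      (∀ n, xs n ∈ Set.Ioo t m ∧ ys n ∈ D (xs n) ∧ zs n ∈ D (xs n) ∧ ys n ≠ zs n) →
      Tendsto xs atTop (nhds x₀) → Tendsto ys atTop (nhds c) →
      Tendsto zs atTop (nhds c) → False := by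
    intro xs ys zs x₀ c hx₀ hc hmem hxt hyt hzt
    have hdom0 := hdomx x₀ hx₀.1 hx₀.2
    have hdomn : ∀ n, (pr t, pr (xs n)) ∈ ConicDom C.I := fun n =>
      C.domTS ht htm hmb (hmem n).1.1 (hmem n).1.2.le
    have hj := C.jump (pn := fun _ => pr t) (qn := fun n => pr (xs n)) hdomn hdom0
      tendsto_const_nhds (tendsto_pr hxt) (u := ys) (v := zs)
      (le_trans ht.le (le_trans hc.1.le (le_refl c))) (le_trans hc.2.le hmb)
      (fun n => ⟨le_trans ht.le (hmem n).2.1.1.1.le, le_trans (hmem n).2.1.1.2.le hmb,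
        (hmem n).2.1.2⟩)
      (fun n => ⟨le_trans ht.le (hmem n).2.2.1.1.1.le, le_trans (hmem n).2.2.1.1.2.le hmb,
        (hmem n).2.2.1.2⟩)
      hyt hzt 2 2
      (fun n => C.two_le (hdomn n) (hmem n).2.1.2)
      (fun n => C.two_le (hdomn n) (hmem n).2.2.1.2)
    have hne : ∀ n, pr (ys n) ≠ pr (zs n) := by
      intro n
      have hy' := (hmem n).2.1.1
      have hz' := (hmem n).2.2.1.1
      rcases lt_or_gt_of_ne (hmem n).2.2.2 with h | h
      · exact prne h (by have := hy'.1; have := hz'.2; linarith)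
      · exact (prne h (by have := hz'.1; have := hy'.2; linarith)).symm
    have h4le : 4 ≤ C.f (pr t) (pr x₀) (pr c) := C.four_le hdom0 (by simpa using hj.2 hne)
    rcases eq_or_lt_of_le hx₀.1 with rfl | hx₀t
    · exact (ne_zero_of_two_le (le_trans (by norm_num) h4le)) (hgap c hc.1 hc.2)
    rcases eq_or_lt_of_le hx₀.2 with rfl | hx₀m
    · rw [C.eq_TM ht htm hmb hcomp] at h4le
      exact (ne_zero_of_two_le (le_trans (by norm_num) h4le)) (hgap c hc.1 hc.2)
    · exact C.no_four ht htm hmb hspawn hx₀t hx₀m hc.1 hc.2 h4le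
  have h6 : ∀ x ∈ Set.Ioo t m, ∀ ys : ℕ → ℝ, (∀ n, ys n ∈ D x) →
      (Tendsto ys atTop (nhds t) ∨ Tendsto ys atTop (nhds m)) → False := by
    intro x hx ys hys hten
    have hdom0 := C.domTS ht htm hmb hx.1 hx.2.le
    rcases hten with hten | hten
    · have hj := C.jump (pn := fun _ => pr t) (qn := fun _ => pr x)
        (fun _ => hdom0) hdom0 tendsto_const_nhds tendsto_const_nhds
        (u := ys) (v := fun _ => t) ht.le htb.le
        (fun n => ⟨le_trans ht.le (hys n).1.1.le, le_trans (hys n).1.2.le hmb, (hys n).2⟩)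
        (fun _ => ⟨ht.le, htb.le, (C.anchor_two ht htm hmb hgap hx.1 hx.2).1⟩)
        hten tendsto_const_nhds 2 2
        (fun n => C.two_le hdom0 (hys n).2)
        (fun _ => C.two_le hdom0 (C.anchor_two ht htm hmb hgap hx.1 hx.2).1)
      have hne : ∀ n, pr (ys n) ≠ pr t := by
        intro n
        exact (prne (hys n).1.1 (by have := (hys n).1.2; linarith)).symm
      have := C.four_le hdom0 (by simpa using hj.2 hne)
      exact (C.anchor_two ht htm hmb hgap hx.1 hx.2).2 this
    · have hj := C.jump (pn := fun _ => pr t) (qn := fun _ => pr x)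
        (fun _ => hdom0) hdom0 tendsto_const_nhds tendsto_const_nhds
        (u := ys) (v := ys) (le_trans ht.le htm.le) hmb
        (fun n => ⟨le_trans ht.le (hys n).1.1.le, le_trans (hys n).1.2.le hmb, (hys n).2⟩)
        (fun n => ⟨le_trans ht.le (hys n).1.1.le, le_trans (hys n).1.2.le hmb, (hys n).2⟩)
        hten hten 2 2
        (fun n => C.two_le hdom0 (hys n).2) (fun n => C.two_le hdom0 (hys n).2)
      have : C.f (pr t) (pr x) (pr m) ≠ 0 := ne_zero_of_two_le (by simpa using hj.1)
      exact this (C.m_zero ht htm hmb hcomp hgap hx.1 hx.2)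
  exact AMT htm D h1 h2 h3 h4 h5 h6

end Ctx
end SexTactic

namespace SexTactic

lemma pr_neg (x : ℝ) : pr (-x) = - pr x := rfl

lemma neg_pr (x : ℝ) : - pr x = pr (-x) := rfl

lemma closure_neg_preimage (I : Set S1) :
    closure ((fun s : S1 => -s) ⁻¹' I) = (fun s : S1 => -s) ⁻¹' (closure I) := by
  have := ((Homeomorph.neg S1).preimage_closure I).symm
  simpa using this

lemma chain6_neg {p q p' q' p'' q'' : S1} (h : chain6 p q p' q' p'' q'') :
    chain6rev (-p) (-q) (-p') (-q') (-p'') (-q'') := by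
  obtain ⟨ra, rb, rc, rd, re, rg, ha, hb, hc, hd, he, hg, h1, h2, h3, h4, h5, h6⟩ := h
  refine ⟨-ra, -rb, -rc, -rd, -re, -rg, ?_, ?_, ?_, ?_, ?_, ?_, by linarith, by linarith,
    by linarith, by linarith, by linarith, by linarith⟩ <;>
    simp only [pr_neg, ha, hb, hc, hd, he, hg]

lemma chain6rev_neg {p q p' q' p'' q'' : S1} (h : chain6rev p q p' q' p'' q'') :
    chain6 (-p) (-q) (-p') (-q') (-p'') (-q'') := by
  obtain ⟨ra, rb, rc, rd, re, rg, ha, hb, hc, hd, he, hg, h1, h2, h3, h4, h5, h6⟩ := h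
  refine ⟨-ra, -rb, -rc, -rd, -re, -rg, ?_, ?_, ?_, ?_, ?_, ?_, by linarith, by linarith,
    by linarith, by linarith, by linarith, by linarith⟩ <;>
    simp only [pr_neg, ha, hb, hc, hd, he, hg]

lemma dom_neg {I : Set S1} {p q : S1} :
    (p, q) ∈ ConicDom ((fun s : S1 => -s) ⁻¹' I) ↔ (-p, -q) ∈ ConicDom I := by
  constructor
  · rintro ⟨h1, h2, h3⟩
    rw [closure_neg_preimage] at h1 h2
    exact ⟨h1, h2, fun he => h3 (neg_inj.1 he)⟩
  · rintro ⟨h1, h2, h3⟩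
    refine ⟨?_, ?_, fun he => h3 (by show -(p,q).1 = -(p,q).2; rw [show (p,q).1 = (p,q).2 from he])⟩
    · rw [closure_neg_preimage]; exact h1
    · rw [closure_neg_preimage]; exact h2

lemma isics_neg {I : Set S1} {f : S1 → S1 → S1 → ℕ∞} (hf : IsIntrinsicConicSystem I f) :
    IsIntrinsicConicSystem ((fun s : S1 => -s) ⁻¹' I) (fun p q r => f (-p) (-q) (-r)) := by
  constructor
  · intro p q r hdom
    exact hf.even_values _ _ _ (dom_neg.1 hdom)
  · intro p q hdom
    have : suppF (fun p q r => f (-p) (-q) (-r)) p q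
        = (fun r : S1 => -r) ⁻¹' suppF f (-p) (-q) := rfl
    rw [this]
    exact (hf.supp_closed _ _ (dom_neg.1 hdom)).preimage continuous_neg
  · intro p q hdom
    exact (hf.self_mem _ _ (dom_neg.1 hdom))
  · intro p q hdom
    funext r
    exact congrFun (hf.symm _ _ (dom_neg.1 hdom)) (-r)
  · intro p q r s hd1 hd2 hs h1 h2
    funext r'
    exact congrFun (hf.eq_of_common (-p) (-q) (-r) (-s) (dom_neg.1 hd1) (dom_neg.1 hd2)
      (fun he => hs (neg_inj.1 he)) h1 h2) (-r')
  · intro p q p' q' p'' q'' hd1 hd2 h1 h2 hch hc1 hc2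
    funext r'
    refine congrFun (hf.eq_of_chain (-p) (-q) (-p') (-q') (-p'') (-q'')
      (dom_neg.1 hd1) (dom_neg.1 hd2) h1 h2 ?_ ?_ ?_) (-r')
    · rcases hch with h | h
      · exact Or.inr (chain6_neg h)
      · exact Or.inl (chain6rev_neg h)
    · intro he
      have : p = p' := neg_inj.1 he
      simpa using hc1 this
    · intro he
      have : q = q' := neg_inj.1 he
      simpa using hc2 this
  · intro p q r hdom h4 hr
    funext r'
    exact congrFun (hf.eq_diag (-p) (-q) (-r) (dom_neg.1 hdom) h4 hr) (-r')
  · intro pn qn rn1 rn2 p q r k1 k2 hdomn hdom hp hq hr1 hr2 hrc hrt1 hrt2 hk1 hk2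
    have hres := hf.limit_mult (fun n => -(pn n)) (fun n => -(qn n))
      (fun n => -(rn1 n)) (fun n => -(rn2 n)) (-p) (-q) (-r) k1 k2
      (fun n => dom_neg.1 (hdomn n)) (dom_neg.1 hdom) hp.neg hq.neg
      (fun n => ⟨by
        have := (hr1 n).1; rw [closure_neg_preimage] at this; exact this, (hr1 n).2⟩)
      (fun n => ⟨by
        have := (hr2 n).1; rw [closure_neg_preimage] at this; exact this, (hr2 n).2⟩)
      (by have := hrc; rw [closure_neg_preimage] at this; exact this) hrt1.neg hrt2.neg
      (by simpa using hk1) (by simpa using hk2)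
    refine ⟨by simpa using hres.1, fun hne => ?_⟩
    have := hres.2 (fun n => fun he => hne n (neg_inj.1 he))
    simpa using this
  · intro p q hdom
    obtain ⟨fs, h6⟩ := hf.total_six (-p) (-q) (dom_neg.1 hdom)
    refine ⟨fs.image (fun r => -r), ?_⟩
    rw [Finset.sum_image (by intro x _ y _ h; exact neg_inj.1 h)]
    simpa using h6
  · intro p q hdom h2
    obtain ⟨U, hU, hpU, hUi⟩ := hf.isolated_of_two (-p) (-q) (dom_neg.1 hdom) h2
    refine ⟨(fun r : S1 => -r) ⁻¹' U, hU.preimage continuous_neg, hpU, ?_⟩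
    ext r
    constructor
    · rintro ⟨hr1, hr2⟩
      have : -r ∈ U ∩ suppF f (-p) (-q) := ⟨hr1, hr2⟩
      rw [hUi] at this
      simp only [Set.mem_singleton_iff] at this ⊢
      exact neg_inj.1 (by simpa using this)
    · intro hr
      simp only [Set.mem_singleton_iff] at hr
      have : -p ∈ U ∩ suppF f (-p) (-q) := by
        rw [hUi]; exact Set.mem_singleton _
      rw [hr]
      exact ⟨this.1, this.2⟩

/-- reflection of a working context. -/
noncomputable def Ctx.neg (C : Ctx) : Ctx where
  a := -C.b
  b := -C.a
  hab := by have := C.hab; linarith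
  hb1 := by have := C.hb1; linarith
  I := (fun s : S1 => -s) ⁻¹' C.I
  f := fun p q r => C.f (-p) (-q) (-r)
  hf := isics_neg C.hf
  hIi := by
    intro z h1 h2
    show -pr z ∈ C.I
    rw [neg_pr]
    exact C.hIi (-z) (by linarith) (by linarith)
  hIc := by
    intro z h1 h2
    rw [closure_neg_preimage]
    show -pr z ∈ closure C.I
    rw [neg_pr]
    exact C.hIc (-z) (by linarith) (by linarith)
  hN := by
    intro p q hdom c h1 h2 h6
    refine C.hN (-p) (-q) (dom_neg.1 hdom) (-c) (by linarith) (by linarith) ?_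
    show (6:ℕ∞) ≤ C.f (-p) (-q) (pr (-c))
    exact h6

lemma Ctx.goodDn_neg (C : Ctx) {t m : ℝ} (h : C.GoodDn t m) : C.neg.GoodUp (-m) (-t) := by
  obtain ⟨h1, h2, h3, h4, h5⟩ := h
  refine ⟨by show -C.b < -m; linarith, by linarith, by show -t < -C.a; linarith, ?_, ?_⟩
  · show C.f (-pr (-m)) (-pr (-m)) (-pr (-t)) ≠ 0
    simpa [pr_neg] using h4
  · intro z hz1 hz2
    show C.f (-pr (-m)) (-pr (-m)) (-pr z) = 0
    have : C.f (pr m) (pr m) (pr (-z)) = 0 := h5 (-z) (by linarith) (by linarith)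
    simpa [pr_neg] using this

lemma Ctx.goodUp_neg (C : Ctx) {t m : ℝ} (h : C.GoodUp t m) : C.neg.GoodDn (-m) (-t) := by
  obtain ⟨h1, h2, h3, h4, h5⟩ := h
  refine ⟨by show -C.b < -m; linarith, by linarith, by show -t < -C.a; linarith, ?_, ?_⟩
  · show C.f (-pr (-t)) (-pr (-t)) (-pr (-m)) ≠ 0
    simpa [pr_neg] using h4
  · intro z hz1 hz2
    show C.f (-pr (-t)) (-pr (-t)) (-pr z) = 0
    have : C.f (pr t) (pr t) (pr (-z)) = 0 := h5 (-z) (by linarith) (by linarith)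
    simpa [pr_neg] using this

lemma Ctx.goodUp_of_neg (C : Ctx) {t m : ℝ} (h : C.neg.GoodUp t m) : C.GoodDn (-m) (-t) := by
  obtain ⟨h1, h2, h3, h4, h5⟩ := h
  have ha : C.neg.a = -C.b := rfl
  have hbb : C.neg.b = -C.a := rfl
  rw [ha] at h1; rw [hbb] at h3
  refine ⟨by linarith, by linarith, by linarith, ?_, ?_⟩
  · have : C.neg.f (pr t) (pr t) (pr m) ≠ 0 := h4
    show C.f (pr (-t)) (pr (-t)) (pr (-m)) ≠ 0
    have h' : C.f (-pr t) (-pr t) (-pr m) ≠ 0 := this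
    simpa [pr_neg] using h'
  · intro z hz1 hz2
    have : C.neg.f (pr t) (pr t) (pr (-z)) = 0 := h5 (-z) (by linarith) (by linarith)
    show C.f (pr (-t)) (pr (-t)) (pr z) = 0
    have h' : C.f (-pr t) (-pr t) (-pr (-z)) = 0 := this
    simpa [pr_neg] using h'

lemma Ctx.goodDn_of_neg (C : Ctx) {t m : ℝ} (h : C.neg.GoodDn t m) : C.GoodUp (-m) (-t) := by
  obtain ⟨h1, h2, h3, h4, h5⟩ := h
  have ha : C.neg.a = -C.b := rfl
  have hbb : C.neg.b = -C.a := rfl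
  rw [ha] at h1; rw [hbb] at h3
  refine ⟨by linarith, by linarith, by linarith, ?_, ?_⟩
  · have : C.neg.f (pr m) (pr m) (pr t) ≠ 0 := h4
    show C.f (pr (-m)) (pr (-m)) (pr (-t)) ≠ 0
    have h' : C.f (-pr m) (-pr m) (-pr t) ≠ 0 := this
    simpa [pr_neg] using h'
  · intro z hz1 hz2
    have : C.neg.f (pr m) (pr m) (pr (-z)) = 0 := h5 (-z) (by linarith) (by linarith)
    show C.f (pr (-m)) (pr (-m)) (pr z) = 0
    have h' : C.f (-pr m) (-pr m) (-pr (-z)) = 0 := this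
    simpa [pr_neg] using h'

end SexTactic

namespace SexTactic
namespace Ctx

variable (C : Ctx)

lemma up_collapse {tn mn : ℕ → ℝ} {μ : ℝ} (hμ1 : C.a < μ) (hμ2 : μ < C.b)
    (h : ∀ n, C.GoodUp (tn n) (mn n)) (ht : Tendsto tn atTop (nhds μ))
    (hm : Tendsto mn atTop (nhds μ)) : False := by
  have hdomn : ∀ n, (pr (tn n), pr (tn n)) ∈ ConicDom C.I := fun n =>
    C.dom_diag (h n).1 (lt_trans (h n).2.1 (h n).2.2.1)
  have hdomμ : (pr μ, pr μ) ∈ ConicDom C.I := C.dom_diag hμ1 hμ2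
  have hj := C.jump (pn := fun n => pr (tn n)) (qn := fun n => pr (tn n)) hdomn hdomμ
    (tendsto_pr ht) (tendsto_pr ht) (u := tn) (v := mn) hμ1.le hμ2.le
    (fun n => ⟨(h n).1.le, (lt_trans (h n).2.1 (h n).2.2.1).le,
      ne_zero_of_two_le (le_trans (by norm_num)
        (C.diag_four (h n).1.le (lt_trans (h n).2.1 (h n).2.2.1).le (hdomn n)))⟩)
    (fun n => ⟨(lt_trans (h n).1 (h n).2.1).le, (h n).2.2.1.le, (h n).2.2.2.1⟩)
    ht hm 4 2
    (fun n => C.diag_four (h n).1.le (lt_trans (h n).2.1 (h n).2.2.1).le (hdomn n))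
    (fun n => C.two_le (hdomn n) (h n).2.2.2.1)
  have hne : ∀ n, pr (tn n) ≠ pr (mn n) := by
    intro n
    refine prne (h n).2.1 ?_
    have h1' := (h n).1
    have h2' := (h n).2.2.1
    have := C.hb1; have := C.hab
    linarith
  have := hj.2 hne
  exact C.hN' hμ1 hμ2 hdomμ (by simpa using this)

lemma up_limit {tn mn : ℕ → ℝ} {μ ν : ℝ} (hμ1 : C.a < μ) (hν2 : ν < C.b) (hμν : μ < ν)
    (h : ∀ n, C.GoodUp (tn n) (mn n)) (ht : Tendsto tn atTop (nhds μ))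
    (hm : Tendsto mn atTop (nhds ν)) : ∃ mh, μ < mh ∧ mh ≤ ν ∧ C.GoodUp μ mh := by
  have hdomn : ∀ n, (pr (tn n), pr (tn n)) ∈ ConicDom C.I := fun n =>
    C.dom_diag (h n).1 (lt_trans (h n).2.1 (h n).2.2.1)
  have hdomμ : (pr μ, pr μ) ∈ ConicDom C.I := C.dom_diag hμ1 (lt_trans hμν hν2)
  have hj := C.jump (pn := fun n => pr (tn n)) (qn := fun n => pr (tn n)) hdomn hdomμ
    (tendsto_pr ht) (tendsto_pr ht) (u := mn) (v := mn)
    (le_trans hμ1.le hμν.le) hν2.le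
    (fun n => ⟨(lt_trans (h n).1 (h n).2.1).le, (h n).2.2.1.le, (h n).2.2.2.1⟩)
    (fun n => ⟨(lt_trans (h n).1 (h n).2.1).le, (h n).2.2.1.le, (h n).2.2.2.1⟩)
    hm hm 2 2
    (fun n => C.two_le (hdomn n) (h n).2.2.2.1)
    (fun n => C.two_le (hdomn n) (h n).2.2.2.1)
  have hcomp : C.f (pr μ) (pr μ) (pr ν) ≠ 0 := ne_zero_of_two_le (by simpa using hj.1)
  exact C.companion_above hμ1 hμν hν2 hcomp

lemma dn_collapse {tn mn : ℕ → ℝ} {μ : ℝ} (hμ1 : C.a < μ) (hμ2 : μ < C.b)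
    (h : ∀ n, C.GoodDn (tn n) (mn n)) (ht : Tendsto tn atTop (nhds μ))
    (hm : Tendsto mn atTop (nhds μ)) : False := by
  refine C.neg.up_collapse (tn := fun n => -(mn n)) (mn := fun n => -(tn n)) (μ := -μ)
    ?_ ?_ (fun n => C.goodDn_neg (h n)) hm.neg ht.neg
  · show -C.b < -μ; linarith
  · show -μ < -C.a; linarith

lemma dn_limit {tn mn : ℕ → ℝ} {μ ν : ℝ} (hμ1 : C.a < μ) (hν2 : ν < C.b) (hμν : μ < ν)
    (h : ∀ n, C.GoodDn (tn n) (mn n)) (ht : Tendsto tn atTop (nhds μ))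
    (hm : Tendsto mn atTop (nhds ν)) : ∃ uh, μ ≤ uh ∧ uh < ν ∧ C.GoodDn uh ν := by
  have := C.neg.up_limit (tn := fun n => -(mn n)) (mn := fun n => -(tn n))
    (μ := -ν) (ν := -μ)
    (by show -C.b < -ν; linarith) (by show -μ < -C.a; linarith) (by linarith)
    (fun n => C.goodDn_neg (h n)) hm.neg ht.neg
  obtain ⟨mh, h1, h2, h3⟩ := this
  have := C.goodUp_of_neg h3
  exact ⟨-mh, by linarith, by linarith, by simpa using this⟩

lemma core_false (hex : ∃ t m, C.GoodUp t m ∨ C.GoodDn t m) : False := by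
  classical
  obtain ⟨t₁, m₁, hG₁⟩ := hex
  have htm₁ : t₁ < m₁ := by rcases hG₁ with h | h; exacts [h.2.1, h.2.1]
  set G : Set (Set ℝ) := {s | ∃ t m : ℝ, t < m ∧ s = Set.Icc t m ∧
    (C.GoodUp t m ∨ C.GoodDn t m)} with hGdef
  have hGspec : ∀ s ∈ G, sInf s < sSup s ∧ s = Set.Icc (sInf s) (sSup s) ∧
      C.a < sInf s ∧ sSup s < C.b ∧ (C.GoodUp (sInf s) (sSup s) ∨ C.GoodDn (sInf s) (sSup s)) ∧
      sInf s ∈ s ∧ sSup s ∈ s := by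
    rintro s ⟨t, m, htm, rfl, hg⟩
    rw [csInf_Icc htm.le, csSup_Icc htm.le]
    have h1 : C.a < t := by rcases hg with h | h; exacts [h.1, h.1]
    have h2 : m < C.b := by rcases hg with h | h; exacts [h.2.2.1, h.2.2.1]
    exact ⟨htm, rfl, h1, h2, hg, Set.left_mem_Icc.2 htm.le, Set.right_mem_Icc.2 htm.le⟩
  have hbase : Set.Icc t₁ m₁ ∈ G := ⟨t₁, m₁, htm₁, rfl, hG₁⟩
  -- chain bound
  have hchain : ∀ c ⊆ G, IsChain (· ⊆ ·) c → c.Nonempty → ∃ lb ∈ G, ∀ s ∈ c, lb ⊆ s := by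
    intro c hcG hchain hcne
    obtain ⟨s₀, hs₀⟩ := hcne
    set U : Set ℝ := (fun s => sInf s) '' c with hU
    set V : Set ℝ := (fun s => sSup s) '' c with hV
    have hUne : U.Nonempty := ⟨sInf s₀, s₀, hs₀, rfl⟩
    have hVne : V.Nonempty := ⟨sSup s₀, s₀, hs₀, rfl⟩
    have hUbd : BddAbove U := by
      refine ⟨C.b, ?_⟩
      rintro _ ⟨s, hs, rfl⟩
      exact le_trans (hGspec s (hcG hs)).1.le (hGspec s (hcG hs)).2.2.2.1.le
    have hVbd : BddBelow V := by
      refine ⟨C.a, ?_⟩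
      rintro _ ⟨s, hs, rfl⟩
      exact le_trans (hGspec s (hcG hs)).2.2.1.le (hGspec s (hcG hs)).1.le
    set μ := sSup U with hμ
    set ν := sInf V with hν
    have hcross : ∀ s ∈ c, ∀ s' ∈ c, sInf s ≤ sSup s' := by
      intro s hs s' hs'
      rcases eq_or_ne s s' with rfl | hne
      · exact (hGspec s (hcG hs)).1.le
      rcases hchain hs hs' hne with h | h
      · have hmem : sInf s ∈ s := (hGspec s (hcG hs)).2.2.2.2.2.1
        have := h hmem
        rw [(hGspec s' (hcG hs')).2.1] at this
        exact this.2
      · have hmem : sSup s' ∈ s' := (hGspec s' (hcG hs')).2.2.2.2.2.2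
        have := h hmem
        rw [(hGspec s (hcG hs)).2.1] at this
        exact this.1
    have hμν : μ ≤ ν := by
      apply csSup_le hUne
      rintro _ ⟨s, hs, rfl⟩
      apply le_csInf hVne
      rintro _ ⟨s', hs', rfl⟩
      exact hcross s hs s' hs'
    have hμa : C.a < μ :=
      lt_of_lt_of_le (hGspec s₀ (hcG hs₀)).2.2.1 (le_csSup hUbd ⟨s₀, hs₀, rfl⟩)
    have hνb : ν < C.b :=
      lt_of_le_of_lt (csInf_le hVbd ⟨s₀, hs₀, rfl⟩) (hGspec s₀ (hcG hs₀)).2.2.2.1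
    -- approximating sequence from the chain
    have hseq : ∀ n : ℕ, ∃ s ∈ c, μ - 1/(n+1) < sInf s ∧ sSup s < ν + 1/(n+1) := by
      intro n
      have hpos : (0:ℝ) < 1/(n+1) := by positivity
      obtain ⟨_, ⟨s1, hs1, rfl⟩, hgt⟩ := Real.add_neg_lt_sSup hUne (ε := -(1/(n+1))) (by linarith)
      obtain ⟨_, ⟨s2, hs2, rfl⟩, hlt2⟩ := Real.lt_sInf_add_pos hVne hpos
      rcases eq_or_ne s1 s2 with rfl | hne
      · exact ⟨s1, hs1, by linarith, by linarith⟩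
      rcases hchain hs1 hs2 hne with h | h
      · refine ⟨s1, hs1, by linarith, ?_⟩
        have : sSup s1 ≤ sSup s2 := by
          have hmem : sSup s1 ∈ s1 := (hGspec s1 (hcG hs1)).2.2.2.2.2.2
          have := h hmem
          rw [(hGspec s2 (hcG hs2)).2.1] at this
          exact this.2
        linarith
      · refine ⟨s2, hs2, ?_, by linarith⟩
        have : sInf s1 ≤ sInf s2 := by
          have hmem : sInf s2 ∈ s2 := (hGspec s2 (hcG hs2)).2.2.2.2.2.1
          have := h hmem
          rw [(hGspec s1 (hcG hs1)).2.1] at this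
          exact this.1
        linarith
    choose sn hsn hsn1 hsn2 using hseq
    set un : ℕ → ℝ := fun n => sInf (sn n) with hun
    set vn : ℕ → ℝ := fun n => sSup (sn n) with hvn
    have huntend : Tendsto un atTop (nhds μ) := by
      have hupper : ∀ n, un n ≤ μ := fun n => le_csSup hUbd ⟨sn n, hsn n, rfl⟩
      have h1' : Tendsto (fun n : ℕ => μ - 1/(n+1)) atTop (nhds μ) := by
        have h2' : Tendsto (fun n : ℕ => ((n : ℝ) + 1)) atTop atTop :=
          tendsto_atTop_add_const_right _ 1 tendsto_natCast_atTop_atTop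
        have : Tendsto (fun n : ℕ => 1 / ((n:ℝ) + 1)) atTop (nhds 0) :=
          Tendsto.div_atTop tendsto_const_nhds h2'
        simpa using tendsto_const_nhds.sub this
      exact tendsto_of_tendsto_of_tendsto_of_le_of_le h1' tendsto_const_nhds
        (fun n => (hsn1 n).le) hupper
    have hvntend : Tendsto vn atTop (nhds ν) := by
      have hlower : ∀ n, ν ≤ vn n := fun n => csInf_le hVbd ⟨sn n, hsn n, rfl⟩
      have h1' : Tendsto (fun n : ℕ => ν + 1/(n+1)) atTop (nhds ν) := by
        have h2' : Tendsto (fun n : ℕ => ((n : ℝ) + 1)) atTop atTop :=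
          tendsto_atTop_add_const_right _ 1 tendsto_natCast_atTop_atTop
        have : Tendsto (fun n : ℕ => 1 / ((n:ℝ) + 1)) atTop (nhds 0) :=
          Tendsto.div_atTop tendsto_const_nhds h2'
        simpa using tendsto_const_nhds.add this
      exact tendsto_of_tendsto_of_tendsto_of_le_of_le tendsto_const_nhds h1'
        hlower (fun n => (hsn2 n).le)
    have hgoods : ∀ n, C.GoodUp (un n) (vn n) ∨ C.GoodDn (un n) (vn n) := fun n =>
      (hGspec (sn n) (hcG (hsn n))).2.2.2.2.1
    -- pigeonhole on the orientation
    have hfreq : (∃ᶠ n in atTop, C.GoodUp (un n) (vn n)) ∨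
        (∃ᶠ n in atTop, C.GoodDn (un n) (vn n)) := by
      by_cases hF : ∃ᶠ n in atTop, C.GoodUp (un n) (vn n)
      · exact Or.inl hF
      · rw [Filter.not_frequently] at hF
        refine Or.inr ((hF.mono ?_).frequently)
        intro n hn
        rcases hgoods n with h | h
        · exact absurd h hn
        · exact h
    rcases eq_or_lt_of_le hμν with heq | hlt
    · -- collapse
      exfalso
      rcases hfreq with hF | hF
      · obtain ⟨φ, hφ, hφP⟩ := Filter.extraction_of_frequently_atTop hF
        exact C.up_collapse hμa (heq ▸ hνb) hφP
          (huntend.comp hφ.tendsto_atTop)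
          (by rw [heq]; exact hvntend.comp hφ.tendsto_atTop)
      · obtain ⟨φ, hφ, hφP⟩ := Filter.extraction_of_frequently_atTop hF
        exact C.dn_collapse hμa (heq ▸ hνb) hφP
          (huntend.comp hφ.tendsto_atTop)
          (by rw [heq]; exact hvntend.comp hφ.tendsto_atTop)
    · -- nondegenerate : build a good pair inside [μ, ν]
      have hsub : ∀ s ∈ c, Set.Icc μ ν ⊆ s := by
        intro s hs
        rw [(hGspec s (hcG hs)).2.1]
        apply Set.Icc_subset_Icc
        · exact le_csSup hUbd ⟨s, hs, rfl⟩
        · exact csInf_le hVbd ⟨s, hs, rfl⟩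
      rcases hfreq with hF | hF
      · obtain ⟨φ, hφ, hφP⟩ := Filter.extraction_of_frequently_atTop hF
        obtain ⟨mh, h1, h2, h3⟩ := C.up_limit hμa hνb hlt hφP
          (huntend.comp hφ.tendsto_atTop) (hvntend.comp hφ.tendsto_atTop)
        refine ⟨Set.Icc μ mh, ⟨μ, mh, h1, rfl, Or.inl h3⟩, ?_⟩
        intro s hs
        exact (Set.Icc_subset_Icc (le_refl μ) h2).trans (hsub s hs)
      · obtain ⟨φ, hφ, hφP⟩ := Filter.extraction_of_frequently_atTop hF
        obtain ⟨uh, h1, h2, h3⟩ := C.dn_limit hμa hνb hlt hφP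
          (huntend.comp hφ.tendsto_atTop) (hvntend.comp hφ.tendsto_atTop)
        refine ⟨Set.Icc uh ν, ⟨uh, ν, h2, rfl, Or.inr h3⟩, ?_⟩
        intro s hs
        exact (Set.Icc_subset_Icc h1 (le_refl ν)).trans (hsub s hs)
  obtain ⟨M, hMsub, hMmin⟩ := zorn_superset_nonempty G hchain _ hbase
  obtain ⟨ts, ms, htms, hMeq, hMgood⟩ := hMmin.prop
  have hspawn_gen : ∀ u v, ts ≤ u → u < v → v ≤ ms → (ts < u ∨ v < ms) →
      (C.GoodUp u v ∨ C.GoodDn u v) → False := by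
    intro u v h1 h2 h3 h4 hg
    have hnew : Set.Icc u v ∈ G := ⟨u, v, h2, rfl, hg⟩
    have hsub2 : Set.Icc u v ⊆ M := hMeq ▸ Set.Icc_subset_Icc h1 h3
    have hM2 : M ⊆ Set.Icc u v := hMmin.2 hnew hsub2
    rcases h4 with h4 | h4
    · have : ts ∈ M := hMeq ▸ Set.left_mem_Icc.2 htms.le
      exact absurd (hM2 this).1 (not_le.2 h4)
    · have : ms ∈ M := hMeq ▸ Set.right_mem_Icc.2 htms.le
      exact absurd (hM2 this).2 (not_le.2 h4)
  rcases hMgood with hup | hdn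
  · exact C.arena_false hup.1 hup.2.1 hup.2.2.1.le hup.2.2.2.1 hup.2.2.2.2
      (fun u v h1 h2 hdn => hspawn_gen u v h1 hdn.2.1 h2.le (Or.inr h2) (Or.inr hdn))
  · -- reflected case
    have hup' := C.goodDn_neg hdn
    refine C.neg.arena_false hup'.1 hup'.2.1 hup'.2.2.1.le hup'.2.2.2.1 hup'.2.2.2.2 ?_
    intro u v h1 h2 hdn'
    have hGup : C.GoodUp (-v) (-u) := C.goodDn_of_neg hdn'
    have h1' : ts < -v := by
      have : v < -ts := h2
      linarith
    have h2' : -u ≤ ms := by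
      have : -ms ≤ u := h1
      linarith
    exact hspawn_gen (-v) (-u) h1'.le (by linarith [hdn'.2.1]) h2' (Or.inl h1')
      (Or.inl hGup)

end Ctx
end SexTactic

namespace SexTactic
namespace Ctx

variable (C : Ctx)

lemma sum_bound_single {p q : S1} (hdom : (p, q) ∈ ConicDom C.I) {r₁ : S1}
    (hsupp : ∀ r : S1, C.f p q r ≠ 0 → r = r₁) (h1 : C.f p q r₁ ≤ 4) : False := by
  obtain ⟨fs, h6⟩ := C.hf.total_six p q hdom
  have hsub : fs ∩ {r₁} ⊆ fs := Finset.inter_subset_left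
  have hzero : ∀ x ∈ fs, x ∉ fs ∩ {r₁} → C.f p q x = 0 := by
    intro x hx hnx
    by_contra hxx
    exact hnx (Finset.mem_inter.2 ⟨hx, by simp [hsupp x hxx]⟩)
  have heq : ∑ r ∈ fs ∩ {r₁}, C.f p q r = ∑ r ∈ fs, C.f p q r :=
    Finset.sum_subset hsub hzero
  have hle : ∑ r ∈ fs ∩ {r₁}, C.f p q r ≤ ∑ r ∈ ({r₁} : Finset S1), C.f p q r :=
    Finset.sum_le_sum_of_subset Finset.inter_subset_right
  have : (6 : ℕ∞) ≤ 4 := by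
    calc (6:ℕ∞) ≤ ∑ r ∈ fs, C.f p q r := h6
    _ = ∑ r ∈ fs ∩ {r₁}, C.f p q r := heq.symm
    _ ≤ ∑ r ∈ ({r₁} : Finset S1), C.f p q r := hle
    _ = C.f p q r₁ := Finset.sum_singleton _ _
    _ ≤ 4 := h1
  norm_num at this

section StepB

lemma domAA (haI : pr C.a ∈ C.I) : (pr C.a, pr C.a) ∈ ConicDom C.I :=
  ⟨C.mem_closure (le_refl _) C.hab.le, C.mem_closure (le_refl _) C.hab.le, fun _ => haI⟩

lemma domAB : (pr C.a, pr C.b) ∈ ConicDom C.I :=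
  C.dom_pair (le_refl _) C.hab.le C.hab.le (le_refl _) (prne C.hab (by have := C.hb1; linarith))

lemma domAT {t : ℝ} (h1 : C.a < t) (h2 : t ≤ C.b) : (pr C.a, pr t) ∈ ConicDom C.I :=
  C.dom_pair (le_refl _) C.hab.le h1.le h2 (prne h1 (by have := C.hb1; linarith))

/-- L3 : the support of `f_{A,T}` avoids the complementary arc `(b, a+1)`. -/
lemma L3 (haI : pr C.a ∈ C.I)
    (he : C.f (pr C.a) (pr C.b) = C.f (pr C.a) (pr C.a))
    (hd : ∀ z, C.a < z → z < C.b → C.f (pr C.a) (pr C.b) (pr z) = 0)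
    (h4A : 4 ≤ C.f (pr C.a) (pr C.a) (pr C.a))
    {t : ℝ} (h1 : C.a < t) (h2 : t < C.b) {ζ : ℝ} (hζ1 : C.b < ζ) (hζ2 : ζ < C.a + 1) :
    C.f (pr C.a) (pr t) (pr ζ) = 0 := by
  by_contra hne
  have hAb : C.f (pr C.a) (pr C.a) (pr C.b) ≠ 0 := by
    rw [← he]; exact (C.hf.self_mem _ _ (C.domAB)).2
  have hchain : chain6 (pr C.a) (pr C.a) (pr C.a) (pr t) (pr C.b) (pr ζ) :=
    ⟨C.a, C.a, C.a, t, C.b, ζ, rfl, rfl, rfl, rfl, rfl, rfl, le_refl _, le_refl _,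
      h1.le, h2, hζ1, hζ2⟩
  have heq := C.hf.eq_of_chain (pr C.a) (pr C.a) (pr C.a) (pr t) (pr C.b) (pr ζ)
    (C.domAA haI) (C.domAT h1 h2.le) hAb hne (Or.inl hchain)
    (fun _ => h4A)
    (fun hq => absurd hq (prne h1 (by have := C.hb1; linarith)))
  have : C.f (pr C.a) (pr C.b) (pr t) ≠ 0 := by
    rw [he, heq]
    exact (C.hf.self_mem _ _ (C.domAT h1 h2.le)).2
  exact this (hd t h1 h2)

/-- L2 : `b` is not in the support of `f_{A,T}`. -/
lemma L2 (hd : ∀ z, C.a < z → z < C.b → C.f (pr C.a) (pr C.b) (pr z) = 0) {t : ℝ} (h1 : C.a < t) (h2 : t < C.b) :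
    C.f (pr C.a) (pr t) (pr C.b) = 0 := by
  by_contra hne
  have heq := C.hf.eq_of_common (pr C.a) (pr t) (pr C.b) (pr C.b)
    (C.domAT h1 h2.le) (C.domAB)
    (prne C.hab (by have := C.hb1; linarith)).symm hne (C.hf.self_mem _ _ (C.domAB)).2
  have : C.f (pr C.a) (pr C.b) (pr t) ≠ 0 := by
    rw [← heq]; exact (C.hf.self_mem _ _ (C.domAT h1 h2.le)).2
  exact this (hd t h1 h2)

/-- L4 : the multiplicity of the anchor `a` in `f_{A,T}` is two. -/
lemma L4 (haI : pr C.a ∈ C.I)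
    (he : C.f (pr C.a) (pr C.b) = C.f (pr C.a) (pr C.a))
    (hd : ∀ z, C.a < z → z < C.b → C.f (pr C.a) (pr C.b) (pr z) = 0) {t : ℝ} (h1 : C.a < t) (h2 : t < C.b) :
    ¬ (4 ≤ C.f (pr C.a) (pr t) (pr C.a)) := by
  intro h4
  have heq := C.hf.eq_diag (pr C.a) (pr t) (pr C.a) (C.domAT h1 h2.le) h4 haI
  have : C.f (pr C.a) (pr C.b) (pr t) ≠ 0 := by
    rw [he, heq]
    exact (C.hf.self_mem _ _ (C.domAT h1 h2.le)).2
  exact this (hd t h1 h2)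

/-- L5 : if `t` is not 4-marked, its class has another interior point. -/
lemma L5 (haI : pr C.a ∈ C.I)
    (he : C.f (pr C.a) (pr C.b) = C.f (pr C.a) (pr C.a))
    (hd : ∀ z, C.a < z → z < C.b → C.f (pr C.a) (pr C.b) (pr z) = 0)
    (h4A : 4 ≤ C.f (pr C.a) (pr C.a) (pr C.a))
    {t : ℝ} (h1 : C.a < t) (h2 : t < C.b)
    (hm : ¬ (4 ≤ C.f (pr C.a) (pr t) (pr t))) :
    ∃ x, C.a < x ∧ x < C.b ∧ x ≠ t ∧ C.f (pr C.a) (pr t) (pr x) ≠ 0 := by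
  by_contra hno
  push_neg at hno
  have hdom := C.domAT h1 h2.le
  have hsupp : ∀ r : S1, C.f (pr C.a) (pr t) r ≠ 0 → r = pr C.a ∨ r = pr t := by
    intro r hr
    obtain ⟨ζ, hζ1, hζ2, rfl⟩ := exists_rep r C.a
    rcases eq_or_lt_of_le hζ1 with h | h
    · exact Or.inl (by rw [← h])
    rcases lt_trichotomy ζ C.b with hb' | hb' | hb'
    · rcases eq_or_ne ζ t with rfl | hne
      · exact Or.inr rfl
      · exact absurd (hno ζ h hb' hne) hr
    · subst hb'
      exact absurd (C.L2 hd h1 h2) hr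
    · exact absurd (C.L3 haI he hd h4A h1 h2 hb' hζ2) hr
  exact C.sum_bound hdom (prne h1 (by have := C.hb1; linarith)) hsupp
    (C.le_two hdom (C.L4 haI he hd h1 h2)) (C.le_two hdom hm)

/-- STEP B : if there is no good pair anywhere, we derive `False`. -/
lemma stepB (haI : pr C.a ∈ C.I)
    (he : C.f (pr C.a) (pr C.b) = C.f (pr C.a) (pr C.a))
    (hd : ∀ z, C.a < z → z < C.b → C.f (pr C.a) (pr C.b) (pr z) = 0)
    (hng : ∀ t m : ℝ, ¬ (C.GoodUp t m ∨ C.GoodDn t m)) : False := by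
  have h4A : 4 ≤ C.f (pr C.a) (pr C.a) (pr C.a) :=
    C.diag_four (le_refl _) C.hab.le (C.domAA haI)
  set t₀ : ℝ := (C.a + C.b)/2 with ht₀def
  have ht₀1 : C.a < t₀ := by simp only [ht₀def]; linarith [C.hab]
  have ht₀2 : t₀ < C.b := by simp only [ht₀def]; linarith [C.hab]
  -- triviality of interior diagonal supports
  have htriv : ∀ t, C.a < t → t < C.b → ∀ w, C.a < w → w < C.b → w ≠ t →
      C.f (pr t) (pr t) (pr w) = 0 := by
    intro t hta htb w hwa hwb hwt
    by_contra hne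
    rcases lt_or_gt_of_ne hwt with h | h
    · obtain ⟨u, _, _, hdn⟩ := C.companion_below hwa h htb hne
      exact hng u t (Or.inr hdn)
    · obtain ⟨m, _, _, hup⟩ := C.companion_above hta h hwb hne
      exact hng t m (Or.inl hup)
  by_cases hA : C.f (pr t₀) (pr t₀) (pr C.a) ≠ 0
  · -- case (i) : reflected arena over (a, t₀)
    refine C.neg.arena_false (t := -t₀) (m := -C.a) ?_ (by linarith) (le_refl _) ?_ ?_ ?_
    · show -C.b < -t₀; linarith
    · show C.neg.f (pr (-t₀)) (pr (-t₀)) (pr (-C.a)) ≠ 0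
      show C.f (-pr (-t₀)) (-pr (-t₀)) (-pr (-C.a)) ≠ 0
      simpa [pr_neg] using hA
    · intro z hz1 hz2
      show C.f (-pr (-t₀)) (-pr (-t₀)) (-pr z) = 0
      have : C.f (pr t₀) (pr t₀) (pr (-z)) = 0 :=
        htriv t₀ ht₀1 ht₀2 (-z) (by linarith) (by linarith) (by intro h; linarith)
      simpa [pr_neg] using this
    · intro u v _ _ hdn'
      exact hng (-v) (-u) (Or.inl (C.goodDn_of_neg hdn'))
  · -- case (ii)
    push_neg at hA
    have hmark : ¬ (4 ≤ C.f (pr C.a) (pr t₀) (pr t₀)) := by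
      intro h4
      have heq := C.hf.eq_diag (pr C.a) (pr t₀) (pr t₀) (C.domAT ht₀1 ht₀2.le) h4
        (C.hIi t₀ ht₀1 ht₀2)
      have : C.f (pr t₀) (pr t₀) (pr C.a) ≠ 0 := by
        rw [heq]
        exact (C.hf.self_mem _ _ (C.domAT ht₀1 ht₀2.le)).1
      exact this hA
    obtain ⟨x, hx1, hx2, hxt, hxne⟩ := C.L5 haI he hd h4A ht₀1 ht₀2 hmark
    have hwin : C.b - C.a < 1 := by have := C.hb1; linarith
    rcases lt_or_gt_of_ne hxt with hlt | hgt
    · -- classmate below t₀ : kill the diagonal of x entirely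
      have e1 : C.f (pr C.a) (pr x) = C.f (pr C.a) (pr t₀) :=
        C.hf.eq_of_common (pr C.a) (pr x) (pr t₀) (pr x)
          (C.domAT hx1 hx2.le) (C.domAT ht₀1 ht₀2.le)
          (prne hx1 (by linarith)).symm
          (C.hf.self_mem _ _ (C.domAT hx1 hx2.le)).2 hxne
      have hdomXT : (pr x, pr t₀) ∈ ConicDom C.I :=
        C.dom_pair hx1.le hx2.le ht₀1.le ht₀2.le (prne hlt (by linarith))
      have hdomXA : (pr x, pr C.a) ∈ ConicDom C.I :=
        C.dom_pair hx1.le hx2.le (le_refl _) C.hab.le (prne hx1 (by linarith)).symm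
      have hsymmXA : C.f (pr x) (pr C.a) = C.f (pr C.a) (pr x) :=
        C.hf.symm (pr x) (pr C.a) hdomXA
      have e2 : C.f (pr x) (pr t₀) = C.f (pr x) (pr C.a) := by
        refine C.hf.eq_of_common (pr x) (pr t₀) (pr C.a) (pr t₀) hdomXT hdomXA
          (prne hlt (by linarith)).symm
          (C.hf.self_mem _ _ hdomXT).2 ?_
        rw [hsymmXA, e1]
        exact (C.hf.self_mem _ _ (C.domAT ht₀1 ht₀2.le)).2
      have hdomXX : (pr x, pr x) ∈ ConicDom C.I := C.dom_diag hx1 hx2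
      have hXt₀ : C.f (pr x) (pr x) (pr t₀) = 0 :=
        htriv x hx1 hx2 t₀ ht₀1 ht₀2 hxt.symm
      -- diagonal of x cannot contain a
      have hXa : C.f (pr x) (pr x) (pr C.a) = 0 := by
        by_contra hne
        have heq := C.hf.eq_of_common (pr x) (pr x) (pr C.a) (pr C.a) hdomXX hdomXA
          (prne hx1 (by linarith)) hne (C.hf.self_mem _ _ hdomXA).2
        have : C.f (pr x) (pr x) (pr t₀) ≠ 0 := by
          rw [heq, e2.symm]
          exact (C.hf.self_mem _ _ hdomXT).2
        exact this hXt₀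
      -- diagonal of x cannot meet the complementary arc
      have hXw : ∀ η, C.b ≤ η → η < C.a + 1 → C.f (pr x) (pr x) (pr η) = 0 := by
        intro η hη1 hη2
        by_contra hne
        have hchain : chain6 (pr x) (pr x) (pr x) (pr t₀) (pr η) (pr (C.a+1)) :=
          ⟨x, x, x, t₀, η, C.a + 1, rfl, rfl, rfl, rfl, rfl, rfl,
            le_refl _, le_refl _, hlt.le, by linarith, by linarith, by linarith⟩
        have hq'' : C.f (pr x) (pr t₀) (pr C.a) ≠ 0 := by
          rw [e2, hsymmXA, e1]
          exact (C.hf.self_mem _ _ (C.domAT ht₀1 ht₀2.le)).1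
        have heq := C.hf.eq_of_chain (pr x) (pr x) (pr x) (pr t₀) (pr η) (pr (C.a + 1))
          hdomXX hdomXT hne (by rw [pr_add_one]; exact hq'') (Or.inl hchain)
          (fun _ => C.diag_four hx1.le hx2.le hdomXX)
          (fun hq => absurd hq (prne hlt (by linarith)))
        have : C.f (pr x) (pr x) (pr t₀) ≠ 0 := by
          rw [heq]
          exact (C.hf.self_mem _ _ hdomXT).2
        exact this hXt₀
      -- diagonal of x is a single point : contradiction with mass
      refine C.sum_bound_single hdomXX (r₁ := pr x) ?_
        (C.le_four hdomXX (C.hN _ _ hdomXX x hx1 hx2))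
      intro r hr
      obtain ⟨ζ, hζ1, hζ2, rfl⟩ := exists_rep r C.a
      rcases eq_or_lt_of_le hζ1 with h | h
      · exact absurd (h ▸ hXa) hr
      rcases lt_trichotomy ζ C.b with hb' | hb' | hb'
      · rcases eq_or_ne ζ x with rfl | hne
        · rfl
        · exact absurd (htriv x hx1 hx2 ζ h hb' hne) hr
      · exact absurd (hXw ζ hb'.ge hζ2) hr
      · exact absurd (hXw ζ hb'.le hζ2) hr
    · -- classmate above t₀ : kill the diagonal of t₀ entirely
      have hdomT₀A : (pr t₀, pr C.a) ∈ ConicDom C.I :=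
        C.dom_pair ht₀1.le ht₀2.le (le_refl _) C.hab.le (prne ht₀1 (by linarith)).symm
      have hdomTT : (pr t₀, pr t₀) ∈ ConicDom C.I := C.dom_diag ht₀1 ht₀2
      have hsymmT₀A : C.f (pr t₀) (pr C.a) = C.f (pr C.a) (pr t₀) :=
        C.hf.symm (pr t₀) (pr C.a) hdomT₀A
      have hTw : ∀ η, C.b ≤ η → η < C.a + 1 → C.f (pr t₀) (pr t₀) (pr η) = 0 := by
        intro η hη1 hη2
        by_contra hne
        have hchain : chain6rev (pr t₀) (pr t₀) (pr t₀) (pr C.a) (pr η) (pr x) :=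
          ⟨t₀, t₀, t₀, C.a, η - 1, x - 1, rfl, rfl, rfl, rfl, pr_sub_one η, pr_sub_one x,
            le_refl _, le_refl _, ht₀1.le, by linarith, by linarith, by linarith⟩
        have hq'' : C.f (pr t₀) (pr C.a) (pr x) ≠ 0 := by
          rw [hsymmT₀A]; exact hxne
        have heq := C.hf.eq_of_chain (pr t₀) (pr t₀) (pr t₀) (pr C.a) (pr η) (pr x)
          hdomTT hdomT₀A hne hq'' (Or.inr hchain)
          (fun _ => C.diag_four ht₀1.le ht₀2.le hdomTT)
          (fun hq => absurd hq.symm (prne ht₀1 (by linarith)))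
        have : C.f (pr t₀) (pr t₀) (pr C.a) ≠ 0 := by
          rw [heq, hsymmT₀A]
          exact (C.hf.self_mem _ _ (C.domAT ht₀1 ht₀2.le)).1
        exact this hA
      refine C.sum_bound_single hdomTT (r₁ := pr t₀) ?_
        (C.le_four hdomTT (C.hN _ _ hdomTT t₀ ht₀1 ht₀2))
      intro r hr
      obtain ⟨ζ, hζ1, hζ2, rfl⟩ := exists_rep r C.a
      rcases eq_or_lt_of_le hζ1 with h | h
      · exact absurd (h ▸ hA) hr
      rcases lt_trichotomy ζ C.b with hb' | hb' | hb'
      · rcases eq_or_ne ζ t₀ with rfl | hne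
        · rfl
        · exact absurd (htriv t₀ ht₀1 ht₀2 ζ h hb' hne) hr
      · exact absurd (hTw ζ hb'.ge hζ2) hr
      · exact absurd (hTw ζ hb'.le hζ2) hr

lemma main_caseA (haI : pr C.a ∈ C.I)
    (he : C.f (pr C.a) (pr C.b) = C.f (pr C.a) (pr C.a))
    (hd : ∀ z, C.a < z → z < C.b → C.f (pr C.a) (pr C.b) (pr z) = 0) : False := by
  by_cases hex : ∃ t m, C.GoodUp t m ∨ C.GoodDn t m
  · exact C.core_false hex
  · push_neg at hex
    exact C.stepB haI he hd (fun t m h => h.elim (hex t m).1 (hex t m).2)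

end StepB

end Ctx
end SexTactic

open SexTactic in
/-- **Proposition 3.11.** If `F_{a,b}` misses the open arc `(a,b)` and
`f_{a,b}` agrees with a meaningful diagonal function at an endpoint, then there
is a sextactic point in `(a,b)`. -/
theorem conicSystem_exists_sextactic
    (a b : ℝ) (hab : a < b) (hb1 : b < a + 1)
    (I : Set S1) (hI : I = arcCC a b ∨ I = arcCO a b ∨ I = arcOC a b)
    (f : S1 → S1 → S1 → ℕ∞)
    (hf : IsIntrinsicConicSystem I f)
    (hdisj : suppF f (pr a) (pr b) ∩ arcOO a b = ∅)
    (hend : ((pr a, pr a) ∈ ConicDom I ∧ f (pr a) (pr b) = f (pr a) (pr a)) ∨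
      ((pr b, pr b) ∈ ConicDom I ∧ f (pr a) (pr b) = f (pr b) (pr b))) :
    ∃ c : ℝ, a < c ∧ c < b ∧
      ∃ p q : S1, (p, q) ∈ ConicDom I ∧ 6 ≤ f p q (pr c) := by
  by_contra hcon
  push_neg at hcon
  have hIi : ∀ z : ℝ, a < z → z < b → pr z ∈ I := by
    intro z h1 h2
    rcases hI with rfl | rfl | rfl
    · exact ⟨z, ⟨h1.le, h2.le⟩, rfl⟩
    · exact ⟨z, ⟨h1.le, h2⟩, rfl⟩
    · exact ⟨z, ⟨h1, h2.le⟩, rfl⟩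
  have hIc : ∀ z : ℝ, a ≤ z → z ≤ b → pr z ∈ closure I := by
    have key_a : pr a ∈ closure I := by
      refine mem_closure_of_tendsto (tendsto_pr (tendsto_seq a (b - a)))
        (Filter.Eventually.of_forall fun n => ?_)
      have hpos : (0:ℝ) < (b - a)/(n+2) := by
        apply div_pos (by linarith) (by positivity)
      have hlt : (b - a)/(n+2) < b - a := by
        apply div_lt_self (by linarith) (by push_cast; linarith [Nat.cast_nonneg (α := ℝ) n])
      exact hIi _ (by linarith) (by linarith)
    have key_b : pr b ∈ closure I := by
      refine mem_closure_of_tendsto (tendsto_pr (tendsto_seq b (a - b)))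
        (Filter.Eventually.of_forall fun n => ?_)
      have hneg : (a - b)/(n+2) < 0 := by
        apply div_neg_of_neg_of_pos (by linarith) (by positivity)
      have hgt : a - b < (a - b)/(n+2) := by
        rw [div_eq_mul_inv]
        have hpos : (0:ℝ) < ((n:ℝ)+2)⁻¹ := by positivity
        have hle : ((n:ℝ)+2)⁻¹ ≤ 1/2 := by
          rw [inv_le_comm₀ (by positivity) (by norm_num)]
          push_cast; linarith [Nat.cast_nonneg (α := ℝ) n]
        nlinarith
      exact hIi _ (by linarith) (by linarith)
    intro z h1 h2
    rcases eq_or_lt_of_le h1 with heq | h1'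
    · rw [← heq]; exact key_a
    rcases eq_or_lt_of_le h2 with heq | h2'
    · rw [heq]; exact key_b
    · exact subset_closure (hIi z h1' h2')
  have hN : ∀ p q : S1, (p, q) ∈ ConicDom I → ∀ c : ℝ, a < c → c < b →
      ¬ (6 ≤ f p q (pr c)) := by
    intro p q hdom c h1 h2 h6
    exact absurd h6 (by simpa using hcon c h1 h2 p q hdom)
  set C : Ctx := ⟨a, b, hab, hb1, I, f, hf, hIi, hIc, hN⟩ with hC
  have hd : ∀ z, a < z → z < b → f (pr a) (pr b) (pr z) = 0 := by
    intro z h1 h2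
    by_contra hne
    have : pr z ∈ suppF f (pr a) (pr b) ∩ arcOO a b :=
      ⟨hne, ⟨z, ⟨h1, h2⟩, rfl⟩⟩
    rw [hdisj] at this
    exact this
  rcases hend with ⟨hdom, he⟩ | ⟨hdom, he⟩
  · exact (C.main_caseA (hdom.2.2 rfl) he hd).elim
  · -- reflected case
    have hbI : pr b ∈ I := hdom.2.2 rfl
    have hdomBA : (pr b, pr a) ∈ ConicDom I :=
      ⟨hIc b hab.le (le_refl _), hIc a (le_refl _) hab.le,
        fun hq => absurd hq.symm (Ctx.prne hab (by linarith))⟩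
    have hsym : f (pr b) (pr a) = f (pr a) (pr b) := hf.symm (pr b) (pr a) hdomBA
    have haI' : pr C.neg.a ∈ C.neg.I := by
      show -pr C.neg.a ∈ I
      have : (-pr C.neg.a : S1) = pr b := by
        show -pr (-b) = pr b
        rw [pr_neg, neg_neg]
      rw [this]
      exact hbI
    have he' : C.neg.f (pr C.neg.a) (pr C.neg.b) = C.neg.f (pr C.neg.a) (pr C.neg.a) := by
      funext r
      show f (-pr (-b)) (-pr (-a)) (-r) = f (-pr (-b)) (-pr (-b)) (-r)
      rw [show (-pr (-b) : S1) = pr b from by rw [pr_neg, neg_neg],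
        show (-pr (-a) : S1) = pr a from by rw [pr_neg, neg_neg]]
      exact congrFun (hsym.trans (he.trans rfl)) (-r)
    have hd' : ∀ z, C.neg.a < z → z < C.neg.b →
        C.neg.f (pr C.neg.a) (pr C.neg.b) (pr z) = 0 := by
      intro z h1 h2
      have h1' : -b < z := h1
      have h2' : z < -a := h2
      show f (-pr (-b)) (-pr (-a)) (-pr z) = 0
      rw [show (-pr (-b) : S1) = pr b from by rw [pr_neg, neg_neg],
        show (-pr (-a) : S1) = pr a from by rw [pr_neg, neg_neg],
        show (-pr z : S1) = pr (-z) from rfl]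
      rw [congrFun hsym (pr (-z))]
      exact hd (-z) (by linarith) (by linarith)
    exact (C.neg.main_caseA haI' he' hd').elim
end
end
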